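/- arXiv:2509.07350 — 7 statements merged into one kernel-verified Lean document; each statement's English description precedes it below -/
import Mathlib

section
/- In the degenerating setup, assume in addition that q_{d₁+1}, …, q_e are pairwise distinct and none of them equals 1. Fix k with d₁ < k ≤ e and write q = q_k. Let l ≥ 1 be an integer such that B^j(q) ∉ {q_{d₁+1}, …, q_e} for every 1 ≤ j ≤ l − 1 (the iterates are defined since B maps ∂𝔻 into ∂𝔻). If (c_n) is a sequence in 𝔻 with B_n'(c_n) = 0 for all n and c_n → q, then B_n^l(c_n) → B^l(q) as n → ∞, where B_n^l and B^l denote l-fold iterates. -/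
open Filter

/-- The Blaschke product with exponent `m` and zero list `a : Fin e → ℂ`. -/
noncomputable def blaschke (m : ℕ) {e : ℕ} (a : Fin e → ℂ) (z : ℂ) : ℂ :=
  z ^ m * ∏ k, ((1 - (starRingEnd ℂ) (a k)) / (1 - a k) *
    ((z - a k) / (1 - (starRingEnd ℂ) (a k) * z)))

section Helpers
open Complex Finset

noncomputable def bfac (a z : ℂ) : ℂ :=
  (1 - (starRingEnd ℂ) a) / (1 - a) * ((z - a) / (1 - (starRingEnd ℂ) a * z))

lemma one_sub_ne {x : ℂ} (hx : ‖x‖ < 1) : 1 - x ≠ 0 := by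
  intro h
  have : x = 1 := by linear_combination -h
  simp [this] at hx

lemma conj_mul_self {α : ℂ} (h : ‖α‖ = 1) : (starRingEnd ℂ) α * α = 1 := by
  rw [mul_comm, Complex.mul_conj]
  norm_cast
  rw [Complex.normSq_eq_norm_sq, h]; norm_num

lemma one_sub_conj_mul_ne_int {a z : ℂ} (ha : ‖a‖ < 1) (hz : ‖z‖ ≤ 1) :
    1 - (starRingEnd ℂ) a * z ≠ 0 := by
  apply one_sub_ne
  calc ‖(starRingEnd ℂ) a * z‖ = ‖a‖ * ‖z‖ := by rw [norm_mul, RCLike.norm_conj]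
  _ ≤ ‖a‖ * 1 := by nlinarith [norm_nonneg (a:ℂ), norm_nonneg z]
  _ < 1 := by nlinarith

lemma one_sub_conj_mul_ne_bd {α z : ℂ} (hα : ‖α‖ = 1) (hz : z ≠ α) :
    1 - (starRingEnd ℂ) α * z ≠ 0 := by
  intro h
  apply hz
  have h1 := conj_mul_self hα
  have hα0 : α ≠ 0 := by intro h0; simp [h0] at hα
  have hc : (starRingEnd ℂ) α ≠ 0 := by simpa using hα0
  have : (starRingEnd ℂ) α * z = 1 := by linear_combination -h
  calc z = ((starRingEnd ℂ) α * α) * z := by rw [h1]; ring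
  _ = ((starRingEnd ℂ) α * z) * α := by ring
  _ = α := by rw [this]; ring

lemma bfac_boundary_eq_one {α z : ℂ} (hα : ‖α‖ = 1) (hα1 : α ≠ 1) (hz : z ≠ α) :
    bfac α z = 1 := by
  have h1 := conj_mul_self hα
  have h2 : (1:ℂ) - α ≠ 0 := sub_ne_zero.mpr (Ne.symm hα1)
  have h3 := one_sub_conj_mul_ne_bd hα hz
  unfold bfac
  field_simp
  linear_combination (1 - z) * h1

lemma norm_bfac_eq_one {a w : ℂ} (ha : ‖a‖ < 1) (hw : ‖w‖ = 1) : ‖bfac a w‖ = 1 := by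
  have h1 : (1:ℂ) - a ≠ 0 := one_sub_ne ha
  have hwa : 1 - (starRingEnd ℂ) a * w = w * (starRingEnd ℂ) (w - a) := by
    have := conj_mul_self hw
    rw [map_sub]
    linear_combination -this
  have h2 : ‖1 - (starRingEnd ℂ) a * w‖ = ‖w - a‖ := by
    rw [hwa, norm_mul, hw, RCLike.norm_conj, one_mul]
  have h3 : ‖(1:ℂ) - (starRingEnd ℂ) a‖ = ‖1 - a‖ := by
    rw [show (1:ℂ) - (starRingEnd ℂ) a = (starRingEnd ℂ) (1 - a) by rw [map_sub, map_one],
      RCLike.norm_conj]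
  have h4 : w - a ≠ 0 := by
    intro h; rw [sub_eq_zero] at h; rw [← h] at ha; exact absurd hw (by linarith)
  rw [bfac, norm_mul, norm_div, norm_div, h2, h3,
    div_self (norm_ne_zero_iff.mpr h1), div_self (norm_ne_zero_iff.mpr h4), one_mul]

lemma bfac_tendsto {a : ℕ → ℂ} {zn : ℕ → ℂ} {α z : ℂ}
    (ha : Tendsto a atTop (nhds α)) (hz : Tendsto zn atTop (nhds z))
    (h1 : (1:ℂ) - α ≠ 0) (h2 : 1 - (starRingEnd ℂ) α * z ≠ 0) :
    Tendsto (fun n => bfac (a n) (zn n)) atTop (nhds (bfac α z)) := by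
  have hconj : Tendsto (fun n => (starRingEnd ℂ) (a n)) atTop (nhds ((starRingEnd ℂ) α)) :=
    (Complex.continuous_conj.tendsto α).comp ha
  exact (((tendsto_const_nhds.sub hconj).div (tendsto_const_nhds.sub ha) h1).mul
    ((hz.sub ha).div (tendsto_const_nhds.sub (hconj.mul hz)) h2))

lemma blaschke_eq (m : ℕ) {e : ℕ} (a : Fin e → ℂ) (z : ℂ) :
    blaschke m a z = z ^ m * ∏ k, bfac (a k) z := rfl

lemma prod_collapse {e d₁ : ℕ} (hd : d₁ < e) (g : Fin e → ℂ)
    (hg1 : ∀ j : Fin e, d₁ ≤ (j:ℕ) → g j = 1) :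
    ∏ j, g j = ∏ i : Fin d₁, g (Fin.castLE hd.le i) := by
  classical
  have h1 : ∏ j ∈ (Finset.univ : Finset (Fin e)).filter (fun j : Fin e => (j:ℕ) < d₁), g j
      = ∏ j : Fin e, g j :=
    Finset.prod_subset (Finset.subset_univ _)
      (by intro x _ hx; exact hg1 x (by simpa using hx))
  rw [← h1]
  refine (Finset.prod_bij (fun (i : Fin d₁) _ => Fin.castLE hd.le i) ?_ ?_ ?_ ?_).symm
  · intro i _; simp [i.isLt]
  · intro i _ j _ h; exact Fin.ext (by simpa using congrArg Fin.val h)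
  · intro j hj
    simp only [Finset.mem_filter] at hj
    exact ⟨⟨(j:ℕ), hj.2⟩, Finset.mem_univ _, Fin.ext rfl⟩
  · intro i _; rfl

lemma blaschke_tendsto_main {m e d₁ : ℕ} (hd : d₁ < e) (q : Fin e → ℂ)
    (A : ℕ → Fin e → ℂ) {zn : ℕ → ℂ} {z : ℂ}
    (hz : Tendsto zn atTop (nhds z))
    (hfac : ∀ j : Fin e, Tendsto (fun n => bfac (A n j) (zn n)) atTop
      (nhds (if (j:ℕ) < d₁ then bfac (q j) z else 1))) :
    Tendsto (fun n => blaschke m (A n) (zn n)) atTop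
      (nhds (blaschke m (fun i : Fin d₁ => q (Fin.castLE hd.le i)) z)) := by
  classical
  have key : Tendsto (fun n => (zn n) ^ m * ∏ j : Fin e, bfac (A n j) (zn n)) atTop
      (nhds (z ^ m * ∏ j : Fin e, (if (j:ℕ) < d₁ then bfac (q j) z else 1))) :=
    (hz.pow m).mul (tendsto_finset_prod _ (fun j _ => hfac j))
  have hprod : ∏ j : Fin e, (if (j:ℕ) < d₁ then bfac (q j) z else 1)
      = ∏ i : Fin d₁, bfac (q (Fin.castLE hd.le i)) z := by
    rw [prod_collapse hd _ (fun j hj => if_neg (by omega))]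
    exact Finset.prod_congr rfl (fun i _ => if_pos (by simpa using i.isLt))
  simpa only [blaschke_eq, hprod] using key

lemma blaschke_funeq {m e : ℕ} (a : Fin e → ℂ) (z : ℂ) :
    blaschke m a z = (∏ j, (1 - (starRingEnd ℂ) (a j))/(1 - a j)) *
      ((z^m * ∏ j, (z - a j)) / (∏ j, (1 - (starRingEnd ℂ) (a j) * z))) := by
  unfold blaschke
  rw [Finset.prod_mul_distrib]
  rw [show ∏ j, ((z - a j) / (1 - (starRingEnd ℂ) (a j) * z))
      = (∏ j, (z - a j)) / (∏ j, (1 - (starRingEnd ℂ) (a j) * z)) from Finset.prod_div_distrib _ _]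
  ring

lemma blaschke_deriv_zero {m e : ℕ} (a : Fin e → ℂ) (ha : ∀ j, ‖a j‖ < 1)
    {c : ℂ} (hc : ‖c‖ < 1) (hcrit : deriv (blaschke m a) c = 0) :
    ((m:ℂ) * c^(m-1) * ∏ j, (c - a j) + c^m * ∑ j, ∏ i ∈ Finset.univ.erase j, (c - a i)) *
        (∏ j, (1 - (starRingEnd ℂ) (a j) * c))
      - (c^m * ∏ j, (c - a j)) *
        (∑ j, (∏ i ∈ Finset.univ.erase j, (1 - (starRingEnd ℂ) (a i) * c)) *
          (-((starRingEnd ℂ) (a j)))) = 0 := by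
  classical
  set U : ℂ := ∏ j, (1 - (starRingEnd ℂ) (a j))/(1 - a j) with hU
  have hQc : (∏ j, (1 - (starRingEnd ℂ) (a j) * c)) ≠ 0 :=
    Finset.prod_ne_zero_iff.mpr (fun j _ => one_sub_conj_mul_ne_int (ha j) hc.le)
  have hprodP : HasDerivAt (fun z => ∏ j, (z - a j))
      (∑ j, (∏ i ∈ Finset.univ.erase j, (c - a i))) c := by
    have h := HasDerivAt.fun_finsetProd (u := Finset.univ) (f := fun (i : Fin e) z => z - a i)
      (f' := fun _ => 1) (x := c) (fun i _ => (hasDerivAt_id c).sub_const (a i))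
    simpa using h
  have hP : HasDerivAt (fun z => z^m * ∏ j, (z - a j))
      ((m:ℂ) * c^(m-1) * ∏ j, (c - a j) + c^m * ∑ j, ∏ i ∈ Finset.univ.erase j, (c - a i)) c :=
    (hasDerivAt_pow m c).mul hprodP
  have hQ : HasDerivAt (fun z => ∏ j, (1 - (starRingEnd ℂ) (a j) * z))
      (∑ j, (∏ i ∈ Finset.univ.erase j, (1 - (starRingEnd ℂ) (a i) * c)) *
        (-((starRingEnd ℂ) (a j)))) c := by
    have h := HasDerivAt.fun_finsetProd (u := Finset.univ)
      (f := fun (i : Fin e) z => 1 - (starRingEnd ℂ) (a i) * z)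
      (f' := fun i => -((starRingEnd ℂ) (a i))) (x := c)
      (fun i _ => by simpa using (((hasDerivAt_id c).const_mul ((starRingEnd ℂ) (a i))).const_sub 1))
    simpa using h
  have hfull : HasDerivAt (blaschke m a)
      (U * ((((m:ℂ) * c^(m-1) * ∏ j, (c - a j) + c^m * ∑ j, ∏ i ∈ Finset.univ.erase j, (c - a i)) *
        (∏ j, (1 - (starRingEnd ℂ) (a j) * c))
        - (c^m * ∏ j, (c - a j)) *
        (∑ j, (∏ i ∈ Finset.univ.erase j, (1 - (starRingEnd ℂ) (a i) * c)) *
          (-((starRingEnd ℂ) (a j))))) / (∏ j, (1 - (starRingEnd ℂ) (a j) * c))^2)) c := by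
    have h := ((hP.div hQ hQc).const_mul U)
    have : blaschke m a = fun z => U * ((z^m * ∏ j, (z - a j)) /
        (∏ j, (1 - (starRingEnd ℂ) (a j) * z))) := funext (fun z => blaschke_funeq a z)
    rw [this]
    exact h
  have hU0 : U ≠ 0 := Finset.prod_ne_zero_iff.mpr (fun j _ =>
    div_ne_zero (by
      have : ‖(starRingEnd ℂ) (a j)‖ < 1 := by rw [RCLike.norm_conj]; exact ha j
      exact one_sub_ne this) (one_sub_ne (ha j)))
  have hd := hfull.deriv
  rw [hcrit] at hd
  have h2 := hd.symm
  rw [mul_eq_zero] at h2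
  rcases h2 with h2 | h2
  · exact absurd h2 hU0
  · rw [div_eq_zero_iff] at h2
    rcases h2 with h2 | h2
    · exact h2
    · exact absurd h2 (pow_ne_zero 2 hQc)

lemma crit_ne {m e : ℕ} (a : Fin e → ℂ) (ha : ∀ j, ‖a j‖ < 1) {c : ℂ} (hc : ‖c‖ < 1)
    (hcrit : deriv (blaschke m a) c = 0)
    (hc0 : c ≠ 0) (k : Fin e) (hne : ∀ j, j ≠ k → c ≠ a j) : c ≠ a k := by
  intro heq
  have hD := blaschke_deriv_zero a ha hc hcrit
  have hp0 : ∏ j, (c - a j) = 0 :=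
    Finset.prod_eq_zero (mem_univ k) (by rw [heq]; ring)
  have hsum : ∑ j, ∏ i ∈ Finset.univ.erase j, (c - a i)
      = ∏ i ∈ Finset.univ.erase k, (c - a i) := by
    rw [Finset.sum_eq_single k]
    · intro j _ hj
      exact Finset.prod_eq_zero (Finset.mem_erase.mpr ⟨Ne.symm hj, mem_univ k⟩)
        (by rw [heq]; ring)
    · intro h; exact absurd (mem_univ k) h
  rw [hp0, hsum] at hD
  have hpk : ∏ i ∈ Finset.univ.erase k, (c - a i) ≠ 0 :=
    Finset.prod_ne_zero_iff.mpr
      (fun i hi => sub_ne_zero.mpr (hne i (Finset.mem_erase.mp hi).1))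
  have hqq : (∏ j, (1 - (starRingEnd ℂ) (a j) * c)) ≠ 0 :=
    Finset.prod_ne_zero_iff.mpr (fun j _ => one_sub_conj_mul_ne_int (ha j) hc.le)
  have hz : c^m * (∏ i ∈ Finset.univ.erase k, (c - a i)) *
      (∏ j, (1 - (starRingEnd ℂ) (a j) * c)) = 0 := by linear_combination hD
  exact (mul_ne_zero (mul_ne_zero (pow_ne_zero _ hc0) hpk) hqq) hz

lemma crit_star {m e : ℕ} (hm : 1 ≤ m) (a : Fin e → ℂ) (ha : ∀ j, ‖a j‖ < 1)
    {c : ℂ} (hc : ‖c‖ < 1) (hcrit : deriv (blaschke m a) c = 0) (hc0 : c ≠ 0) (hne : ∀ j, c ≠ a j) :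
    (m:ℂ)/c + ∑ j, (1 - (starRingEnd ℂ) (a j) * a j) /
      ((c - a j) * (1 - (starRingEnd ℂ) (a j) * c)) = 0 := by
  classical
  have hD := blaschke_deriv_zero a ha hc hcrit
  set p := ∏ j, (c - a j) with hpdef
  set qq := ∏ j, (1 - (starRingEnd ℂ) (a j) * c) with hqdef
  set pj : Fin e → ℂ := fun j => ∏ i ∈ Finset.univ.erase j, (c - a i) with hpjdef
  set qj : Fin e → ℂ := fun j => ∏ i ∈ Finset.univ.erase j, (1 - (starRingEnd ℂ) (a i) * c)
    with hqjdef
  have hp : ∀ j, p = (c - a j) * pj j := fun j =>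
    (Finset.mul_prod_erase Finset.univ _ (mem_univ j)).symm
  have hq : ∀ j, qq = (1 - (starRingEnd ℂ) (a j) * c) * qj j := fun j =>
    (Finset.mul_prod_erase Finset.univ _ (mem_univ j)).symm
  have hcane : ∀ j, c - a j ≠ 0 := fun j => sub_ne_zero.mpr (hne j)
  have hdne : ∀ j, 1 - (starRingEnd ℂ) (a j) * c ≠ 0 :=
    fun j => one_sub_conj_mul_ne_int (ha j) hc.le
  have hp0 : p ≠ 0 := Finset.prod_ne_zero_iff.mpr (fun j _ => hcane j)
  have hq0 : qq ≠ 0 := Finset.prod_ne_zero_iff.mpr (fun j _ => hdne j)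
  set s1 := ∑ j, pj j with hs1
  set s3 := ∑ j, (starRingEnd ℂ) (a j) * qj j with hs3
  have hs2 : ∑ j, qj j * (-((starRingEnd ℂ) (a j))) = -s3 := by
    rw [hs3, ← Finset.sum_neg_distrib]
    exact Finset.sum_congr rfl (fun j _ => by ring)
  rw [hs2] at hD
  have hcm' : c^m = c^(m-1) * c := by rw [← pow_succ]; congr 1; omega
  have h1 : c^(m-1) * ((m:ℂ)*p*qq + c*(s1*qq + p*s3)) = 0 := by
    linear_combination hD - (s1*qq + p*s3) * hcm'
  have hX : (m:ℂ)*p*qq + c*(s1*qq + p*s3) = 0 := by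
    rcases mul_eq_zero.mp h1 with h | h
    · exact absurd h (pow_ne_zero _ hc0)
    · exact h
  have hN : ∀ j ∈ Finset.univ, pj j * qq + (starRingEnd ℂ) (a j) * (p * qj j)
      = (1 - (starRingEnd ℂ) (a j) * a j) * (pj j * qj j) := by
    intro j _
    rw [hp j, hq j]  -- may rewrite more than wanted? p/qq appear once each
    ring
  have hsum_t : ∑ j, (1 - (starRingEnd ℂ) (a j) * a j) /
      ((c - a j) * (1 - (starRingEnd ℂ) (a j) * c))
      = (∑ j, (1 - (starRingEnd ℂ) (a j) * a j) * (pj j * qj j)) / (p * qq) := by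
    rw [Finset.sum_div]
    refine Finset.sum_congr rfl (fun j _ => ?_)
    rw [hp j, hq j, div_eq_div_iff (mul_ne_zero (hcane j) (hdne j))
      (by rw [← hp j, ← hq j]; exact mul_ne_zero hp0 hq0)]
    ring
  have hNs : ∑ j, (1 - (starRingEnd ℂ) (a j) * a j) * (pj j * qj j) = s1*qq + p*s3 := by
    rw [← Finset.sum_congr rfl hN, Finset.sum_add_distrib, ← Finset.sum_mul]
    congr 1
    rw [Finset.mul_sum]
    exact Finset.sum_congr rfl (fun j _ => by ring)
  rw [hsum_t, hNs]
  rw [div_add_div _ _ hc0 (mul_ne_zero hp0 hq0), div_eq_zero_iff]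
  left
  linear_combination hX

lemma bfac_k_tendsto {m e d₁ : ℕ} (hm : 1 ≤ m) (hd : d₁ < e) (q : Fin e → ℂ)
    (hqin : ∀ k : Fin e, (k : ℕ) < d₁ → ‖q k‖ < 1)
    (hqbd : ∀ k : Fin e, d₁ ≤ (k : ℕ) → ‖q k‖ = 1)
    (A : ℕ → Fin e → ℂ)
    (hA : ∀ n k, ‖A n k‖ < 1)
    (hAconv : ∀ k, Tendsto (fun n => A n k) atTop (nhds (q k)))
    (hdist : ∀ k k' : Fin e, d₁ ≤ (k : ℕ) → d₁ ≤ (k' : ℕ) → q k = q k' → k = k')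
    (hq1 : ∀ k : Fin e, d₁ ≤ (k : ℕ) → q k ≠ 1)
    (k : Fin e) (hk : d₁ ≤ (k : ℕ))
    (c : ℕ → ℂ) (hc : ∀ n, ‖c n‖ < 1)
    (hcrit : ∀ n, deriv (blaschke m (A n)) (c n) = 0)
    (hclim : Tendsto c atTop (nhds (q k))) :
    Tendsto (fun n => bfac (A n k) (c n)) atTop (nhds 1) := by
  classical
  have hqk1 : ‖q k‖ = 1 := hqbd k hk
  have hqk0 : q k ≠ 0 := fun h => by simp [h] at hqk1
  have hqkconj := conj_mul_self hqk1
  -- q k differs from all other q j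
  have hqne : ∀ j : Fin e, j ≠ k → q k ≠ q j := by
    intro j hj h
    by_cases hjd : d₁ ≤ (j : ℕ)
    · exact hj.symm (hdist k j hk hjd h)
    · have := hqin j (by omega)
      rw [← h, hqk1] at this; linarith
  -- eventual facts
  have hev0 : ∀ᶠ n in atTop, c n ≠ 0 := hclim.eventually_ne hqk0
  have hevj : ∀ᶠ n in atTop, ∀ j, j ≠ k → c n ≠ A n j := by
    refine eventually_all.mpr (fun j => ?_)
    by_cases hj : j = k
    · simp [hj]
    · filter_upwards [(hclim.sub (hAconv j)).eventually_ne
        (sub_ne_zero.mpr (hqne j hj))] with n hn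
      intro _ h
      exact hn (by rw [h]; ring)
  have hevk : ∀ᶠ n in atTop, c n ≠ A n k := by
    filter_upwards [hev0, hevj] with n h0 hj
    exact crit_ne (A n) (hA n) (hc n) (hcrit n) h0 k hj
  -- the quantity T
  set T : ℕ → ℂ := fun n => (1 - (starRingEnd ℂ) (A n k) * A n k) /
    ((c n - A n k) * (1 - (starRingEnd ℂ) (A n k) * c n)) with hT
  set L : Fin e → ℂ := fun j => (1 - (starRingEnd ℂ) (q j) * q j) /
    ((q k - q j) * (1 - (starRingEnd ℂ) (q j) * q k)) with hL
  set S : ℂ := (m:ℂ)/(q k) + ∑ j ∈ Finset.univ.erase k, L j with hS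
  have hstar : ∀ᶠ n in atTop, T n
      = -((m:ℂ)/(c n) + ∑ j ∈ Finset.univ.erase k, (1 - (starRingEnd ℂ) (A n j) * A n j) /
        ((c n - A n j) * (1 - (starRingEnd ℂ) (A n j) * c n))) := by
    filter_upwards [hev0, hevj, hevk] with n h0 hj hk'
    have hne : ∀ j, c n ≠ A n j := by
      intro j
      by_cases h : j = k
      · rw [h]; exact hk'
      · exact hj j h
    have := crit_star hm (A n) (hA n) (hc n) (hcrit n) h0 hne
    rw [← Finset.add_sum_erase _ _ (mem_univ k)] at this
    rw [hT]
    linear_combination this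
  -- limits of the non-degenerate terms
  have hmc : Tendsto (fun n => (m:ℂ)/(c n)) atTop (nhds ((m:ℂ)/(q k))) :=
    tendsto_const_nhds.div hclim hqk0
  have hterm : ∀ j ∈ Finset.univ.erase k,
      Tendsto (fun n => (1 - (starRingEnd ℂ) (A n j) * A n j) /
        ((c n - A n j) * (1 - (starRingEnd ℂ) (A n j) * c n))) atTop (nhds (L j)) := by
    intro j hj
    have hjk : j ≠ k := (Finset.mem_erase.mp hj).1
    have hconvj := hAconv j
    have hconjj : Tendsto (fun n => (starRingEnd ℂ) (A n j)) atTop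
        (nhds ((starRingEnd ℂ) (q j))) := (Complex.continuous_conj.tendsto _).comp hconvj
    have hden : (q k - q j) * (1 - (starRingEnd ℂ) (q j) * q k) ≠ 0 := by
      apply mul_ne_zero (sub_ne_zero.mpr (hqne j hjk))
      by_cases hjd : d₁ ≤ (j : ℕ)
      · exact one_sub_conj_mul_ne_bd (hqbd j hjd) (hqne j hjk)
      · exact one_sub_conj_mul_ne_int (hqin j (by omega)) hqk1.le
    exact (tendsto_const_nhds.sub (hconjj.mul hconvj)).div
      (((hclim.sub hconvj).mul (tendsto_const_nhds.sub (hconjj.mul hclim)))) hden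
  have hTlim : Tendsto T atTop (nhds (-S)) := by
    refine Tendsto.congr' (hstar.mono (fun n h => h.symm)) ?_
    have h := (hmc.add (tendsto_finset_sum _ hterm)).neg
    rw [hS]
    exact h
  -- S ≠ 0
  have hS0 : S ≠ 0 := by
    intro h0
    have hre : (q k * S).re > 0 := by
      have hqS : q k * S = (m:ℂ) + ∑ j ∈ Finset.univ.erase k, q k * L j := by
        rw [hS, mul_add, Finset.mul_sum, mul_div_cancel₀ _ hqk0]
      have hterm_re : ∀ j ∈ Finset.univ.erase k, 0 ≤ (q k * L j).re := by
        intro j hj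
        have hjk : j ≠ k := (Finset.mem_erase.mp hj).1
        by_cases hjd : d₁ ≤ (j : ℕ)
        · have : L j = 0 := by
            rw [hL]
            simp only
            rw [div_eq_zero_iff]
            left
            rw [conj_mul_self (hqbd j hjd)]; ring
          rw [this, mul_zero]; norm_num
        · -- q k * L j = (1 - normSq (q j)) / normSq (q k - q j), a nonneg real
          have h1 : 1 - (starRingEnd ℂ) (q j) * q k = q k * (starRingEnd ℂ) (q k - q j) := by
            rw [map_sub]
            linear_combination -hqkconj
          have hd1 : q k - q j ≠ 0 := sub_ne_zero.mpr (hqne j hjk)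
          have hnsq : ((Complex.normSq (q k - q j) : ℝ) : ℂ) ≠ 0 := by
            norm_cast
            exact fun h => hd1 (Complex.normSq_eq_zero.mp h)
          have hnum : 1 - (starRingEnd ℂ) (q j) * q j = ((1 - Complex.normSq (q j) : ℝ) : ℂ) := by
            rw [mul_comm, Complex.mul_conj]
            push_cast
            ring
          have hden2 : (q k - q j) * (1 - (starRingEnd ℂ) (q j) * q k)
              = q k * ((Complex.normSq (q k - q j) : ℝ) : ℂ) := by
            rw [h1, ← Complex.mul_conj]
            ring
          have h2 : q k * L j = (((1 - Complex.normSq (q j)) / Complex.normSq (q k - q j) : ℝ) : ℂ) := by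
            rw [hL]
            simp only
            rw [hnum, hden2, Complex.ofReal_div]
            field_simp
          rw [h2]
          rw [Complex.ofReal_re]
          apply div_nonneg
          · have h6 := hqin j (by omega)
            have h5 : Complex.normSq (q j) = ‖q j‖^2 := by
              rw [Complex.normSq_eq_norm_sq]
            nlinarith [norm_nonneg (q j)]
          · exact Complex.normSq_nonneg _
      rw [hqS]
      rw [Complex.add_re]
      have : ((m:ℂ)).re = (m:ℝ) := by norm_cast
      rw [this, Complex.re_sum]
      have hsum_nonneg : 0 ≤ ∑ j ∈ Finset.univ.erase k, (q k * L j).re :=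
        Finset.sum_nonneg hterm_re
      have : (1:ℝ) ≤ (m:ℝ) := by exact_mod_cast hm
      linarith
    rw [h0, mul_zero] at hre
    simp at hre
  -- the quantity r
  have hconjk : Tendsto (fun n => (starRingEnd ℂ) (A n k)) atTop
      (nhds ((starRingEnd ℂ) (q k))) := (Complex.continuous_conj.tendsto _).comp (hAconv k)
  set r : ℕ → ℂ := fun n => (1 - (starRingEnd ℂ) (A n k) * A n k) / (c n - A n k) with hr
  have hεlim : Tendsto (fun n => 1 - (starRingEnd ℂ) (A n k) * A n k) atTop (nhds 0) := by
    have h : Tendsto (fun n => 1 - (starRingEnd ℂ) (A n k) * A n k) atTop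
        (nhds (1 - (starRingEnd ℂ) (q k) * q k)) :=
      tendsto_const_nhds.sub (hconjk.mul (hAconv k))
    rw [hqkconj, sub_self] at h
    exact h
  have hdenn : ∀ n, 1 - (starRingEnd ℂ) (A n k) * c n ≠ 0 :=
    fun n => one_sub_conj_mul_ne_int (hA n k) (hc n).le
  have hid : ∀ᶠ n in atTop, (r n)^2
      = T n * (1 - (starRingEnd ℂ) (A n k) * A n k) * (r n - (starRingEnd ℂ) (A n k)) := by
    filter_upwards [hevk] with n hn
    have hw : c n - A n k ≠ 0 := sub_ne_zero.mpr hn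
    have hd := hdenn n
    rw [hr, hT]
    simp only
    field_simp
    ring
  have hM : Tendsto (fun n => ‖T n‖ * ‖1 - (starRingEnd ℂ) (A n k) * A n k‖) atTop (nhds 0) := by
    have h := hTlim.norm.mul hεlim.norm
    simpa using h
  have hbound : ∀ᶠ n in atTop, ‖r n‖
      ≤ Real.sqrt (2*(‖T n‖ * ‖1 - (starRingEnd ℂ) (A n k) * A n k‖))
        + 2*(‖T n‖ * ‖1 - (starRingEnd ℂ) (A n k) * A n k‖) := by
    filter_upwards [hid] with n hn
    set M := ‖T n‖ * ‖1 - (starRingEnd ℂ) (A n k) * A n k‖ with hMdef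
    have hM0 : 0 ≤ M := mul_nonneg (norm_nonneg _) (norm_nonneg _)
    have hra : ‖r n - (starRingEnd ℂ) (A n k)‖ ≤ ‖r n‖ + 1 := by
      have h1 := norm_sub_le (r n) ((starRingEnd ℂ) (A n k))
      have h2 : ‖(starRingEnd ℂ) (A n k)‖ < 1 := by rw [RCLike.norm_conj]; exact hA n k
      linarith
    have h2 : ‖r n‖^2 ≤ M * (‖r n‖ + 1) := by
      calc ‖r n‖^2 = ‖(r n)^2‖ := (norm_pow _ _).symm
      _ = ‖T n * (1 - (starRingEnd ℂ) (A n k) * A n k) * (r n - (starRingEnd ℂ) (A n k))‖ := by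
          rw [hn]
      _ = M * ‖r n - (starRingEnd ℂ) (A n k)‖ := by rw [norm_mul, norm_mul]
      _ ≤ M * (‖r n‖ + 1) := mul_le_mul_of_nonneg_left hra hM0
    rcases le_or_gt ‖r n‖ 1 with h | h
    · have h3 : ‖r n‖^2 ≤ 2*M := by nlinarith [norm_nonneg (r n)]
      have h4 : ‖r n‖ ≤ Real.sqrt (2*M) :=
        (Real.le_sqrt (norm_nonneg _) (by linarith)).mpr h3
      linarith
    · have h3 : ‖r n‖ ≤ 2*M := by nlinarith
      linarith [Real.sqrt_nonneg (2*M)]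
  have htail : Tendsto (fun n => Real.sqrt (2*(‖T n‖ * ‖1 - (starRingEnd ℂ) (A n k) * A n k‖))
      + 2*(‖T n‖ * ‖1 - (starRingEnd ℂ) (A n k) * A n k‖)) atTop (nhds 0) := by
    have h1 : Tendsto (fun n => 2*(‖T n‖ * ‖1 - (starRingEnd ℂ) (A n k) * A n k‖)) atTop
        (nhds 0) := by simpa using hM.const_mul 2
    have h2 := (Real.continuous_sqrt.tendsto 0).comp h1
    simpa using h2.add h1
  have hr0 : Tendsto r atTop (nhds 0) :=
    tendsto_zero_iff_norm_tendsto_zero.mpr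
      (squeeze_zero' (Eventually.of_forall (fun n => norm_nonneg _)) hbound htail)
  -- conclusion
  have hrA : Tendsto (fun n => r n - (starRingEnd ℂ) (A n k)) atTop
      (nhds (-(starRingEnd ℂ) (q k))) := by
    have h := hr0.sub hconjk
    simpa using h
  have hcqk0 : (starRingEnd ℂ) (q k) ≠ 0 := fun h => hqk0 (by simpa using congrArg (starRingEnd ℂ) h)
  have h1qk : (1:ℂ) - q k ≠ 0 := sub_ne_zero.mpr (Ne.symm (hq1 k hk))
  have hulim : Tendsto (fun n => (1 - (starRingEnd ℂ) (A n k))/(1 - A n k)) atTop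
      (nhds ((1 - (starRingEnd ℂ) (q k))/(1 - q k))) :=
    (tendsto_const_nhds.sub hconjk).div (tendsto_const_nhds.sub (hAconv k)) h1qk
  have heq : ∀ᶠ n in atTop, bfac (A n k) (c n)
      = ((1 - (starRingEnd ℂ) (A n k))/(1 - A n k)) * (r n - (starRingEnd ℂ) (A n k))⁻¹ := by
    filter_upwards [hevk] with n hn
    have hw : c n - A n k ≠ 0 := sub_ne_zero.mpr hn
    have h7 : r n - (starRingEnd ℂ) (A n k)
        = (1 - (starRingEnd ℂ) (A n k) * c n)/(c n - A n k) := by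
      rw [hr]
      simp only
      field_simp
      ring
    rw [bfac, h7, inv_div]
  have hfin : Tendsto (fun n => bfac (A n k) (c n)) atTop
      (nhds (((1 - (starRingEnd ℂ) (q k))/(1 - q k)) * (-(starRingEnd ℂ) (q k))⁻¹)) := by
    refine Tendsto.congr' (heq.mono (fun n h => h.symm)) ?_
    exact hulim.mul (hrA.inv₀ (neg_ne_zero.mpr hcqk0))
  have hval : ((1 - (starRingEnd ℂ) (q k))/(1 - q k)) * (-(starRingEnd ℂ) (q k))⁻¹ = 1 := by
    field_simp
    linear_combination hqkconj
  rw [hval] at hfin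
  exact hfin

lemma norm_blaschke_one {m d₁ : ℕ} (a : Fin d₁ → ℂ) (ha : ∀ i, ‖a i‖ < 1) {w : ℂ}
    (hw : ‖w‖ = 1) : ‖blaschke m a w‖ = 1 := by
  rw [blaschke_eq, norm_mul, norm_pow, hw, one_pow, one_mul, norm_prod,
    Finset.prod_congr rfl (fun i _ => norm_bfac_eq_one (ha i) hw), Finset.prod_const_one]

end Helpers

/-- In the degenerating setup, assume the boundary points `q k` (for
`d₁ ≤ k`) are pairwise distinct and none equals `1`. Fix a boundary index `k` and write
`q = q k`. Let `l ≥ 1` be such that `B^j(q)` avoids all boundary points for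
`1 ≤ j ≤ l − 1`. If `(c n)` is a sequence in `𝔻` with `(B n)'(c n) = 0` and `c n → q`,
then `(B n)^l (c n) → B^l(q)`. -/
theorem stmt12 (m e d₁ : ℕ) (hm : 1 ≤ m) (he : 1 ≤ e) (hd : d₁ < e)
    (q : Fin e → ℂ)
    (hqin : ∀ k : Fin e, (k : ℕ) < d₁ → ‖q k‖ < 1)
    (hqbd : ∀ k : Fin e, d₁ ≤ (k : ℕ) → ‖q k‖ = 1)
    (A : ℕ → Fin e → ℂ)
    (hA : ∀ n k, ‖A n k‖ < 1)
    (hAconv : ∀ k, Tendsto (fun n => A n k) atTop (nhds (q k)))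
    (hdist : ∀ k k' : Fin e, d₁ ≤ (k : ℕ) → d₁ ≤ (k' : ℕ) → q k = q k' → k = k')
    (hq1 : ∀ k : Fin e, d₁ ≤ (k : ℕ) → q k ≠ 1)
    (k : Fin e) (hk : d₁ ≤ (k : ℕ))
    (l : ℕ) (hl : 1 ≤ l)
    (hlavoid : ∀ j : ℕ, 1 ≤ j → j ≤ l - 1 → ∀ k' : Fin e, d₁ ≤ (k' : ℕ) →
      (blaschke m fun i : Fin d₁ => q (Fin.castLE hd.le i))^[j] (q k) ≠ q k')
    (c : ℕ → ℂ) (hc : ∀ n, ‖c n‖ < 1)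
    (hcrit : ∀ n, deriv (blaschke m (A n)) (c n) = 0)
    (hclim : Tendsto c atTop (nhds (q k))) :
    Tendsto (fun n => (blaschke m (A n))^[l] (c n)) atTop
      (nhds ((blaschke m fun i : Fin d₁ => q (Fin.castLE hd.le i))^[l] (q k))) := by
  classical
  set B' : ℂ → ℂ := blaschke m (fun i : Fin d₁ => q (Fin.castLE hd.le i)) with hB'
  have hqk1 : ‖q k‖ = 1 := hqbd k hk
  have hq' : ∀ i : Fin d₁, ‖q (Fin.castLE hd.le i)‖ < 1 :=
    fun i => hqin _ (by simpa using i.isLt)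
  have hBnorm : ∀ w : ℂ, ‖w‖ = 1 → ‖B' w‖ = 1 :=
    fun w hw => norm_blaschke_one _ hq' hw
  have hnorm : ∀ j : ℕ, ‖B'^[j] (q k)‖ = 1 := by
    intro j
    induction j with
    | zero => simpa using hqk1
    | succ i ih => rw [Function.iterate_succ_apply']; exact hBnorm _ ih
  have hqne : ∀ j : Fin e, j ≠ k → q k ≠ q j := by
    intro j hj h
    by_cases hjd : d₁ ≤ (j : ℕ)
    · exact hj.symm (hdist k j hk hjd h)
    · have := hqin j (by omega)
      rw [← h, hqk1] at this; linarith
  have lem1 : ∀ (zn : ℕ → ℂ) (z : ℂ), Tendsto zn atTop (nhds z) → ‖z‖ ≤ 1 →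
      (∀ j : Fin e, d₁ ≤ (j:ℕ) → z ≠ q j) →
      Tendsto (fun n => blaschke m (A n) (zn n)) atTop (nhds (B' z)) := by
    intro zn z hz hz1 hzq
    apply blaschke_tendsto_main hd q A hz
    intro j
    by_cases hj : (j:ℕ) < d₁
    · rw [if_pos hj]
      exact bfac_tendsto (hAconv j) hz (one_sub_ne (hqin j hj))
        (one_sub_conj_mul_ne_int (hqin j hj) hz1)
    · rw [if_neg hj]
      have hjd : d₁ ≤ (j:ℕ) := le_of_not_gt hj
      have h := bfac_tendsto (hAconv j) hz (sub_ne_zero.mpr (Ne.symm (hq1 j hjd)))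
        (one_sub_conj_mul_ne_bd (hqbd j hjd) (hzq j hjd))
      rwa [bfac_boundary_eq_one (hqbd j hjd) (hq1 j hjd) (hzq j hjd)] at h
  have base : Tendsto (fun n => blaschke m (A n) (c n)) atTop (nhds (B' (q k))) := by
    apply blaschke_tendsto_main hd q A hclim
    intro j
    by_cases hjk : j = k
    · subst hjk
      rw [if_neg (by omega)]
      exact bfac_k_tendsto hm hd q hqin hqbd A hA hAconv hdist hq1 j hk c hc hcrit hclim
    · by_cases hj : (j:ℕ) < d₁
      · rw [if_pos hj]
        exact bfac_tendsto (hAconv j) hclim (one_sub_ne (hqin j hj))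
          (one_sub_conj_mul_ne_int (hqin j hj) hqk1.le)
      · rw [if_neg hj]
        have hjd : d₁ ≤ (j:ℕ) := le_of_not_gt hj
        have h := bfac_tendsto (hAconv j) hclim (sub_ne_zero.mpr (Ne.symm (hq1 j hjd)))
          (one_sub_conj_mul_ne_bd (hqbd j hjd) (hqne j hjk))
        rwa [bfac_boundary_eq_one (hqbd j hjd) (hq1 j hjd) (hqne j hjk)] at h
  have claim : ∀ j : ℕ, 1 ≤ j → j ≤ l →
      Tendsto (fun n => (blaschke m (A n))^[j] (c n)) atTop (nhds (B'^[j] (q k))) := by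
    intro j
    induction j with
    | zero => intro h; omega
    | succ i ih =>
      intro _ hjl
      by_cases hi : i = 0
      · subst hi
        simpa using base
      · have h1i : 1 ≤ i := by omega
        have hprev := ih h1i (by omega)
        have havoid : ∀ j' : Fin e, d₁ ≤ (j':ℕ) → B'^[i] (q k) ≠ q j' :=
          fun j' hj' => hlavoid i h1i (by omega) j' hj'
        have h := lem1 (fun n => (blaschke m (A n))^[i] (c n)) (B'^[i] (q k)) hprev
          (hnorm i).le havoid
        simpa [Function.iterate_succ_apply'] using h
  exact claim l hl le_rfl
end

section
/- Let g_n, g : 𝔻 → ℂ be injective holomorphic functions such that g_n → g locally uniformly on 𝔻. Let (z_n), (w_n) be sequences in 𝔻 and z₀, w₀ ∈ 𝔻 such that g_n(z_n) → g(z₀) and g_n(w_n) → g(w₀). Then z_n → z₀, w_n → w₀, and the pseudo-hyperbolic distances converge: ρ(z_n, w_n) → ρ(z₀, w₀). -/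
open Filter Metric


/-- If a holomorphic function has small value at the center and large modulus on the
sphere, it has a zero in the ball. -/
lemma exists_zero_of_small_center (f : ℂ → ℂ) (c : ℂ) (r : ℝ) (hr : 0 < r)
    (hf : DifferentiableOn ℂ f (closedBall c r)) (ε : ℝ) (hε : 0 < ε)
    (hsph : ∀ x ∈ sphere c r, ε ≤ ‖f x‖) (hc : ‖f c‖ < ε) :
    ∃ x ∈ ball c r, f x = 0 := by
  by_contra h
  push_neg at h
  have hne : ∀ x ∈ closedBall c r, f x ≠ 0 := by
    intro x hx
    rcases (mem_closedBall.mp hx).lt_or_eq with h1 | h1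
    · exact h x (mem_ball.mpr h1)
    · have := hsph x (mem_sphere.mpr h1)
      intro h0; rw [h0, norm_zero] at this; linarith
  have hinv : DifferentiableOn ℂ (fun x => (f x)⁻¹) (closedBall c r) :=
    hf.inv hne
  have hdc : DiffContOnCl ℂ (fun x => (f x)⁻¹) (ball c r) := by
    apply DifferentiableOn.diffContOnCl
    rwa [closure_ball c hr.ne']
  have hbd : ‖(f c)⁻¹‖ ≤ ε⁻¹ := by
    refine Complex.norm_le_of_forall_mem_frontier_norm_le isBounded_ball hdc ?_ ?_
    · intro x hx
      rw [frontier_ball c hr.ne'] at hx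
      rw [norm_inv]
      exact inv_anti₀ hε (hsph x hx)
    · exact subset_closure (mem_ball_self hr)
  rw [norm_inv] at hbd
  have h0 : 0 < ‖f c‖ := norm_pos_iff.mpr (hne c (mem_closedBall_self hr.le))
  have : ε ≤ ‖f c‖ := (inv_le_inv₀ h0 hε).mp hbd
  linarith

lemma key_tendsto (g : ℕ → ℂ → ℂ) (glim : ℂ → ℂ)
    (hhol : ∀ n, DifferentiableOn ℂ (g n) {z : ℂ | ‖z‖ < 1})
    (hinj : ∀ n, Set.InjOn (g n) {z : ℂ | ‖z‖ < 1})
    (hhollim : DifferentiableOn ℂ glim {z : ℂ | ‖z‖ < 1})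
    (hinjlim : Set.InjOn glim {z : ℂ | ‖z‖ < 1})
    (hconv : TendstoLocallyUniformlyOn g glim atTop {z : ℂ | ‖z‖ < 1})
    (z : ℕ → ℂ) (hz : ∀ n, ‖z n‖ < 1) (z₀ : ℂ) (hz₀ : ‖z₀‖ < 1)
    (hgz : Tendsto (fun n => g n (z n)) atTop (nhds (glim z₀))) :
    Tendsto z atTop (nhds z₀) := by
  have hDeq : {z : ℂ | ‖z‖ < 1} = ball (0 : ℂ) 1 := by
    ext x; simp [mem_ball, dist_zero_right]
  rw [Metric.tendsto_nhds]
  intro δ hδ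
  set r : ℝ := min (δ/2) ((1 - ‖z₀‖)/2) with hr_def
  have hr : 0 < r := lt_min (by linarith) (by linarith)
  have hsub : closedBall z₀ r ⊆ {z : ℂ | ‖z‖ < 1} := by
    intro x hx
    have h1 : ‖x - z₀‖ ≤ r := by rwa [mem_closedBall, dist_eq_norm] at hx
    have h2 : r ≤ (1 - ‖z₀‖)/2 := min_le_right _ _
    have := norm_sub_norm_le x z₀
    simp only [Set.mem_setOf_eq]
    linarith
  -- min of ‖glim x - glim z₀‖ on the sphere
  have hsph_sub : sphere z₀ r ⊆ {z : ℂ | ‖z‖ < 1} :=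
    (sphere_subset_closedBall).trans hsub
  have hsph_ne : (sphere z₀ r).Nonempty := NormedSpace.sphere_nonempty.mpr hr.le
  have hcont : ContinuousOn (fun x => ‖glim x - glim z₀‖) (sphere z₀ r) := by
    apply ContinuousOn.norm
    exact (hhollim.continuousOn.mono hsph_sub).sub continuousOn_const
  obtain ⟨x₀, hx₀, hmin⟩ :=
    (isCompact_sphere z₀ r).exists_isMinOn hsph_ne hcont
  set ε : ℝ := ‖glim x₀ - glim z₀‖ with hε_def
  have hε : 0 < ε := by
    rw [hε_def, norm_pos_iff, sub_ne_zero]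
    intro heq
    have : x₀ = z₀ := hinjlim (hsph_sub hx₀) (Set.mem_setOf_eq ▸ hz₀) heq
    rw [mem_sphere, this, dist_self] at hx₀
    exact hr.ne' hx₀.symm
  -- uniform convergence on the closed ball
  have hunif : TendstoUniformlyOn g glim atTop (closedBall z₀ r) := by
    rw [hDeq] at hconv hsub
    exact (tendstoLocallyUniformlyOn_iff_forall_isCompact isOpen_ball).mp hconv
      _ hsub (isCompact_closedBall z₀ r)
  have h1 : ∀ᶠ n in atTop, ∀ x ∈ closedBall z₀ r, dist (glim x) (g n x) < ε/5 :=
    (Metric.tendstoUniformlyOn_iff.mp hunif) (ε/5) (by linarith)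
  have h2 : ∀ᶠ n in atTop, dist (g n (z n)) (glim z₀) < ε/5 :=
    (Metric.tendsto_nhds.mp hgz) (ε/5) (by linarith)
  filter_upwards [h1, h2] with n hn1 hn2
  -- find a zero of g n · - g n (z n) in ball z₀ r
  obtain ⟨ζ, hζ, hζ0⟩ := exists_zero_of_small_center (fun x => g n x - g n (z n)) z₀ r hr
    (((hhol n).mono hsub).sub_const _) (3*ε/5) (by linarith)
    (by
      intro x hx
      have hxB : x ∈ closedBall z₀ r := sphere_subset_closedBall hx
      have e1 : ‖glim x - g n x‖ < ε/5 := by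
        rw [← dist_eq_norm]; exact hn1 x hxB
      have e2 : ‖g n (z n) - glim z₀‖ < ε/5 := by
        rw [← dist_eq_norm]; exact hn2
      have e3 : ε ≤ ‖glim x - glim z₀‖ := hmin hx
      have : ‖glim x - glim z₀‖ ≤ ‖glim x - g n x‖ + ‖g n x - g n (z n)‖
          + ‖g n (z n) - glim z₀‖ := by
        calc ‖glim x - glim z₀‖
            = ‖(glim x - g n x) + (g n x - g n (z n)) + (g n (z n) - glim z₀)‖ := by ring_nf
          _ ≤ _ := norm_add₃_le
      linarith)
    (by
      have e1 : ‖glim z₀ - g n z₀‖ < ε/5 := by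
        rw [← dist_eq_norm]; exact hn1 z₀ (mem_closedBall_self hr.le)
      have e2 : ‖g n (z n) - glim z₀‖ < ε/5 := by
        rw [← dist_eq_norm]; exact hn2
      have : ‖g n z₀ - g n (z n)‖ ≤ ‖glim z₀ - g n z₀‖ + ‖g n (z n) - glim z₀‖ := by
        calc ‖g n z₀ - g n (z n)‖ = ‖-((glim z₀ - g n z₀)) - (g n (z n) - glim z₀)‖ := by ring_nf
          _ ≤ _ := by
              rw [sub_eq_add_neg]
              exact (norm_add_le _ _).trans (by rw [norm_neg, norm_neg])
      linarith)
  have hζD : ζ ∈ {z : ℂ | ‖z‖ < 1} := hsub (ball_subset_closedBall hζ)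
  have : ζ = z n := by
    apply hinj n hζD (hz n)
    rwa [sub_eq_zero] at hζ0
  rw [← this]
  calc dist ζ z₀ < r := mem_ball.mp hζ
    _ ≤ δ/2 := min_le_left _ _
    _ < δ := by linarith

/-- Let `g n, g : 𝔻 → ℂ` be injective holomorphic functions with
`g n → g` locally uniformly on `𝔻`. Let `(z n), (w n)` be sequences in `𝔻` and
`z₀, w₀ ∈ 𝔻` with `g n (z n) → g z₀` and `g n (w n) → g w₀`. Then `z n → z₀`,
`w n → w₀`, and the pseudo-hyperbolic distances `ρ(z n, w n)` converge to `ρ(z₀, w₀)`. -/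
theorem stmt13 (g : ℕ → ℂ → ℂ) (glim : ℂ → ℂ)
    (hhol : ∀ n, DifferentiableOn ℂ (g n) {z : ℂ | ‖z‖ < 1})
    (hinj : ∀ n, Set.InjOn (g n) {z : ℂ | ‖z‖ < 1})
    (hhollim : DifferentiableOn ℂ glim {z : ℂ | ‖z‖ < 1})
    (hinjlim : Set.InjOn glim {z : ℂ | ‖z‖ < 1})
    (hconv : TendstoLocallyUniformlyOn g glim atTop {z : ℂ | ‖z‖ < 1})
    (z w : ℕ → ℂ) (hz : ∀ n, ‖z n‖ < 1) (hw : ∀ n, ‖w n‖ < 1)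
    (z₀ w₀ : ℂ) (hz₀ : ‖z₀‖ < 1) (hw₀ : ‖w₀‖ < 1)
    (hgz : Tendsto (fun n => g n (z n)) atTop (nhds (glim z₀)))
    (hgw : Tendsto (fun n => g n (w n)) atTop (nhds (glim w₀))) :
    Tendsto z atTop (nhds z₀) ∧ Tendsto w atTop (nhds w₀) ∧
      Tendsto (fun n => ‖z n - w n‖ / ‖1 - (starRingEnd ℂ) (w n) * z n‖) atTop
        (nhds (‖z₀ - w₀‖ / ‖1 - (starRingEnd ℂ) w₀ * z₀‖)) := by
  have htz : Tendsto z atTop (nhds z₀) :=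
    key_tendsto g glim hhol hinj hhollim hinjlim hconv z hz z₀ hz₀ hgz
  have htw : Tendsto w atTop (nhds w₀) :=
    key_tendsto g glim hhol hinj hhollim hinjlim hconv w hw w₀ hw₀ hgw
  refine ⟨htz, htw, ?_⟩
  have hconj : Tendsto (fun n => (starRingEnd ℂ) (w n)) atTop
      (nhds ((starRingEnd ℂ) w₀)) := (Complex.continuous_conj.tendsto _).comp htw
  have hden : Tendsto (fun n => ‖1 - (starRingEnd ℂ) (w n) * z n‖) atTop
      (nhds ‖1 - (starRingEnd ℂ) w₀ * z₀‖) :=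
    (tendsto_const_nhds.sub (hconj.mul htz)).norm
  have hne : ‖1 - (starRingEnd ℂ) w₀ * z₀‖ ≠ 0 := by
    rw [norm_ne_zero_iff, sub_ne_zero]
    intro h
    have : ‖(1 : ℂ)‖ = ‖(starRingEnd ℂ) w₀ * z₀‖ := by rw [h]
    rw [norm_one, norm_mul, RCLike.norm_conj] at this
    nlinarith [norm_nonneg w₀, norm_nonneg z₀]
  exact ((htz.sub htw).norm).div hden hne
end

section
/- Let g_n, g : 𝔻 → ℂ be injective holomorphic functions such that g_n → g locally uniformly on 𝔻. Let (z_n), (w_n) be sequences in 𝔻, z₀ ∈ 𝔻 and b ∈ ℂ such that g_n(z_n) → g(z₀) and g_n(w_n) → b. Then b belongs to g(𝔻) if and only if sup_n ρ(z_n, w_n) < 1 (equivalently, the hyperbolic distances between z_n and w_n in 𝔻 are uniformly bounded). -/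
open Filter

section Aux
open Metric Complex

lemma normSq_identity (z w : ℂ) :
    Complex.normSq (1 - (starRingEnd ℂ) w * z) =
      Complex.normSq (z - w) + (1 - Complex.normSq z) * (1 - Complex.normSq w) := by
  simp only [Complex.normSq_apply, Complex.sub_re, Complex.sub_im, Complex.mul_re,
    Complex.mul_im, Complex.one_re, Complex.one_im, Complex.conj_re, Complex.conj_im]
  ring

lemma norm_sq_eq (z : ℂ) : ‖z‖ ^ 2 = Complex.normSq z := by
  rw [Complex.sq_norm]

lemma den_pos {z w : ℂ} (hz : ‖z‖ < 1) (hw : ‖w‖ ≤ 1) :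
    0 < ‖1 - (starRingEnd ℂ) w * z‖ := by
  have h1 : ‖(starRingEnd ℂ) w * z‖ < 1 := by
    rw [norm_mul, RCLike.norm_conj]
    calc ‖w‖ * ‖z‖ ≤ 1 * ‖z‖ := mul_le_mul_of_nonneg_right hw (norm_nonneg _)
      _ < 1 := by simpa using hz
  have := norm_sub_norm_le (1 : ℂ) ((starRingEnd ℂ) w * z)
  simp only [norm_one] at this
  linarith

lemma norm_sub_lt_den {z w : ℂ} (hz : ‖z‖ < 1) (hw : ‖w‖ < 1) :
    ‖z - w‖ < ‖1 - (starRingEnd ℂ) w * z‖ := by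
  have hsq : ‖z - w‖ ^ 2 < ‖1 - (starRingEnd ℂ) w * z‖ ^ 2 := by
    rw [norm_sq_eq, norm_sq_eq, normSq_identity]
    have h1 : Complex.normSq z < 1 := by rw [← norm_sq_eq]; nlinarith [norm_nonneg z]
    have h2 : Complex.normSq w < 1 := by rw [← norm_sq_eq]; nlinarith [norm_nonneg w]
    nlinarith
  exact lt_of_pow_lt_pow_left₀ 2 (norm_nonneg _) hsq

lemma rho_lt_one {z w : ℂ} (hz : ‖z‖ < 1) (hw : ‖w‖ < 1) :
    ‖z - w‖ / ‖1 - (starRingEnd ℂ) w * z‖ < 1 := by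
  rw [div_lt_one (den_pos hz hw.le)]
  exact norm_sub_lt_den hz hw

lemma key_conv (g : ℕ → ℂ → ℂ) (glim : ℂ → ℂ)
    (hhol : ∀ n, DifferentiableOn ℂ (g n) {z : ℂ | ‖z‖ < 1})
    (hinj : ∀ n, Set.InjOn (g n) {z : ℂ | ‖z‖ < 1})
    (hhollim : DifferentiableOn ℂ glim {z : ℂ | ‖z‖ < 1})
    (hinjlim : Set.InjOn glim {z : ℂ | ‖z‖ < 1})
    (hconv : TendstoLocallyUniformlyOn g glim atTop {z : ℂ | ‖z‖ < 1})
    (u : ℕ → ℂ) (hu : ∀ n, ‖u n‖ < 1) (u₀ : ℂ) (hu₀ : ‖u₀‖ < 1)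
    (hg : Tendsto (fun n => g n (u n)) atTop (nhds (glim u₀))) :
    Tendsto u atTop (nhds u₀) := by
  rw [Metric.tendsto_atTop]
  intro ε hε
  set r : ℝ := min (ε / 2) ((1 - ‖u₀‖) / 2) with hr_def
  have hr : 0 < r := lt_min (by linarith) (by linarith)
  have hrε : r < ε := (min_le_left _ _).trans_lt (by linarith)
  have hKsub : closedBall u₀ r ⊆ {z : ℂ | ‖z‖ < 1} := by
    intro x hx
    have hx' : ‖x - u₀‖ ≤ r := by
      rwa [mem_closedBall, dist_eq_norm] at hx
    have : ‖x‖ ≤ ‖x - u₀‖ + ‖u₀‖ := by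
      simpa using norm_add_le (x - u₀) u₀
    have hr2 : r ≤ (1 - ‖u₀‖) / 2 := min_le_right _ _
    simp only [Set.mem_setOf_eq]
    linarith
  -- minimum of ‖glim ζ - glim u₀‖ on the sphere
  have hsphere_sub : sphere u₀ r ⊆ {z : ℂ | ‖z‖ < 1} :=
    (sphere_subset_closedBall).trans hKsub
  have hsph_ne : (sphere u₀ r).Nonempty := NormedSpace.sphere_nonempty.2 hr.le
  have hcont : ContinuousOn (fun ζ => ‖glim ζ - glim u₀‖) (sphere u₀ r) :=
    ((hhollim.continuousOn.mono hsphere_sub).sub continuousOn_const).norm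
  obtain ⟨ζ₀, hζ₀, hmin⟩ := (isCompact_sphere u₀ r).exists_isMinOn hsph_ne hcont
  set δ : ℝ := ‖glim ζ₀ - glim u₀‖ with hδ_def
  have hδ : 0 < δ := by
    rw [hδ_def, norm_pos_iff, sub_ne_zero]
    intro heq
    have : ζ₀ = u₀ := hinjlim (hsphere_sub hζ₀) hu₀ heq
    rw [this] at hζ₀
    simp only [mem_sphere_iff_norm, sub_self, norm_zero] at hζ₀
    exact hr.ne hζ₀
  have hmin' : ∀ ζ ∈ sphere u₀ r, δ ≤ ‖glim ζ - glim u₀‖ := fun ζ hζ => hmin hζ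
  -- uniform convergence on the closed ball
  have hopen : IsOpen {z : ℂ | ‖z‖ < 1} := isOpen_lt continuous_norm continuous_const
  have huc : TendstoUniformlyOn g glim atTop (closedBall u₀ r) :=
    (tendstoLocallyUniformlyOn_iff_forall_isCompact hopen).1 hconv _ hKsub
      (isCompact_closedBall _ _)
  rw [Metric.tendstoUniformlyOn_iff] at huc
  have h1 : ∀ᶠ n in atTop, ∀ x ∈ closedBall u₀ r, dist (glim x) (g n x) < δ / 4 :=
    huc (δ / 4) (by linarith)
  have h2 : ∀ᶠ n in atTop, dist (g n (u n)) (glim u₀) < δ / 4 :=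
    (Metric.tendsto_nhds.1 hg) (δ / 4) (by linarith)
  obtain ⟨N, hN⟩ := eventually_atTop.1 (h1.and h2)
  refine ⟨N, fun n hn => ?_⟩
  obtain ⟨hn1, hn2⟩ := hN n hn
  -- claim: u n ∈ closedBall u₀ r
  suffices hsuff : u n ∈ closedBall u₀ r by
    rw [mem_closedBall] at hsuff
    linarith
  by_contra hnot
  -- the function g n · - g n (u n) does not vanish on the closed ball
  have hne : ∀ ζ ∈ closedBall u₀ r, g n ζ - g n (u n) ≠ 0 := by
    intro ζ hζ heq
    rw [sub_eq_zero] at heq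
    have : ζ = u n := hinj n (hKsub hζ) (hu n) heq
    exact hnot (this ▸ hζ)
  -- min modulus via max modulus for the inverse
  have hdiff : DifferentiableOn ℂ (fun ζ => g n ζ - g n (u n)) (closedBall u₀ r) :=
    ((hhol n).mono hKsub).sub (differentiableOn_const _)
  have hdcc : DiffContOnCl ℂ (fun ζ => (g n ζ - g n (u n))⁻¹) (ball u₀ r) := by
    constructor
    · exact ((hdiff.mono ball_subset_closedBall).inv
        (fun x hx => hne x (ball_subset_closedBall hx)))
    · rw [closure_ball u₀ hr.ne']
      exact (hdiff.continuousOn).inv₀ hne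
  have hbound : ∀ ζ ∈ frontier (ball u₀ r), ‖(g n ζ - g n (u n))⁻¹‖ ≤ (δ / 2)⁻¹ := by
    intro ζ hζ
    rw [frontier_ball u₀ hr.ne'] at hζ
    have hζK : ζ ∈ closedBall u₀ r := sphere_subset_closedBall hζ
    have e1 : dist (glim ζ) (g n ζ) < δ / 4 := hn1 ζ hζK
    have e2 : dist (g n (u n)) (glim u₀) < δ / 4 := hn2
    have e3 : δ ≤ ‖glim ζ - glim u₀‖ := hmin' ζ hζ
    have e4 : δ / 2 ≤ ‖g n ζ - g n (u n)‖ := by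
      have t1 : ‖glim ζ - glim u₀‖ ≤ ‖g n ζ - g n (u n)‖ + ‖glim ζ - g n ζ‖
          + ‖g n (u n) - glim u₀‖ := by
        have : glim ζ - glim u₀ = (g n ζ - g n (u n)) + (glim ζ - g n ζ)
            + (g n (u n) - glim u₀) := by ring
        rw [this]
        exact (norm_add_le _ _).trans (by gcongr; exact norm_add_le _ _)
      rw [dist_eq_norm] at e1 e2
      linarith
    rw [norm_inv]
    exact inv_anti₀ (by linarith) e4
  have hu₀cl : u₀ ∈ closure (ball u₀ r) := by
    rw [closure_ball u₀ hr.ne']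
    exact mem_closedBall_self hr.le
  have hfin := Complex.norm_le_of_forall_mem_frontier_norm_le isBounded_ball hdcc hbound hu₀cl
  -- but ‖g n u₀ - g n (u n)‖ < δ / 2, contradiction
  have hsmall : ‖g n u₀ - g n (u n)‖ < δ / 2 := by
    have e1 : dist (glim u₀) (g n u₀) < δ / 4 := hn1 u₀ (mem_closedBall_self hr.le)
    have e2 : dist (g n (u n)) (glim u₀) < δ / 4 := hn2
    rw [dist_eq_norm] at e1 e2
    have heq : g n u₀ - g n (u n) = -(glim u₀ - g n u₀) - (g n (u n) - glim u₀) := by ring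
    calc ‖g n u₀ - g n (u n)‖ = ‖-(glim u₀ - g n u₀) - (g n (u n) - glim u₀)‖ := by rw [heq]
      _ ≤ ‖-(glim u₀ - g n u₀)‖ + ‖g n (u n) - glim u₀‖ := norm_sub_le _ _
      _ < δ / 2 := by rw [norm_neg]; linarith
  have hpos : 0 < ‖g n u₀ - g n (u n)‖ :=
    norm_pos_iff.2 (hne u₀ (mem_closedBall_self hr.le))
  rw [norm_inv] at hfin
  have : δ / 2 ≤ ‖g n u₀ - g n (u n)‖ := by
    rwa [inv_le_inv₀ hpos (by linarith)] at hfin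
  linarith
set_option maxHeartbeats 1000000 in

lemma w_bound {a bb d m r s : ℝ} (ha0 : 0 ≤ a) (has : a < s) (hs0 : 0 ≤ s) (hs1 : s < 1)
    (hb0 : 0 ≤ bb) (hb1 : bb < 1) (hd : 0 < d) (hm0 : 0 ≤ m) (hr0 : 0 ≤ r) (hr1 : r < 1)
    (hmr : m ≤ r * d) (hda : 1 - a ≤ d)
    (hid : d ^ 2 = m ^ 2 + (1 - a ^ 2) * (1 - bb ^ 2)) :
    bb ≤ 1 - (1 - r ^ 2) * (1 - s) / 2 / 2 := by
  have h1a : 0 < 1 - a := by linarith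
  have hra : 0 < 1 - r ^ 2 := by nlinarith
  have hbb2 : 0 ≤ 1 - bb ^ 2 := by nlinarith
  have hm2 : m ^ 2 ≤ r ^ 2 * d ^ 2 := by nlinarith [mul_le_mul hmr hmr hm0 (by positivity : (0:ℝ) ≤ r * d)]
  have step1 : (1 - r ^ 2) * d ^ 2 ≤ (1 - a ^ 2) * (1 - bb ^ 2) := by nlinarith
  have step2 : (1 - a) ^ 2 ≤ d ^ 2 := by nlinarith
  have step2' : (1 - r ^ 2) * (1 - a) ^ 2 ≤ (1 - r ^ 2) * d ^ 2 :=
    mul_le_mul_of_nonneg_left step2 hra.le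
  have step3 : (1 - a ^ 2) * (1 - bb ^ 2) ≤ 2 * (1 - a) * (1 - bb ^ 2) := by
    nlinarith [mul_nonneg hbb2 (sq_nonneg (1 - a))]
  have step4 : (1 - r ^ 2) * (1 - a) ^ 2 ≤ 2 * (1 - a) * (1 - bb ^ 2) := by linarith
  have step5 : (1 - r ^ 2) * (1 - a) ≤ 2 * (1 - bb ^ 2) := by
    have h := (mul_le_mul_iff_right₀ h1a).1
      (show (1 - a) * ((1 - r ^ 2) * (1 - a)) ≤ (1 - a) * (2 * (1 - bb ^ 2)) by nlinarith)
    exact h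
  have step6 : (1 - r ^ 2) * (1 - s) ≤ 2 * (1 - bb ^ 2) := by
    have := mul_le_mul_of_nonneg_left (show 1 - s ≤ 1 - a by linarith) hra.le
    linarith
  have hE2 : 0 < (1 - r ^ 2) * (1 - s) := mul_pos hra (by linarith)
  have hE3 : (1 - r ^ 2) * (1 - s) ≤ 1 := by nlinarith [mul_nonneg hs0 (sq_nonneg r)]
  by_contra hcon
  push_neg at hcon
  nlinarith [step6, hcon, hb0, hE2, hE3]
end Aux

set_option maxHeartbeats 1000000 in
/-- Let `g n, g : 𝔻 → ℂ` be injective holomorphic functions with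
`g n → g` locally uniformly on `𝔻`. Let `(z n), (w n)` be sequences in `𝔻`, `z₀ ∈ 𝔻`
and `b ∈ ℂ` with `g n (z n) → g z₀` and `g n (w n) → b`. Then `b ∈ g(𝔻)` if and only
if `sup_n ρ(z n, w n) < 1`, where `ρ` is the pseudo-hyperbolic distance. -/
theorem stmt14 (g : ℕ → ℂ → ℂ) (glim : ℂ → ℂ)
    (hhol : ∀ n, DifferentiableOn ℂ (g n) {z : ℂ | ‖z‖ < 1})
    (hinj : ∀ n, Set.InjOn (g n) {z : ℂ | ‖z‖ < 1})
    (hhollim : DifferentiableOn ℂ glim {z : ℂ | ‖z‖ < 1})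
    (hinjlim : Set.InjOn glim {z : ℂ | ‖z‖ < 1})
    (hconv : TendstoLocallyUniformlyOn g glim atTop {z : ℂ | ‖z‖ < 1})
    (z w : ℕ → ℂ) (hz : ∀ n, ‖z n‖ < 1) (hw : ∀ n, ‖w n‖ < 1)
    (z₀ : ℂ) (hz₀ : ‖z₀‖ < 1) (b : ℂ)
    (hgz : Tendsto (fun n => g n (z n)) atTop (nhds (glim z₀)))
    (hgw : Tendsto (fun n => g n (w n)) atTop (nhds b)) :
    b ∈ glim '' {z : ℂ | ‖z‖ < 1} ↔
      (⨆ n, ‖z n - w n‖ / ‖1 - (starRingEnd ℂ) (w n) * z n‖) < 1 := by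
  have hzc : Filter.Tendsto z atTop (nhds z₀) :=
    key_conv g glim hhol hinj hhollim hinjlim hconv z hz z₀ hz₀ hgz
  constructor
  · rintro ⟨w₀, hw₀mem, hw₀eq⟩
    have hw₀ : ‖w₀‖ < 1 := hw₀mem
    rw [← hw₀eq] at hgw
    have hwc : Filter.Tendsto w atTop (nhds w₀) :=
      key_conv g glim hhol hinj hhollim hinjlim hconv w hw w₀ hw₀ hgw
    have hρ₀ : ‖z₀ - w₀‖ / ‖1 - (starRingEnd ℂ) w₀ * z₀‖ < 1 := rho_lt_one hz₀ hw₀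
    have hρlim : Tendsto (fun n => ‖z n - w n‖ / ‖1 - (starRingEnd ℂ) (w n) * z n‖) atTop
        (nhds (‖z₀ - w₀‖ / ‖1 - (starRingEnd ℂ) w₀ * z₀‖)) := by
      have hconjw : Tendsto (fun n => (starRingEnd ℂ) (w n)) atTop
          (nhds ((starRingEnd ℂ) w₀)) := (Complex.continuous_conj.tendsto w₀).comp hwc
      have hnum : Tendsto (fun n => ‖z n - w n‖) atTop (nhds ‖z₀ - w₀‖) := (hzc.sub hwc).norm
      have hden : Tendsto (fun n => ‖1 - (starRingEnd ℂ) (w n) * z n‖) atTop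
          (nhds ‖1 - (starRingEnd ℂ) w₀ * z₀‖) :=
        (tendsto_const_nhds.sub (hconjw.mul hzc)).norm
      exact hnum.div hden (den_pos hz₀ hw₀.le).ne'
    have hev : ∀ᶠ n in atTop,
        ‖z n - w n‖ / ‖1 - (starRingEnd ℂ) (w n) * z n‖ <
          (‖z₀ - w₀‖ / ‖1 - (starRingEnd ℂ) w₀ * z₀‖ + 1) / 2 :=
      hρlim.eventually (gt_mem_nhds (by linarith))
    obtain ⟨N, hN⟩ := eventually_atTop.1 hev
    have hne : (Finset.range (N + 1)).Nonempty := ⟨0, Finset.mem_range.2 (Nat.succ_pos N)⟩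
    set M : ℝ := (Finset.range (N + 1)).sup' hne
      (fun n => ‖z n - w n‖ / ‖1 - (starRingEnd ℂ) (w n) * z n‖) with hM_def
    have hfin : ∀ n, ‖z n - w n‖ / ‖1 - (starRingEnd ℂ) (w n) * z n‖ ≤
        max ((‖z₀ - w₀‖ / ‖1 - (starRingEnd ℂ) w₀ * z₀‖ + 1) / 2) M := by
      intro n
      rcases le_or_gt n N with h | h
      · exact le_max_of_le_right (Finset.le_sup'
          (fun n => ‖z n - w n‖ / ‖1 - (starRingEnd ℂ) (w n) * z n‖)
          (Finset.mem_range.2 (by omega)))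
      · exact le_max_of_le_left (hN n (by omega)).le
    refine lt_of_le_of_lt (ciSup_le hfin) (max_lt (by linarith) ?_)
    rw [hM_def, Finset.sup'_lt_iff]
    exact fun n _ => rho_lt_one (hz n) (hw n)
  · intro hsup
    have hbdd : BddAbove (Set.range
        (fun n => ‖z n - w n‖ / ‖1 - (starRingEnd ℂ) (w n) * z n‖)) := by
      refine ⟨1, ?_⟩
      rintro x ⟨n, rfl⟩
      exact (rho_lt_one (hz n) (hw n)).le
    have hler : ∀ n, ‖z n - w n‖ / ‖1 - (starRingEnd ℂ) (w n) * z n‖ ≤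
        ⨆ n, ‖z n - w n‖ / ‖1 - (starRingEnd ℂ) (w n) * z n‖ := fun n => le_ciSup hbdd n
    set r : ℝ := ⨆ n, ‖z n - w n‖ / ‖1 - (starRingEnd ℂ) (w n) * z n‖ with hr_def
    have hr0 : 0 ≤ r := le_trans (div_nonneg (norm_nonneg _) (norm_nonneg _)) (hler 0)
    have hs0 : (0:ℝ) ≤ (‖z₀‖ + 1) / 2 := by positivity
    have hs1 : (‖z₀‖ + 1) / 2 < 1 := by linarith
    have hevz : ∀ᶠ n in atTop, ‖z n‖ < (‖z₀‖ + 1) / 2 :=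
      hzc.norm.eventually (gt_mem_nhds (by linarith))
    have hevw : ∀ᶠ n in atTop,
        ‖w n‖ ≤ 1 - (1 - r ^ 2) * (1 - (‖z₀‖ + 1) / 2) / 2 / 2 := by
      filter_upwards [hevz] with n hzn
      have hd : 0 < ‖1 - (starRingEnd ℂ) (w n) * z n‖ := den_pos (hz n) (hw n).le
      have hmr : ‖z n - w n‖ ≤ r * ‖1 - (starRingEnd ℂ) (w n) * z n‖ :=
        (div_le_iff₀ hd).1 (hler n)
      have hda : 1 - ‖z n‖ ≤ ‖1 - (starRingEnd ℂ) (w n) * z n‖ := by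
        have h1 : ‖(starRingEnd ℂ) (w n) * z n‖ ≤ ‖z n‖ := by
          rw [norm_mul, RCLike.norm_conj]
          calc ‖w n‖ * ‖z n‖ ≤ 1 * ‖z n‖ :=
                mul_le_mul_of_nonneg_right (hw n).le (norm_nonneg _)
            _ = ‖z n‖ := one_mul _
        have h2 := norm_sub_norm_le (1 : ℂ) ((starRingEnd ℂ) (w n) * z n)
        simp only [norm_one] at h2
        linarith
      have hid : ‖1 - (starRingEnd ℂ) (w n) * z n‖ ^ 2 =
          ‖z n - w n‖ ^ 2 + (1 - ‖z n‖ ^ 2) * (1 - ‖w n‖ ^ 2) := by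
        rw [norm_sq_eq, normSq_identity, ← norm_sq_eq, ← norm_sq_eq, ← norm_sq_eq]
      exact w_bound (norm_nonneg _) hzn hs0 hs1 (norm_nonneg _) (hw n) hd (norm_nonneg _)
        hr0 hsup hmr hda hid
    obtain ⟨N, hN⟩ := eventually_atTop.1 hevw
    have ht1 : 1 - (1 - r ^ 2) * (1 - (‖z₀‖ + 1) / 2) / 2 / 2 < 1 := by
      have : 0 < (1 - r ^ 2) * (1 - (‖z₀‖ + 1) / 2) := by
        apply mul_pos
        · nlinarith
        · linarith
      linarith
    have hmem : ∀ k, w (k + N) ∈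
        Metric.closedBall (0 : ℂ) (1 - (1 - r ^ 2) * (1 - (‖z₀‖ + 1) / 2) / 2 / 2) := by
      intro k
      rw [Metric.mem_closedBall, dist_zero_right]
      exact hN _ (by omega)
    obtain ⟨w₀, hw₀mem, φ, hφ, hφt⟩ :=
      (isCompact_closedBall (0 : ℂ) _).tendsto_subseq hmem
    have hw₀ : ‖w₀‖ < 1 := by
      rw [Metric.mem_closedBall, dist_zero_right] at hw₀mem
      linarith
    have hψ : Tendsto (fun k => φ k + N) atTop atTop :=
      tendsto_atTop_mono (fun k => Nat.le_add_right _ _) hφ.tendsto_atTop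
    have hconv' : TendstoLocallyUniformlyOn (fun k => g (φ k + N)) glim atTop
        {z : ℂ | ‖z‖ < 1} := by
      intro v hv x hx
      obtain ⟨t', ht', hev'⟩ := hconv v hv x hx
      exact ⟨t', ht', hψ.eventually hev'⟩
    have hwt : Tendsto (fun k => w (φ k + N)) atTop
        (nhdsWithin w₀ {z : ℂ | ‖z‖ < 1}) :=
      tendsto_nhdsWithin_of_tendsto_nhds_of_eventually_within _ hφt
        (Eventually.of_forall fun k => hw _)
    have hlim2 : Tendsto (fun k => g (φ k + N) (w (φ k + N))) atTop (nhds (glim w₀)) :=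
      hconv'.tendsto_comp (hhollim.continuousOn w₀ hw₀) hw₀ hwt
    have hlim1 : Tendsto (fun k => g (φ k + N) (w (φ k + N))) atTop (nhds b) := hgw.comp hψ
    exact ⟨w₀, hw₀, tendsto_nhds_unique hlim2 hlim1⟩
end

section
/- Let d ≥ 2 and let f_n, f be complex polynomials of degree d such that the coefficients of f_n converge to the corresponding coefficients of f. Suppose each f_n has an attracting fixed point a_n (f_n(a_n) = a_n, |f_n'(a_n)| < 1), that a_n → a, and that a is an attracting fixed point of f. Assume that the components U_{f_n}(a_n) and U_f(a) are simply connected. Then: (a) a lies in the interior of K(f) and, for all sufficiently large n, a_n lies in the interior of K(f_n); (b) for every compact set C ⊆ U_f(a) there is N such that C ⊆ U_{f_n}(a_n) for all n ≥ N; (c) for every point w in the boundary of U_f(a) there exist points w_n in the boundary of U_{f_n}(a_n) with w_n → w. In other words, the pointed disks (U_{f_n}(a_n), a_n) converge to (U_f(a), a) in the Carathéodory kernel sense. -/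
open Filter

/-- The filled Julia set of a complex polynomial: the set of points with bounded
forward orbit. -/
def filledJulia (g : Polynomial ℂ) : Set ℂ :=
  {z : ℂ | Bornology.IsBounded (Set.range fun k : ℕ => (fun w => Polynomial.eval w g)^[k] z)}

/-- `fatouComp g x`: the connected component of the interior of the filled Julia set
of `g` containing `x` (the bounded Fatou component of `x`, when `x` is interior). -/
def fatouComp (g : Polynomial ℂ) (x : ℂ) : Set ℂ :=
  connectedComponentIn (interior (filledJulia g)) x

open Metric Set Polynomial

lemma subset_filledJulia_of_mapsTo {p : Polynomial ℂ} {s : Set ℂ}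
    (hb : Bornology.IsBounded s) (h : Set.MapsTo (fun w => p.eval w) s s) :
    s ⊆ filledJulia p := by
  intro z hz
  have : Set.range (fun k : ℕ => (fun w => p.eval w)^[k] z) ⊆ s := by
    rintro - ⟨k, rfl⟩
    exact h.iterate k hz
  exact hb.subset this

lemma exists_contracting_ball (p : Polynomial ℂ) (x : ℂ) (hfix : p.eval x = x)
    (hattr : ‖(Polynomial.derivative p).eval x‖ < 1) :
    ∃ r > (0:ℝ), ∃ c : ℝ, 0 ≤ c ∧ c < 1 ∧
      ∀ z ∈ Metric.closedBall x r, ‖p.eval z - x‖ ≤ c * ‖z - x‖ := by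
  set D := ‖(Polynomial.derivative p).eval x‖ with hD
  have hε : (0:ℝ) < (1 - D) / 2 := by linarith
  have hder := p.hasDerivAt x
  rw [hasDerivAt_iff_isLittleO] at hder
  have hbd := hder.bound hε
  rw [Metric.eventually_nhds_iff] at hbd
  obtain ⟨ε, hε0, hball⟩ := hbd
  have hD0 : 0 ≤ D := norm_nonneg _
  refine ⟨ε/2, by positivity, (1 + D)/2, by positivity, by linarith, ?_⟩
  intro z hz
  have hzx : dist z x ≤ ε / 2 := by simpa [Metric.mem_closedBall] using hz
  have hzx' : dist z x < ε := by linarith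
  have h1 := hball hzx'
  rw [hfix] at h1
  have h1' : ‖p.eval z - x - (z - x) * (Polynomial.derivative p).eval x‖ ≤ (1 - D)/2 * ‖z - x‖ := by
    simpa [dist_eq_norm, smul_eq_mul] using h1
  calc ‖p.eval z - x‖
      = ‖(p.eval z - x - (z - x) * (Polynomial.derivative p).eval x)
          + (z - x) * (Polynomial.derivative p).eval x‖ := by ring_nf
    _ ≤ ‖p.eval z - x - (z - x) * (Polynomial.derivative p).eval x‖
          + ‖(z - x) * (Polynomial.derivative p).eval x‖ := norm_add_le _ _
    _ ≤ (1 - D)/2 * ‖z - x‖ + ‖z - x‖ * D := add_le_add h1' (by rw [norm_mul])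
    _ = (1 + D)/2 * ‖z - x‖ := by ring

lemma iter_mem_and_bound {p : Polynomial ℂ} {x : ℂ} {r c : ℝ} (hr : 0 ≤ r)
    (hc0 : 0 ≤ c) (hc1 : c < 1)
    (hcon : ∀ z ∈ Metric.closedBall x r, ‖p.eval z - x‖ ≤ c * ‖z - x‖) :
    ∀ z ∈ Metric.closedBall x r, ∀ k : ℕ,
      (fun w => p.eval w)^[k] z ∈ Metric.closedBall x r ∧
      ‖(fun w => p.eval w)^[k] z - x‖ ≤ c ^ k * ‖z - x‖ := by
  intro z hz k
  induction k with
  | zero => simpa using hz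
  | succ k ih =>
    obtain ⟨hmem, hbd⟩ := ih
    have hzr : ‖z - x‖ ≤ r := by simpa [Metric.mem_closedBall, dist_eq_norm] using hz
    have hstep := hcon _ hmem
    rw [Function.iterate_succ_apply']
    constructor
    · have h1 : ‖p.eval ((fun w => p.eval w)^[k] z) - x‖ ≤ c * (c ^ k * ‖z - x‖) :=
        hstep.trans (by nlinarith [norm_nonneg ((fun w => p.eval w)^[k] z - x)])
      have h2 : c * (c ^ k * ‖z - x‖) ≤ r := by
        have hck : c ^ k ≤ 1 := pow_le_one₀ hc0 hc1.le
        have h3 : c ^ k * ‖z - x‖ ≤ r := by nlinarith [pow_nonneg hc0 k, norm_nonneg (z - x)]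
        nlinarith [mul_nonneg (pow_nonneg hc0 k) (norm_nonneg (z - x))]
      simpa [Metric.mem_closedBall, dist_eq_norm] using h1.trans h2
    · calc ‖p.eval ((fun w => p.eval w)^[k] z) - x‖ ≤ c * ‖(fun w => p.eval w)^[k] z - x‖ := hstep
        _ ≤ c * (c ^ k * ‖z - x‖) := by nlinarith [norm_nonneg ((fun w => p.eval w)^[k] z - x)]
        _ = c ^ (k+1) * ‖z - x‖ := by ring

lemma tendsto_iter_of_contract {p : Polynomial ℂ} {x : ℂ} {r c : ℝ} (hr : 0 ≤ r)
    (hc0 : 0 ≤ c) (hc1 : c < 1)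
    (hcon : ∀ z ∈ Metric.closedBall x r, ‖p.eval z - x‖ ≤ c * ‖z - x‖) :
    ∀ z ∈ Metric.closedBall x r,
      Tendsto (fun k : ℕ => (fun w => p.eval w)^[k] z) atTop (nhds x) := by
  intro z hz
  have h := fun k => (iter_mem_and_bound hr hc0 hc1 hcon z hz k).2
  have hgeo : Tendsto (fun k : ℕ => c ^ k * ‖z - x‖) atTop (nhds 0) := by
    simpa using (tendsto_pow_atTop_nhds_zero_of_lt_one hc0 hc1).mul_const ‖z - x‖
  exact tendsto_sub_nhds_zero_iff.mp (squeeze_zero_norm h hgeo)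

lemma escape_bound {p : Polynomial ℂ} {d : ℕ} (hd : 2 ≤ d) (hdeg : p.natDegree = d)
    {ℓ B : ℝ} (hℓ0 : 0 < ℓ) (hℓ : ℓ ≤ ‖p.coeff d‖) (hB : ∀ i < d, ‖p.coeff i‖ ≤ B)
    {z : ℂ} (hz : max 1 ((d * B + 2) / ℓ) < ‖z‖) :
    2 * ‖z‖ ≤ ‖p.eval z‖ := by
  have hz1 : (1:ℝ) < ‖z‖ := lt_of_le_of_lt (le_max_left _ _) hz
  have hz0 : (0:ℝ) < ‖z‖ := by linarith
  have hB0 : 0 ≤ B := le_trans (norm_nonneg _) (hB 0 (by omega))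
  have hzℓ : d * B + 2 ≤ ℓ * ‖z‖ := by
    have := lt_of_le_of_lt (le_max_right 1 ((d * B + 2) / ℓ)) hz
    rw [div_lt_iff₀ hℓ0] at this
    linarith
  have heval : p.eval z = p.coeff d * z ^ d + ∑ i ∈ Finset.range d, p.coeff i * z ^ i := by
    rw [Polynomial.eval_eq_sum_range' (by omega : p.natDegree < d + 1), Finset.sum_range_succ]
    ring
  have hsum : ‖∑ i ∈ Finset.range d, p.coeff i * z ^ i‖ ≤ d * B * ‖z‖ ^ (d - 1) := by
    calc ‖∑ i ∈ Finset.range d, p.coeff i * z ^ i‖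
        ≤ ∑ i ∈ Finset.range d, ‖p.coeff i * z ^ i‖ := norm_sum_le _ _
      _ ≤ ∑ i ∈ Finset.range d, B * ‖z‖ ^ (d - 1) := by
          refine Finset.sum_le_sum fun i hi => ?_
          rw [norm_mul, norm_pow]
          have hi' := Finset.mem_range.mp hi
          have h1 : ‖z‖ ^ i ≤ ‖z‖ ^ (d - 1) := pow_le_pow_right₀ hz1.le (by omega)
          have h2 := hB i hi'
          nlinarith [norm_nonneg (p.coeff i), pow_nonneg hz0.le i, pow_nonneg hz0.le (d-1)]
      _ = d * B * ‖z‖ ^ (d - 1) := by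
          rw [Finset.sum_const, Finset.card_range, nsmul_eq_mul]; ring
  have hlead : ℓ * ‖z‖ * ‖z‖ ^ (d - 1) ≤ ‖p.coeff d * z ^ d‖ := by
    rw [norm_mul, norm_pow]
    have : ‖z‖ * ‖z‖ ^ (d - 1) = ‖z‖ ^ d := by
      rw [← pow_succ']; congr 1; omega
    rw [mul_assoc, this]
    exact mul_le_mul_of_nonneg_right hℓ (pow_nonneg hz0.le d)
  have hzd1 : ‖z‖ ≤ ‖z‖ ^ (d - 1) := by
    calc ‖z‖ = ‖z‖ ^ 1 := (pow_one _).symm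
      _ ≤ ‖z‖ ^ (d-1) := pow_le_pow_right₀ hz1.le (by omega)
  have key : ‖p.coeff d * z ^ d‖ - ‖∑ i ∈ Finset.range d, p.coeff i * z ^ i‖ ≤ ‖p.eval z‖ := by
    rw [heval]
    have h := norm_sub_le (p.coeff d * z ^ d + ∑ i ∈ Finset.range d, p.coeff i * z ^ i)
      (∑ i ∈ Finset.range d, p.coeff i * z ^ i)
    simp only [add_sub_cancel_right] at h
    linarith
  have hpow0 : (0:ℝ) ≤ ‖z‖ ^ (d - 1) := pow_nonneg hz0.le _
  nlinarith [mul_le_mul_of_nonneg_right hzℓ hpow0]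

lemma filledJulia_subset_ball {p : Polynomial ℂ} {R : ℝ} (hR : 1 ≤ R)
    (hesc : ∀ z : ℂ, R < ‖z‖ → 2 * ‖z‖ ≤ ‖p.eval z‖) :
    filledJulia p ⊆ Metric.closedBall 0 R := by
  intro z hz
  by_contra hmem
  have hzR : R < ‖z‖ := by
    simpa [Metric.mem_closedBall, dist_eq_norm, not_le] using hmem
  have hiter : ∀ k : ℕ, 2 ^ k * ‖z‖ ≤ ‖(fun w => p.eval w)^[k] z‖ := by
    intro k
    induction k with
    | zero => simp
    | succ k ih =>
      have hRk : R < ‖(fun w => p.eval w)^[k] z‖ := by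
        have h1 : (1:ℝ) ≤ 2 ^ k := one_le_pow₀ (by norm_num)
        nlinarith [norm_nonneg z]
      rw [Function.iterate_succ_apply']
      have := hesc _ hRk
      calc (2:ℝ) ^ (k+1) * ‖z‖ = 2 * (2 ^ k * ‖z‖) := by ring
        _ ≤ 2 * ‖(fun w => p.eval w)^[k] z‖ := by linarith
        _ ≤ _ := this
  obtain ⟨M, hM⟩ := isBounded_iff_forall_norm_le.mp (by exact hz : Bornology.IsBounded (Set.range fun k : ℕ => (fun w => p.eval w)^[k] z))
  obtain ⟨k, hk⟩ := pow_unbounded_of_one_lt M (by norm_num : (1:ℝ) < 2)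
  have := hM _ ⟨k, rfl⟩
  have h1 : (2:ℝ) ^ k ≤ 2 ^ k * ‖z‖ := by nlinarith [pow_pos (show (0:ℝ) < 2 by norm_num) k]
  linarith [hiter k]

lemma eval_unif_conv {d : ℕ} {f : ℕ → Polynomial ℂ} {flim : Polynomial ℂ}
    (hdeg : ∀ n, (f n).natDegree = d) (hdeglim : flim.natDegree = d)
    (hcoeff : ∀ i, Tendsto (fun n => (f n).coeff i) atTop (nhds (flim.coeff i)))
    (M ε : ℝ) (hε : 0 < ε) :
    ∀ᶠ n in atTop, ∀ z : ℂ, ‖z‖ ≤ M → ‖(f n).eval z - flim.eval z‖ ≤ ε := by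
  set M' : ℝ := max M 1 with hM'
  have hM'1 : 1 ≤ M' := le_max_right _ _
  have hM'0 : 0 < M' := lt_of_lt_of_le one_pos hM'1
  set δ : ℝ := ε / ((d + 1) * M' ^ d) with hδ
  have hδ0 : 0 < δ := by positivity
  have hev : ∀ᶠ n in atTop, ∀ i ∈ Finset.range (d + 1),
      ‖(f n).coeff i - flim.coeff i‖ ≤ δ := by
    rw [eventually_all_finset]
    intro i _
    have := (hcoeff i).sub_const (flim.coeff i)
    have h2 := this.norm
    simp only [sub_self, norm_zero] at h2
    filter_upwards [h2.eventually (ge_mem_nhds hδ0)] with n hn using hn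
  filter_upwards [hev] with n hn z hzM
  have hzM' : ‖z‖ ≤ M' := hzM.trans (le_max_left _ _)
  have he1 : (f n).eval z = ∑ i ∈ Finset.range (d + 1), (f n).coeff i * z ^ i :=
    Polynomial.eval_eq_sum_range' (by rw [hdeg n]; omega) z
  have he2 : flim.eval z = ∑ i ∈ Finset.range (d + 1), flim.coeff i * z ^ i :=
    Polynomial.eval_eq_sum_range' (by rw [hdeglim]; omega) z
  rw [he1, he2, ← Finset.sum_sub_distrib]
  calc ‖∑ i ∈ Finset.range (d + 1), ((f n).coeff i * z ^ i - flim.coeff i * z ^ i)‖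
      ≤ ∑ i ∈ Finset.range (d + 1), ‖(f n).coeff i * z ^ i - flim.coeff i * z ^ i‖ :=
        norm_sum_le _ _
    _ ≤ ∑ i ∈ Finset.range (d + 1), δ * M' ^ d := by
        refine Finset.sum_le_sum fun i hi => ?_
        rw [← sub_mul, norm_mul, norm_pow]
        have h1 : ‖z‖ ^ i ≤ M' ^ d := by
          calc ‖z‖ ^ i ≤ M' ^ i := pow_le_pow_left₀ (norm_nonneg _) hzM' i
            _ ≤ M' ^ d := pow_le_pow_right₀ hM'1 (by simpa using Nat.lt_succ_iff.mp (Finset.mem_range.mp hi))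
        have h2 := hn i hi
        nlinarith [norm_nonneg ((f n).coeff i - flim.coeff i), pow_nonneg hM'0.le d,
          pow_nonneg (norm_nonneg z) i]
    _ = (d + 1) * δ * M' ^ d := by
        rw [Finset.sum_const, Finset.card_range, nsmul_eq_mul]; push_cast; ring
    _ = ε := by
        rw [hδ]; field_simp

lemma iter_unif_conv {d : ℕ} {f : ℕ → Polynomial ℂ} {flim : Polynomial ℂ}
    (hdeg : ∀ n, (f n).natDegree = d) (hdeglim : flim.natDegree = d)
    (hcoeff : ∀ i, Tendsto (fun n => (f n).coeff i) atTop (nhds (flim.coeff i))) :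
    ∀ (k : ℕ) (D : Set ℂ), IsCompact D → ∀ ε : ℝ, 0 < ε →
      ∀ᶠ n in atTop, ∀ z ∈ D,
        ‖(fun w => (f n).eval w)^[k] z - (fun w => flim.eval w)^[k] z‖ ≤ ε := by
  intro k
  induction k with
  | zero =>
    intro D _ ε hε
    filter_upwards with n z _
    simpa using hε.le
  | succ k ih =>
    intro D hD ε hε
    set g : ℂ → ℂ := fun w => flim.eval w with hg
    have hDk : IsCompact ((fun w => flim.eval w)^[k] '' D) := hD.image (flim.continuous.iterate k)
    set D₁ : Set ℂ := Metric.cthickening 1 ((fun w => flim.eval w)^[k] '' D) with hD₁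
    have hD₁c : IsCompact D₁ := hDk.cthickening
    have hUC : UniformContinuousOn (fun w => flim.eval w) D₁ :=
      hD₁c.uniformContinuousOn_of_continuous flim.continuous.continuousOn
    rw [Metric.uniformContinuousOn_iff] at hUC
    obtain ⟨δ, hδ0, hδ⟩ := hUC (ε/2) (by positivity)
    obtain ⟨M, hM⟩ := hD₁c.isBounded.exists_norm_le
    have hIH := ih D hD (min (δ/2) (1/2)) (by positivity)
    have hEV := eval_unif_conv hdeg hdeglim hcoeff M (ε/2) (by positivity)
    filter_upwards [hIH, hEV] with n hn hEn z hz
    set w : ℂ := (fun w => flim.eval w)^[k] z with hw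
    set wn : ℂ := (fun w => (f n).eval w)^[k] z with hwn
    have hwD' : w ∈ (fun w => flim.eval w)^[k] '' D := ⟨z, hz, rfl⟩
    have hwD₁ : w ∈ D₁ := Metric.self_subset_cthickening _ hwD'
    have hdist : ‖wn - w‖ ≤ min (δ/2) (1/2) := hn z hz
    have hwnD₁ : wn ∈ D₁ := by
      refine Metric.mem_cthickening_of_dist_le wn w 1 _ hwD' ?_
      rw [dist_eq_norm]
      exact hdist.trans ((min_le_right _ _).trans (by norm_num))
    rw [Function.iterate_succ_apply', Function.iterate_succ_apply']
    have h1 : ‖(f n).eval wn - flim.eval wn‖ ≤ ε/2 := hEn wn (hM wn hwnD₁)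
    have h2 : dist (flim.eval wn) (flim.eval w) < ε/2 := by
      refine hδ wn hwnD₁ w hwD₁ ?_
      rw [dist_eq_norm]
      exact lt_of_le_of_lt (hdist.trans (min_le_left _ _)) (by linarith)
    calc ‖(f n).eval wn - flim.eval w‖
        ≤ ‖(f n).eval wn - flim.eval wn‖ + ‖flim.eval wn - flim.eval w‖ := by
          simpa using norm_sub_le_norm_sub_add_norm_sub ((f n).eval wn) (flim.eval wn) (flim.eval w)
      _ ≤ ε/2 + ε/2 := add_le_add h1 (by rw [← dist_eq_norm]; exact h2.le)
      _ = ε := by ring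

lemma tendsto_norm_bound {u : ℕ → ℂ} {l : ℂ} (h : Tendsto u atTop (nhds l)) :
    ∃ B : ℝ, ∀ n, ‖u n‖ ≤ B := by
  have := h.eventually (Metric.closedBall_mem_nhds l one_pos)
  rw [eventually_atTop] at this
  obtain ⟨N, hN⟩ := this
  refine ⟨max (‖l‖ + 1) ((Finset.range (N + 1)).sup' (Finset.nonempty_range_add_one)
    (fun n => ‖u n‖)), fun n => ?_⟩
  rcases le_or_gt n N with hn | hn
  · exact le_max_of_le_right
      (Finset.le_sup' (fun n => ‖u n‖) (Finset.mem_range.mpr (by omega)))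
  · have h1 : dist (u n) l ≤ 1 := hN n hn.le
    rw [dist_eq_norm] at h1
    have h2 := norm_sub_norm_le (u n) l
    exact le_max_of_le_left (by linarith)

lemma tendsto_pos_lower {u : ℕ → ℝ} {L : ℝ} (h : Tendsto u atTop (nhds L)) (hL : 0 < L)
    (hpos : ∀ n, 0 < u n) : ∃ ℓ : ℝ, 0 < ℓ ∧ ℓ ≤ L ∧ ∀ n, ℓ ≤ u n := by
  have := h.eventually (lt_mem_nhds (show L / 2 < L by linarith))
  rw [eventually_atTop] at this
  obtain ⟨N, hN⟩ := this
  refine ⟨min (L / 2) ((Finset.range (N + 1)).inf' Finset.nonempty_range_add_one u), ?_, ?_, ?_⟩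
  · refine lt_min (by linarith) ?_
    rw [Finset.lt_inf'_iff]
    exact fun i _ => hpos i
  · exact (min_le_left _ _).trans (by linarith)
  · intro n
    rcases le_or_gt n N with hn | hn
    · exact (min_le_right _ _).trans (Finset.inf'_le _ (Finset.mem_range.mpr (by omega)))
    · exact (min_le_left _ _).trans (hN n hn.le).le

lemma filledJulia_mapsTo (p : Polynomial ℂ) :
    Set.MapsTo (fun w => p.eval w) (filledJulia p) (filledJulia p) := by
  intro z hz
  have hz' : Bornology.IsBounded (Set.range fun k : ℕ => (fun w => p.eval w)^[k] z) := hz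
  show Bornology.IsBounded (Set.range fun k : ℕ => (fun w => p.eval w)^[k] (p.eval z))
  refine hz'.subset ?_
  rintro - ⟨k, rfl⟩
  exact ⟨k + 1, Function.iterate_succ_apply (fun w => p.eval w) k z⟩

lemma attract_pack (p : Polynomial ℂ) (x : ℂ) (hfix : p.eval x = x)
    (hattr : ‖(Polynomial.derivative p).eval x‖ < 1) :
    ∃ r > (0:ℝ), ∃ c : ℝ, 0 ≤ c ∧ c < 1 ∧
      (∀ z ∈ Metric.closedBall x r, ‖p.eval z - x‖ ≤ c * ‖z - x‖) ∧
      Metric.closedBall x r ⊆ filledJulia p ∧ x ∈ interior (filledJulia p) := by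
  obtain ⟨r, hr, c, hc0, hc1, hcon⟩ := exists_contracting_ball p x hfix hattr
  have hmaps : Set.MapsTo (fun w => p.eval w) (Metric.closedBall x r) (Metric.closedBall x r) := by
    intro z hz
    have h1 := hcon z hz
    have h2 : ‖z - x‖ ≤ r := by simpa [Metric.mem_closedBall, dist_eq_norm] using hz
    simp only [Metric.mem_closedBall, dist_eq_norm]
    nlinarith [norm_nonneg (z - x)]
  have hsub : Metric.closedBall x r ⊆ filledJulia p :=
    subset_filledJulia_of_mapsTo Metric.isBounded_closedBall hmaps
  refine ⟨r, hr, c, hc0, hc1, hcon, hsub, ?_⟩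
  rw [mem_interior_iff_mem_nhds]
  exact Filter.mem_of_superset (Metric.closedBall_mem_nhds x hr) hsub

lemma attracted_on_component {p : Polynomial ℂ} {x : ℂ} {r c R : ℝ}
    (hr : 0 < r) (hc0 : 0 ≤ c) (hc1 : c < 1)
    (hcon : ∀ z ∈ Metric.closedBall x r, ‖p.eval z - x‖ ≤ c * ‖z - x‖)
    (hR : filledJulia p ⊆ Metric.closedBall 0 R)
    (hx : x ∈ interior (filledJulia p)) :
    ∀ z ∈ connectedComponentIn (interior (filledJulia p)) x,
      Tendsto (fun k : ℕ => (fun w => p.eval w)^[k] z) atTop (nhds x) := by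
  set φ : ℂ → ℂ := fun w => p.eval w with hφ
  set U : Set ℂ := connectedComponentIn (interior (filledJulia p)) x with hU
  have hUopen : IsOpen U := isOpen_interior.connectedComponentIn
  have hUsub : U ⊆ interior (filledJulia p) := connectedComponentIn_subset _ _
  have hUK : U ⊆ filledJulia p := hUsub.trans interior_subset
  have hxU : x ∈ U := mem_connectedComponentIn hx
  have hR0 : 0 ≤ R := by
    have h1 : x ∈ Metric.closedBall (0:ℂ) R := hR (interior_subset hx)
    have := Metric.mem_closedBall.mp h1
    exact le_trans dist_nonneg this
  have hfix : p.eval x = x := by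
    have := hcon x (Metric.mem_closedBall_self hr.le)
    simp only [sub_self, norm_zero, mul_zero] at this
    have h0 : ‖p.eval x - x‖ = 0 := le_antisymm this (norm_nonneg _)
    rwa [norm_eq_zero, sub_eq_zero] at h0
  have hdiffiter : ∀ k : ℕ, Differentiable ℂ (φ^[k]) := by
    intro k
    induction k with
    | zero => simpa using differentiable_id
    | succ k ih =>
      rw [Function.iterate_succ']
      exact p.differentiable.comp ih
  have hiterK : ∀ k : ℕ, Set.MapsTo (φ^[k]) (filledJulia p) (filledJulia p) :=
    fun k => (filledJulia_mapsTo p).iterate k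
  set A : Set ℂ := {z | z ∈ U ∧ Tendsto (fun k : ℕ => φ^[k] z) atTop (nhds x)} with hA
  have hxA : x ∈ A := by
    refine ⟨hxU, ?_⟩
    have : ∀ k : ℕ, φ^[k] x = x := fun k => Function.iterate_fixed hfix k
    simpa [this] using tendsto_const_nhds
  have hAopen : IsOpen A := by
    rw [isOpen_iff_forall_mem_open]
    rintro z ⟨hzU, hzT⟩
    have hballn : Metric.ball x r ∈ nhds x := Metric.ball_mem_nhds x hr
    obtain ⟨k, hk⟩ := (hzT.eventually (hballn)).exists
    refine ⟨U ∩ φ^[k] ⁻¹' Metric.ball x r, ?_, ?_, hzU, hk⟩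
    · rintro y ⟨hyU, hyb⟩
      refine ⟨hyU, ?_⟩
      have hwT := tendsto_iter_of_contract hr.le hc0 hc1 hcon (φ^[k] y)
        (Metric.ball_subset_closedBall hyb)
      have heq : (fun j : ℕ => φ^[j + k] y) = fun j : ℕ => φ^[j] (φ^[k] y) := by
        funext j
        exact Function.iterate_add_apply φ j k y
      rw [← tendsto_add_atTop_iff_nat k]
      exact heq ▸ hwT
    · exact hUopen.inter ((hdiffiter k).continuous.isOpen_preimage _ Metric.isOpen_ball)
  have hAclosed : ∀ z ∈ U, z ∈ closure A → z ∈ A := by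
    intro z hzU hzcl
    obtain ⟨ρ, hρ0, hρU⟩ := Metric.isOpen_iff.mp hUopen z hzU
    set Cs : ℝ := (2 * R + 1) / ρ with hCs
    have hCs0 : 0 < Cs := by positivity
    have hlip : ∀ (k : ℕ), ∀ w ∈ Metric.ball z ρ, dist (φ^[k] w) (φ^[k] z) ≤ Cs * dist w z := by
      intro k w hw
      refine Complex.dist_le_div_mul_dist_of_mapsTo_ball ((hdiffiter k).differentiableOn) ?_ hw
      intro y hy
      have hyK : φ^[k] y ∈ filledJulia p := hiterK k (hUK (hρU hy))
      have hzK : φ^[k] z ∈ filledJulia p := hiterK k (hUK hzU)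
      have h1 : ‖φ^[k] y‖ ≤ R := by simpa [dist_eq_norm] using hR hyK
      have h2 : ‖φ^[k] z‖ ≤ R := by simpa [dist_eq_norm] using hR hzK
      rw [Metric.mem_closedBall]
      apply le_of_lt
      calc dist (φ^[k] y) (φ^[k] z) ≤ ‖φ^[k] y‖ + ‖φ^[k] z‖ := dist_le_norm_add_norm _ _
        _ ≤ 2 * R := by linarith
        _ < 2 * R + 1 := by linarith
    refine ⟨hzU, ?_⟩
    rw [Metric.tendsto_nhds]
    intro ε hε
    set δ : ℝ := min (ρ / 2) (ε / (2 * (Cs + 1))) with hδ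
    have hδ0 : 0 < δ := lt_min (by linarith) (by positivity)
    obtain ⟨z', hz'A, hz'd⟩ := Metric.mem_closure_iff.mp hzcl δ hδ0
    have hz'ball : z' ∈ Metric.ball z ρ := by
      rw [Metric.mem_ball, dist_comm]
      have : δ ≤ ρ / 2 := min_le_left _ _
      linarith [hz'd]
    filter_upwards [hz'A.2.eventually (Metric.ball_mem_nhds x (half_pos hε))] with k hk
    have h1 := hlip k z' hz'ball
    have h2 : dist (φ^[k] z') x < ε / 2 := Metric.mem_ball.mp hk
    have h3 : dist z' z < δ := by rw [dist_comm]; exact hz'd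
    have h4 : Cs * dist z' z < Cs * δ + δ := by nlinarith [dist_nonneg (x := z') (y := z)]
    have h5 : Cs * δ + δ ≤ ε / 2 := by
      have : δ ≤ ε / (2 * (Cs + 1)) := min_le_right _ _
      have h6 : (Cs + 1) * δ ≤ (Cs + 1) * (ε / (2 * (Cs + 1))) := by nlinarith
      have h7 : (Cs + 1) * (ε / (2 * (Cs + 1))) = ε / 2 := by field_simp
      nlinarith
    calc dist (φ^[k] z) x ≤ dist (φ^[k] z) (φ^[k] z') + dist (φ^[k] z') x := dist_triangle _ _ _
      _ < Cs * δ + δ + ε / 2 := by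
          rw [dist_comm (φ^[k] z) (φ^[k] z')]
          linarith
      _ ≤ ε := by linarith
  have hUA : U ⊆ A := by
    have hvopen : IsOpen (closure A)ᶜ := isClosed_closure.isOpen_compl
    have hdisj : Disjoint A (closure A)ᶜ :=
      Set.disjoint_compl_right_iff_subset.mpr subset_closure
    refine IsPreconnected.subset_left_of_subset_union hAopen hvopen hdisj ?_
      ⟨x, hxU, hxA⟩ isPreconnected_connectedComponentIn
    intro z hz
    by_cases h : z ∈ closure A
    · exact Or.inl (hAclosed z hz h)
    · exact Or.inr h
  exact fun z hz => (hUA hz).2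

lemma iterate_image_small {p : Polynomial ℂ} {x : ℂ} {r c ρ : ℝ}
    (hr : 0 < r) (hc0 : 0 ≤ c) (hc1 : c < 1)
    (hcon : ∀ z ∈ Metric.closedBall x r, ‖p.eval z - x‖ ≤ c * ‖z - x‖)
    (hρ0 : 0 < ρ) (hρr : ρ ≤ r)
    {S : Set ℂ} (hS : IsCompact S)
    (hatt : ∀ z ∈ S, Tendsto (fun k : ℕ => (fun w => p.eval w)^[k] z) atTop (nhds x)) :
    ∃ K : ℕ, ∀ z ∈ S, (fun w => p.eval w)^[K] z ∈ Metric.closedBall x ρ := by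
  set φ : ℂ → ℂ := fun w => p.eval w with hφ
  have hcon' : ∀ z ∈ Metric.closedBall x ρ, ‖p.eval z - x‖ ≤ c * ‖z - x‖ :=
    fun z hz => hcon z (Metric.closedBall_subset_closedBall hρr hz)
  have hopen : ∀ m : ℕ, IsOpen (φ^[m] ⁻¹' Metric.ball x ρ) := by
    intro m
    have : Continuous (φ^[m]) := (p.continuous).iterate m
    exact this.isOpen_preimage _ Metric.isOpen_ball
  have hcover : S ⊆ ⋃ m : ℕ, φ^[m] ⁻¹' Metric.ball x ρ := by
    intro z hz
    obtain ⟨m, hm⟩ := ((hatt z hz).eventually (Metric.ball_mem_nhds x hρ0)).exists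
    exact Set.mem_iUnion.mpr ⟨m, hm⟩
  obtain ⟨t, ht⟩ := hS.elim_finite_subcover _ hopen hcover
  refine ⟨t.sup id, ?_⟩
  intro z hz
  obtain ⟨m, hmt, hm⟩ : ∃ m ∈ t, dist (φ^[m] z) x < ρ := by simpa using ht hz
  have hmem : φ^[m] z ∈ Metric.closedBall x ρ := Metric.ball_subset_closedBall hm
  have hKm : m ≤ t.sup id := Finset.le_sup (f := id) hmt
  have : φ^[t.sup id] z = φ^[t.sup id - m] (φ^[m] z) := by
    rw [← Function.iterate_add_apply]
    congr 1
    omega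
  rw [this]
  exact (iter_mem_and_bound hρ0.le hc0 hc1 hcon' _ hmem (t.sup id - m)).1

lemma thick_facts {S : Set ℂ} (hS : IsPreconnected S) {x : ℂ} (hx : x ∈ S) {ε : ℝ}
    (hε : 0 < ε) :
    IsPreconnected (⋃ y ∈ S, Metric.ball y ε) ∧ IsOpen (⋃ y ∈ S, Metric.ball y ε) ∧
      S ⊆ (⋃ y ∈ S, Metric.ball y ε) ∧
      (⋃ y ∈ S, Metric.ball y ε) ⊆ Metric.cthickening ε S := by
  have hSW : S ⊆ ⋃ y ∈ S, Metric.ball y ε :=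
    fun z hz => Set.mem_biUnion hz (Metric.mem_ball_self hε)
  refine ⟨?_, isOpen_biUnion fun y _ => Metric.isOpen_ball, hSW, ?_⟩
  · refine isPreconnected_of_forall x fun y hy => ?_
    obtain ⟨y₀, hy₀S, hy₀⟩ := Set.mem_iUnion₂.mp hy
    refine ⟨S ∪ Metric.ball y₀ ε, ?_, Or.inl hx, Or.inr hy₀, ?_⟩
    · exact Set.union_subset hSW fun z hz => Set.mem_biUnion hy₀S hz
    · exact IsPreconnected.union y₀ hy₀S (Metric.mem_ball_self hε) hS
        (convex_ball y₀ ε).isPreconnected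
  · refine Set.iUnion₂_subset fun y hy z hz => ?_
    exact Metric.mem_cthickening_of_dist_le z y ε S hy (Metric.mem_ball.mp hz).le

lemma exists_good_nbhd {U : Set ℂ} (hUopen : IsOpen U) (hUconn : IsPreconnected U)
    {x : ℂ} (hx : x ∈ U) {C : Set ℂ} (hC : IsCompact C) (hCU : C ⊆ U) :
    ∃ (S : Set ℂ) (ε : ℝ), 0 < ε ∧ IsCompact S ∧ IsPreconnected S ∧ x ∈ S ∧ C ⊆ S ∧
      Metric.cthickening ε S ⊆ U := by
  have hCx : IsCompact (C ∪ {x}) := hC.union isCompact_singleton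
  have hCxU : C ∪ {x} ⊆ U := Set.union_subset hCU (by simpa using hx)
  obtain ⟨δ, hδ0, hδ⟩ := hCx.exists_cthickening_subset_open hUopen hCxU
  have hpc : IsPathConnected U :=
    (hUopen.isConnected_iff_isPathConnected).mp ⟨Set.nonempty_of_mem hx, hUconn⟩
  choose γ hγ using fun i : C => hpc.joinedIn x hx (i : ℂ) (hCU i.2)
  obtain ⟨t, ht⟩ := hC.elim_finite_subcover (fun i : C => Metric.ball (i : ℂ) δ)
    (fun _ => Metric.isOpen_ball)
    (fun z hz => Set.mem_iUnion.mpr ⟨⟨z, hz⟩, Metric.mem_ball_self hδ0⟩)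
  set S : Set ℂ := {x} ∪ ⋃ i ∈ t, (Metric.closedBall (i : ℂ) δ ∪ Set.range (γ i)) with hS_def
  have hball_sub : ∀ i : C, Metric.closedBall (i : ℂ) δ ⊆ U := by
    intro i z hz
    refine hδ (Metric.mem_cthickening_of_dist_le z (i : ℂ) δ (C ∪ {x}) (Or.inl i.2) ?_)
    exact Metric.mem_closedBall.mp hz
  have hrange_sub : ∀ i : C, Set.range (γ i) ⊆ U := by
    rintro i - ⟨τ, rfl⟩
    exact hγ i τ
  have hSU : S ⊆ U := by
    refine Set.union_subset (by simpa using hx) (Set.iUnion₂_subset fun i _ => ?_)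
    exact Set.union_subset (hball_sub i) (hrange_sub i)
  have hScomp : IsCompact S := by
    refine isCompact_singleton.union (t.finite_toSet.isCompact_biUnion fun i _ => ?_)
    exact (isCompact_closedBall _ _).union (isCompact_range (γ i).continuous)
  have hxS : x ∈ S := Or.inl rfl
  have hCS : C ⊆ S := by
    intro z hz
    obtain ⟨i, hit, hiz⟩ : ∃ i ∈ t, z ∈ Metric.ball (i : ℂ) δ := by simpa using ht hz
    exact Or.inr (Set.mem_biUnion hit (Or.inl (Metric.ball_subset_closedBall hiz)))
  have hSconn : IsPreconnected S := by
    refine isPreconnected_of_forall x fun y hy => ?_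
    rcases hy with hy | hy
    · exact ⟨{x}, by simpa using hxS, rfl, hy, isPreconnected_singleton⟩
    · obtain ⟨i, hit, hiy⟩ := Set.mem_iUnion₂.mp hy
      refine ⟨Metric.closedBall (i : ℂ) δ ∪ Set.range (γ i), ?_, ?_, hiy, ?_⟩
      · exact fun z hz => Or.inr (Set.mem_biUnion hit hz)
      · exact Or.inr ⟨0, (γ i).source⟩
      · refine IsPreconnected.union (i : ℂ) (Metric.mem_closedBall_self hδ0.le)
          ⟨1, (γ i).target⟩ (convex_closedBall _ _).isPreconnected
          (isPreconnected_range (γ i).continuous)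
  obtain ⟨ε, hε0, hε⟩ := hScomp.exists_cthickening_subset_open hUopen hSU
  exact ⟨S, ε, hε0, hScomp, hSconn, hxS, hCS, hε⟩

/-- Let `d ≥ 2` and let `f n, f` be degree-`d` polynomials with coefficients
of `f n` converging to those of `f`. Suppose each `f n` has an attracting fixed point `a n`,
`a n → a`, and `a` is an attracting fixed point of `f`; assume the components
`U_{f n}(a n)` and `U_f(a)` are simply connected. Then the pointed disks
`(U_{f n}(a n), a n)` converge to `(U_f(a), a)` in the Carathéodory kernel sense:
(a) `a` lies in the interior of `K(f)` and eventually `a n` lies in the interior of `K(f n)`;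
(b) every compact subset of `U_f(a)` is contained in `U_{f n}(a n)` for large `n`;
(c) every boundary point of `U_f(a)` is a limit of boundary points of `U_{f n}(a n)`. -/
theorem stmt15 (d : ℕ) (hd : 2 ≤ d) (f : ℕ → Polynomial ℂ) (flim : Polynomial ℂ)
    (hdeg : ∀ n, (f n).natDegree = d) (hdeglim : flim.natDegree = d)
    (hcoeff : ∀ i : ℕ, Tendsto (fun n => (f n).coeff i) atTop (nhds (flim.coeff i)))
    (a : ℕ → ℂ) (alim : ℂ)
    (hfix : ∀ n, (f n).eval (a n) = a n)
    (hattr : ∀ n, ‖(Polynomial.derivative (f n)).eval (a n)‖ < 1)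
    (haconv : Tendsto a atTop (nhds alim))
    (hfixlim : flim.eval alim = alim)
    (hattrlim : ‖(Polynomial.derivative flim).eval alim‖ < 1)
    (hsc : ∀ n, SimplyConnectedSpace ↥(fatouComp (f n) (a n)))
    (hsclim : SimplyConnectedSpace ↥(fatouComp flim alim)) :
    (alim ∈ interior (filledJulia flim) ∧
      ∀ᶠ n in atTop, a n ∈ interior (filledJulia (f n))) ∧
    (∀ C : Set ℂ, IsCompact C → C ⊆ fatouComp flim alim →
      ∃ N : ℕ, ∀ n ≥ N, C ⊆ fatouComp (f n) (a n)) ∧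
    (∀ w ∈ frontier (fatouComp flim alim), ∃ ws : ℕ → ℂ,
      (∀ n, ws n ∈ frontier (fatouComp (f n) (a n))) ∧ Tendsto ws atTop (nhds w)) := by
  clear hsc hsclim
  set φ : ℂ → ℂ := fun w => flim.eval w with hφ
  have hintn : ∀ n, a n ∈ interior (filledJulia (f n)) := by
    intro n
    obtain ⟨_, _, _, _, _, _, _, h⟩ := attract_pack (f n) (a n) (hfix n) (hattr n)
    exact h
  obtain ⟨r, hr, c, hc0, hc1, hcon, hsubK, hintlim⟩ := attract_pack flim alim hfixlim hattrlim
  -- uniform escape radius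
  have hL : 0 < ‖flim.coeff d‖ := by
    rw [norm_pos_iff, ← hdeglim]
    show flim.leadingCoeff ≠ 0
    rw [Polynomial.leadingCoeff_ne_zero]
    intro h0
    rw [h0] at hdeglim
    simp at hdeglim
    omega
  have hLn : ∀ n, 0 < ‖(f n).coeff d‖ := by
    intro n
    rw [norm_pos_iff, ← hdeg n]
    show (f n).leadingCoeff ≠ 0
    rw [Polynomial.leadingCoeff_ne_zero]
    intro h0
    have h5 := hdeg n
    rw [h0] at h5
    simp at h5
    omega
  obtain ⟨ℓ, hℓ0, hℓL, hℓn⟩ := tendsto_pos_lower ((hcoeff d).norm) hL hLn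
  choose Bc hBc using fun i => tendsto_norm_bound (hcoeff i)
  set B : ℝ := (Finset.range (d + 1)).sup' Finset.nonempty_range_add_one
    (fun i => max (Bc i) ‖flim.coeff i‖) with hB
  have hBsup : ∀ i < d + 1, max (Bc i) ‖flim.coeff i‖ ≤ B := fun i hi =>
    Finset.le_sup' (fun i => max (Bc i) ‖flim.coeff i‖) (Finset.mem_range.mpr hi)
  have hBn : ∀ i < d, ∀ n, ‖(f n).coeff i‖ ≤ B := fun i hi n =>
    (hBc i n).trans ((le_max_left _ _).trans (hBsup i (by omega)))
  have hBlim : ∀ i < d, ‖flim.coeff i‖ ≤ B := fun i hi =>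
    (le_max_right _ _).trans (hBsup i (by omega))
  set R : ℝ := max 1 ((d * B + 2) / ℓ) with hRdef
  have hR1 : 1 ≤ R := le_max_left _ _
  have hescn : ∀ n, filledJulia (f n) ⊆ Metric.closedBall 0 R := by
    intro n
    refine filledJulia_subset_ball hR1 fun z hz => ?_
    exact escape_bound hd (hdeg n) hℓ0 (hℓn n) (fun i hi => hBn i hi n) hz
  have hesclim : filledJulia flim ⊆ Metric.closedBall 0 R := by
    refine filledJulia_subset_ball hR1 fun z hz => ?_
    exact escape_bound hd hdeglim hℓ0 hℓL hBlim hz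
  have hatt := attracted_on_component hr hc0 hc1 hcon hesclim hintlim
  have hUopen : IsOpen (fatouComp flim alim) := isOpen_interior.connectedComponentIn
  -- key: part (b) as eventually
  have key : ∀ C : Set ℂ, IsCompact C → C ⊆ fatouComp flim alim →
      ∀ᶠ n in atTop, C ⊆ fatouComp (f n) (a n) := by
    intro C hC hCU
    obtain ⟨S, ε, hε0, hScomp, hSconn, hxS, hCS, hthick⟩ :=
      exists_good_nbhd hUopen isPreconnected_connectedComponentIn
        (mem_connectedComponentIn hintlim) hC hCU
    have hDcomp : IsCompact (Metric.cthickening ε S) := hScomp.cthickening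
    obtain ⟨K, hK⟩ := iterate_image_small hr hc0 hc1 hcon
      (show (0:ℝ) < r / 8 by linarith) (by linarith) hDcomp
      (fun z hz => hatt z (hthick hz))
    obtain ⟨hWconn, hWopen, hSW, hWD⟩ := thick_facts hSconn hxS hε0
    have hE1 : ∀ᶠ n in atTop, dist (a n) alim < min ((1 - c) * r / 8) ε :=
      Metric.tendsto_nhds.mp haconv _ (lt_min (by nlinarith) hε0)
    have hE2 := eval_unif_conv hdeg hdeglim hcoeff (‖alim‖ + r) ((1 - c) * r / 8)
      (by nlinarith)
    have hE3 := iter_unif_conv hdeg hdeglim hcoeff K (Metric.cthickening ε S) hDcomp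
      (r / 8) (by linarith)
    filter_upwards [hE1, hE2, hE3] with n h1 h2 h3
    have h1a : ‖a n - alim‖ ≤ (1 - c) * r / 8 := by
      rw [← dist_eq_norm]
      exact (lt_min_iff.mp h1).1.le
    -- invariant ball for f n
    have hball_inv : Set.MapsTo (fun w => (f n).eval w)
        (Metric.closedBall (a n) (r / 2)) (Metric.closedBall (a n) (r / 2)) := by
      intro z hz
      have hza : ‖z - a n‖ ≤ r / 2 := by
        rw [← dist_eq_norm]; exact Metric.mem_closedBall.mp hz
      have hzal : ‖z - alim‖ ≤ r / 2 + (1 - c) * r / 8 := by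
        calc ‖z - alim‖ ≤ ‖z - a n‖ + ‖a n - alim‖ := by
              simpa using norm_sub_le_norm_sub_add_norm_sub z (a n) alim
          _ ≤ _ := add_le_add hza h1a
      have hzr : z ∈ Metric.closedBall alim r := by
        rw [Metric.mem_closedBall, dist_eq_norm]
        nlinarith
      have hznorm : ‖z‖ ≤ ‖alim‖ + r := by
        have := norm_sub_norm_le z alim
        have h4 : ‖z - alim‖ ≤ r := by nlinarith
        linarith
      have hflim : ‖flim.eval z - alim‖ ≤ c * ‖z - alim‖ := hcon z hzr
      have hfn : ‖(f n).eval z - flim.eval z‖ ≤ (1 - c) * r / 8 := h2 z hznorm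
      rw [Metric.mem_closedBall, dist_eq_norm]
      calc ‖(f n).eval z - a n‖
          ≤ ‖(f n).eval z - flim.eval z‖ + ‖flim.eval z - alim‖ + ‖alim - a n‖ := by
            have t1 := dist_triangle ((f n).eval z) (flim.eval z) (a n)
            have t2 := dist_triangle (flim.eval z) alim (a n)
            simp only [dist_eq_norm] at t1 t2
            linarith
        _ ≤ r / 2 := by
            rw [norm_sub_rev alim (a n)]
            nlinarith [norm_nonneg (z - alim), mul_le_mul_of_nonneg_left hzal hc0,
              mul_nonneg (mul_nonneg (by linarith : (0:ℝ) ≤ 1 - c)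
                (by linarith : (0:ℝ) ≤ 2 - c)) hr.le]
    -- cthickening enters the invariant ball after K steps
    have hDK : Metric.cthickening ε S ⊆ filledJulia (f n) := by
      intro z hz
      have hK1 : ‖(fun w => (f n).eval w)^[K] z - a n‖ ≤ r / 2 := by
        have t1 : ‖(fun w => (f n).eval w)^[K] z - φ^[K] z‖ ≤ r / 8 := h3 z hz
        have t2 : ‖φ^[K] z - alim‖ ≤ r / 8 := by
          rw [← dist_eq_norm]; exact Metric.mem_closedBall.mp (hK z hz)
        have t3 : ‖alim - a n‖ ≤ (1 - c) * r / 8 := by rw [norm_sub_rev]; exact h1a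
        have u1 := norm_sub_le_norm_sub_add_norm_sub ((fun w => (f n).eval w)^[K] z) (φ^[K] z) (a n)
        have u2 := norm_sub_le_norm_sub_add_norm_sub (φ^[K] z) alim (a n)
        nlinarith
      have hmem : (fun w => (f n).eval w)^[K] z ∈ Metric.closedBall (a n) (r / 2) := by
        rw [Metric.mem_closedBall, dist_eq_norm]; exact hK1
      show Bornology.IsBounded (Set.range fun k : ℕ => (fun w => (f n).eval w)^[k] z)
      have hsub2 : (Set.range fun k : ℕ => (fun w => (f n).eval w)^[k] z) ⊆
          ((fun j : ℕ => (fun w => (f n).eval w)^[j] z) '' (Set.Iic K)) ∪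
            Metric.closedBall (a n) (r / 2) := by
        rintro - ⟨k, rfl⟩
        show (fun w => (f n).eval w)^[k] z ∈ _
        rcases le_or_gt k K with hk | hk
        · exact Or.inl ⟨k, hk, rfl⟩
        · refine Or.inr ?_
          have heq : (fun w => (f n).eval w)^[k] z
              = (fun w => (f n).eval w)^[k - K] ((fun w => (f n).eval w)^[K] z) := by
            rw [← Function.iterate_add_apply]
            congr 1
            omega
          rw [heq]
          exact hball_inv.iterate (k - K) hmem
      exact Bornology.IsBounded.subset
        ((((Set.finite_Iic K).image _).isBounded).union Metric.isBounded_closedBall) hsub2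
    have hWint : (⋃ y ∈ S, Metric.ball y ε) ⊆ interior (filledJulia (f n)) :=
      interior_maximal (hWD.trans hDK) hWopen
    have haW : a n ∈ ⋃ y ∈ S, Metric.ball y ε := by
      refine Set.mem_biUnion hxS ?_
      rw [Metric.mem_ball]
      exact lt_of_lt_of_le (lt_min_iff.mp h1).2 (le_refl ε)
    have hWcc : (⋃ y ∈ S, Metric.ball y ε) ⊆
        connectedComponentIn (interior (filledJulia (f n))) (a n) :=
      hWconn.subset_connectedComponentIn haW hWint
    exact hCS.trans (hSW.trans hWcc)
  refine ⟨⟨hintlim, Eventually.of_forall hintn⟩, ?_, ?_⟩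
  · intro C hC hCU
    obtain ⟨N, hN⟩ := eventually_atTop.mp (key C hC hCU)
    exact ⟨N, hN⟩
  -- part (c)
  · intro w hw
    have hUn_open : ∀ n, IsOpen (fatouComp (f n) (a n)) :=
      fun n => isOpen_interior.connectedComponentIn
    have hUn_ne : ∀ n, (fatouComp (f n) (a n)).Nonempty :=
      fun n => ⟨a n, mem_connectedComponentIn (hintn n)⟩
    have hUn_sub : ∀ n, fatouComp (f n) (a n) ⊆ Metric.closedBall 0 R :=
      fun n => (connectedComponentIn_subset _ _).trans (interior_subset.trans (hescn n))
    have hfr_ne : ∀ n, (frontier (fatouComp (f n) (a n))).Nonempty := by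
      intro n
      by_contra h
      rw [Set.not_nonempty_iff_eq_empty] at h
      have hclop : IsClopen (fatouComp (f n) (a n)) := isClopen_iff_frontier_eq_empty.mpr h
      rcases isClopen_iff.mp hclop with h0 | h0
      · exact absurd h0 (Set.nonempty_iff_ne_empty.mp (hUn_ne n))
      · have hmem : ((R + 1 : ℝ) : ℂ) ∈ fatouComp (f n) (a n) := h0 ▸ Set.mem_univ _
        have := hUn_sub n hmem
        rw [Metric.mem_closedBall, dist_zero_right] at this
        have hnorm : ‖((R + 1 : ℝ) : ℂ)‖ = R + 1 := by
          rw [Complex.norm_real, Real.norm_eq_abs, abs_of_pos (by linarith)]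
        rw [hnorm] at this
        linarith
    choose ws hws hwd using fun n =>
      (isClosed_frontier).exists_infDist_eq_dist (hfr_ne n) w
    refine ⟨ws, hws, ?_⟩
    rw [Metric.tendsto_nhds]
    intro ε hε
    by_contra hbad
    rw [not_eventually] at hbad
    have hwcl : w ∈ closure (fatouComp flim alim) := frontier_subset_closure hw
    obtain ⟨u, huU, hud⟩ := Metric.mem_closure_iff.mp hwcl (ε / 2) (by linarith)
    have hkey := key {u} isCompact_singleton (by simpa using huU)
    have hfreq : ∃ᶠ n in atTop, Metric.ball w ε ⊆ filledJulia (f n) := by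
      refine (hbad.and_eventually hkey).mono ?_
      rintro n ⟨hdist, hu⟩
      have huUn : u ∈ fatouComp (f n) (a n) := hu rfl
      have hwsn : ε ≤ dist (ws n) w := not_lt.mp hdist
      have hnofr : ∀ y ∈ Metric.ball w ε, y ∉ frontier (fatouComp (f n) (a n)) := by
        intro y hy hyfr
        have hle : Metric.infDist w (frontier (fatouComp (f n) (a n))) ≤ dist w y :=
          Metric.infDist_le_dist_of_mem hyfr
        rw [hwd n] at hle
        rw [Metric.mem_ball, dist_comm] at hy
        rw [dist_comm] at hle
        linarith
      have huball : u ∈ Metric.ball w ε := by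
        rw [Metric.mem_ball, dist_comm]
        linarith
      have hball : Metric.ball w ε ⊆ fatouComp (f n) (a n) := by
        have hdisj : Disjoint (fatouComp (f n) (a n)) (closure (fatouComp (f n) (a n)))ᶜ :=
          Set.disjoint_compl_right_iff_subset.mpr subset_closure
        refine IsPreconnected.subset_left_of_subset_union (hUn_open n)
          (isClosed_closure.isOpen_compl) hdisj ?_ ⟨u, huball, huUn⟩
          (convex_ball w ε).isPreconnected
        intro y hy
        by_cases hcl : y ∈ closure (fatouComp (f n) (a n))
        · left
          by_contra hyn
          exact hnofr y hy ⟨hcl, by rwa [(hUn_open n).interior_eq]⟩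
        · exact Or.inr hcl
      exact hball.trans ((connectedComponentIn_subset _ _).trans interior_subset)
    have hballK : Metric.ball w ε ⊆ filledJulia flim := by
      intro z hz
      have hbdd : ∀ k : ℕ, ‖φ^[k] z‖ ≤ R + 1 := by
        intro k
        have hconv := iter_unif_conv hdeg hdeglim hcoeff k {z} isCompact_singleton 1 one_pos
        obtain ⟨n, hn1, hn2⟩ := (hfreq.and_eventually hconv).exists
        have hzK : z ∈ filledJulia (f n) := hn1 hz
        have hmem : (fun w => (f n).eval w)^[k] z ∈ filledJulia (f n) :=
          (filledJulia_mapsTo (f n)).iterate k hzK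
        have hR' : ‖(fun w => (f n).eval w)^[k] z‖ ≤ R := by
          have := hescn n hmem
          rwa [Metric.mem_closedBall, dist_zero_right] at this
        have hd2 : ‖(fun w => (f n).eval w)^[k] z - φ^[k] z‖ ≤ 1 := hn2 z rfl
        have := norm_sub_norm_le ((fun w => (f n).eval w)^[k] z) (φ^[k] z)
        have habs := abs_norm_sub_norm_le ((fun w => (f n).eval w)^[k] z) (φ^[k] z)
        have := abs_le.mp habs
        linarith [this.1]
      show Bornology.IsBounded (Set.range fun k : ℕ => (fun w => flim.eval w)^[k] z)
      refine Bornology.IsBounded.subset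
        (Metric.isBounded_closedBall (x := (0 : ℂ)) (r := R + 1)) ?_
      rintro - ⟨k, rfl⟩
      rw [Metric.mem_closedBall, dist_zero_right]
      exact hbdd k
    have hwU : w ∈ fatouComp flim alim := by
      have hint : Metric.ball w ε ⊆ interior (filledJulia flim) :=
        interior_maximal hballK Metric.isOpen_ball
      have huball : u ∈ Metric.ball w ε := by rw [Metric.mem_ball, dist_comm]; linarith
      have h1 : Metric.ball w ε ⊆ connectedComponentIn (interior (filledJulia flim)) u :=
        (convex_ball w ε).isPreconnected.subset_connectedComponentIn huball hint
      have h2 : connectedComponentIn (interior (filledJulia flim)) u = fatouComp flim alim :=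
        (connectedComponentIn_eq huU).symm
      exact h2 ▸ h1 (Metric.mem_ball_self hε)
    have hwint : w ∉ interior (fatouComp flim alim) := hw.2
    rw [hUopen.interior_eq] at hwint
    exact hwint hwU
end

section
/- Let φ : {z ∈ ℂ : |z| ≤ 1} → ℂ be continuous and injective, let h : φ({|z| ≤ 1}) → ℂ be continuous, and let a ∈ ℂ with a ∉ h(φ({|z| = 1})). Suppose there exist continuous functions ρ : [0,1] → (0, ∞) and θ : [0,1] → ℝ such that h(φ(e^{2πit})) − a = ρ(t)·e^{iθ(t)} for all t ∈ [0,1], and suppose θ(1) ≠ θ(0) (i.e. the loop t ↦ h(φ(e^{2πit})) has nonzero winding number about a). Then there exists p ∈ φ({|z| < 1}) with h(p) = a. -/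
open Complex Set

private lemma stmt16_int_val {kreal : ℝ} {k0 : ℤ} (hk : ∃ k : ℤ, kreal = k)
    (h2 : kreal = (k0 : ℝ) + 1/2 ∨ kreal = (k0 : ℝ) - 1/2) : False := by
  obtain ⟨k, rfl⟩ := hk
  rcases h2 with h2 | h2
  · have h3 : ((2 * k : ℤ) : ℝ) = ((2 * k0 + 1 : ℤ) : ℝ) := by push_cast; linarith
    have := Int.cast_injective h3; omega
  · have h3 : ((2 * k : ℤ) : ℝ) = ((2 * k0 - 1 : ℤ) : ℝ) := by push_cast; linarith
    have := Int.cast_injective h3; omega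

/-- Core lemma: a continuous nonvanishing function on the closed disc has a
boundary loop with zero winding: any continuous polar angle returns to its start. -/
private lemma stmt16_core (g : ℂ → ℂ)
    (hgc : ContinuousOn g {z : ℂ | ‖z‖ ≤ 1})
    (hgne : ∀ z : ℂ, ‖z‖ ≤ 1 → g z ≠ 0)
    (ρ θ : ℝ → ℝ) (hθ : ContinuousOn θ (Set.Icc 0 1))
    (hρpos : ∀ t ∈ Set.Icc (0 : ℝ) 1, 0 < ρ t)
    (heq : ∀ t ∈ Set.Icc (0 : ℝ) 1,
      g (Complex.exp ((2 * Real.pi * t : ℝ) * Complex.I))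
        = (ρ t : ℂ) * Complex.exp ((θ t : ℝ) * Complex.I)) :
    θ 1 = θ 0 := by
  set D : Set ℂ := {z : ℂ | ‖z‖ ≤ 1} with hD
  have hDeq : D = Metric.closedBall (0 : ℂ) 1 := by
    ext z; simp [hD, mem_closedBall_zero_iff]
  have hDc : IsCompact D := hDeq ▸ isCompact_closedBall 0 1
  have h0D : (0 : ℂ) ∈ D := by simp [hD]
  -- minimum of ‖g‖ on D
  obtain ⟨z₀, hz₀D, hz₀⟩ := hDc.exists_isMinOn ⟨0, h0D⟩ hgc.norm
  set m : ℝ := ‖g z₀‖ with hm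
  have hmpos : 0 < m := norm_pos_iff.mpr (hgne z₀ hz₀D)
  have hmle : ∀ z ∈ D, m ≤ ‖g z‖ := fun z hz => hz₀ hz
  -- uniform continuity
  have hu : UniformContinuousOn g D := hDc.uniformContinuousOn_of_continuous hgc
  rw [Metric.uniformContinuousOn_iff] at hu
  obtain ⟨δ, hδpos, hδ⟩ := hu m hmpos
  obtain ⟨n, hn⟩ := exists_nat_one_div_lt hδpos
  set N : ℕ := n + 1 with hN
  have hNpos : (0 : ℝ) < N := by positivity
  -- the circle parametrization
  set c : ℝ → ℂ := fun t => Complex.exp ((2 * Real.pi * t : ℝ) * Complex.I) with hcdef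
  have hcn : ∀ t, ‖c t‖ = 1 := fun t => Complex.norm_exp_ofReal_mul_I _
  have hccont : Continuous c := by
    apply Complex.continuous_exp.comp
    exact (Complex.continuous_ofReal.comp (by continuity)).mul continuous_const
  -- radial points
  set z : ℕ → ℝ → ℂ := fun k t => ((k : ℝ) / N) • c t with hzdef
  have hzD : ∀ k : ℕ, k ≤ N → ∀ t : ℝ, z k t ∈ D := by
    intro k hk t
    have : ‖z k t‖ = (k : ℝ) / N := by
      rw [hzdef]; rw [norm_smul, hcn, mul_one, Real.norm_of_nonneg (by positivity)]
    simp only [hD, Set.mem_setOf_eq, this]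
    rw [div_le_one hNpos]
    exact_mod_cast hk
  have hzcont : ∀ k : ℕ, Continuous fun t => z k t := fun k => by exact hccont.const_smul ((k : ℝ) / N)
  have hgzcont : ∀ k : ℕ, k ≤ N → Continuous fun t => g (z k t) := by
    intro k hk
    rw [← continuousOn_univ]
    exact hgc.comp (hzcont k).continuousOn fun t _ => hzD k hk t
  have hgzne : ∀ k : ℕ, k ≤ N → ∀ t : ℝ, g (z k t) ≠ 0 :=
    fun k hk t => hgne _ (hzD k hk t)
  -- the ratio functions
  set q : ℕ → ℝ → ℂ := fun k t => g (z (k + 1) t) / g (z k t) with hqdef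
  have hqnear : ∀ k : ℕ, k < N → ∀ t : ℝ, ‖q k t - 1‖ < 1 := by
    intro k hk t
    have hk1 : k + 1 ≤ N := hk
    have hkN : k ≤ N := le_of_lt hk
    have hdist : dist (z (k + 1) t) (z k t) < δ := by
      have : z (k + 1) t - z k t = ((1 : ℝ) / N) • c t := by
        rw [hzdef]; rw [← sub_smul]; push_cast; ring_nf
      rw [dist_eq_norm, this, norm_smul, hcn, mul_one, Real.norm_of_nonneg (by positivity)]
      have h1N : (1 : ℝ) / N = 1 / (n + 1 : ℝ) := by rw [hN]; push_cast; ring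
      rw [h1N]; exact hn
    have hgd : ‖g (z (k + 1) t) - g (z k t)‖ < m := by
      have := hδ _ (hzD _ hk1 t) _ (hzD _ hkN t) hdist
      rwa [dist_eq_norm] at this
    have hden : m ≤ ‖g (z k t)‖ := hmle _ (hzD _ hkN t)
    have hdenne : g (z k t) ≠ 0 := hgzne _ hkN t
    have : q k t - 1 = (g (z (k + 1) t) - g (z k t)) / g (z k t) := by
      simp only [hqdef]; rw [sub_div, div_self hdenne]
    rw [this, norm_div, div_lt_one (lt_of_lt_of_le hmpos hden)]
    exact lt_of_lt_of_le hgd hden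
  have hqslit : ∀ k : ℕ, k < N → ∀ t : ℝ, q k t ∈ Complex.slitPlane := by
    intro k hk t
    have h1 := hqnear k hk t
    rw [Complex.mem_slitPlane_iff]
    left
    have : |(q k t - 1).re| ≤ ‖q k t - 1‖ := Complex.abs_re_le_norm _
    have h2 : |(q k t).re - 1| < 1 := by
      calc |(q k t).re - 1| = |(q k t - 1).re| := by simp
        _ ≤ ‖q k t - 1‖ := this
        _ < 1 := h1
    have := abs_lt.mp h2
    linarith [this.1]
  have hqcont : ∀ k : ℕ, k < N → Continuous fun t => q k t := by
    intro k hk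
    exact (hgzcont (k + 1) hk).div (hgzcont k (le_of_lt hk)) (hgzne k (le_of_lt hk))
  -- the logarithm
  set Λ : ℝ → ℂ := fun t => Complex.log (g 0) +
      ∑ k ∈ Finset.range N, Complex.log (q k t) with hΛdef
  have hΛcont : Continuous Λ := by
    apply continuous_const.add
    apply continuous_finset_sum
    intro k hk
    rw [← continuousOn_univ]
    exact (hqcont k (Finset.mem_range.mp hk)).continuousOn.clog
      fun t _ => hqslit k (Finset.mem_range.mp hk) t
  -- exp Λ = g ∘ c
  have hexpΛ : ∀ t : ℝ, Complex.exp (Λ t) = g (c t) := by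
    intro t
    have key : ∀ j : ℕ, j ≤ N → Complex.exp (Complex.log (g 0) +
        ∑ k ∈ Finset.range j, Complex.log (q k t)) = g (z j t) := by
      intro j
      induction j with
      | zero =>
        intro _
        simp only [Finset.range_zero, Finset.sum_empty, add_zero]
        rw [Complex.exp_log (hgne 0 (by simp [hD]))]
        congr 1
        rw [hzdef]; simp
      | succ j ih =>
        intro hj
        have hjN : j ≤ N := le_of_lt hj
        have hjltN : j < N := hj
        rw [Finset.sum_range_succ, ← add_assoc, Complex.exp_add, ih hjN,
          Complex.exp_log (by
            rw [hqdef]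
            exact div_ne_zero (hgzne _ hjltN t) (hgzne _ hjN t))]
        rw [hqdef, mul_comm, div_mul_cancel₀ _ (hgzne _ hjN t)]
    have := key N le_rfl
    rw [hΛdef]
    rw [this]
    congr 1
    rw [hzdef]
    simp [div_self (ne_of_gt hNpos)]
  -- integer-valued winding discrepancy
  set f : ℝ → ℝ := fun t => ((Λ t).im - θ t) / (2 * Real.pi) with hfdef
  have hπ : (0 : ℝ) < 2 * Real.pi := by positivity
  have hfint : ∀ t ∈ Set.Icc (0 : ℝ) 1, ∃ k : ℤ, f t = k := by
    intro t ht
    have h1 : Complex.exp (Λ t) = (ρ t : ℂ) * Complex.exp ((θ t : ℝ) * Complex.I) :=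
      (hexpΛ t).trans (heq t ht)
    have h2 : (ρ t : ℂ) * Complex.exp ((θ t : ℝ) * Complex.I)
        = Complex.exp ((Real.log (ρ t) : ℝ) + (θ t : ℝ) * Complex.I) := by
      rw [Complex.exp_add, ← Complex.ofReal_exp, Real.exp_log (hρpos t ht)]
    rw [h2, Complex.exp_eq_exp_iff_exists_int] at h1
    obtain ⟨k, hk⟩ := h1
    refine ⟨k, ?_⟩
    have hk' : Λ t = (Real.log (ρ t) : ℂ)
        + ((θ t + k * (2 * Real.pi) : ℝ) : ℂ) * Complex.I := by
      rw [hk]; push_cast; ring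
    have him : (Λ t).im = θ t + k * (2 * Real.pi) := by rw [hk']; simp
    show ((Λ t).im - θ t) / (2 * Real.pi) = (k : ℝ)
    rw [him]
    field_simp; ring
  -- Λ 1 = Λ 0
  have hc01 : c 1 = c 0 := by
    rw [hcdef]
    simp only [mul_one, mul_zero]
    rw [show ((2 * Real.pi : ℝ) : ℂ) * Complex.I = 2 * Real.pi * Complex.I by push_cast; ring]
    rw [Complex.exp_two_pi_mul_I]
    simp
  have hΛ01 : Λ 1 = Λ 0 := by
    rw [hΛdef]
    simp only [hqdef, hzdef, hc01]
  -- conclude by contradiction via IVT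
  by_contra hne
  have hf10 : f 1 - f 0 = (θ 0 - θ 1) / (2 * Real.pi) := by
    show ((Λ 1).im - θ 1) / (2 * Real.pi) - ((Λ 0).im - θ 0) / (2 * Real.pi) = _
    rw [hΛ01]; ring
  obtain ⟨k₀, hk₀⟩ := hfint 0 (by norm_num)
  obtain ⟨k₁, hk₁⟩ := hfint 1 (by norm_num)
  have hkne : (k₀ : ℝ) ≠ (k₁ : ℝ) := by
    intro hcontra
    apply hne
    have : f 1 - f 0 = 0 := by rw [hk₀, hk₁, hcontra]; ring
    rw [hf10] at this
    have := (div_eq_zero_iff.mp this).resolve_right (ne_of_gt hπ)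
    linarith
  have hIVT := intermediate_value_uIcc
    (f := f) (a := (0:ℝ)) (b := 1) (by
      rw [Set.uIcc_of_le (zero_le_one)]
      apply ContinuousOn.div
      · exact (Complex.continuous_im.comp hΛcont).continuousOn.sub hθ
      · exact continuousOn_const
      · intro x _; exact ne_of_gt hπ)
  rcases lt_or_gt_of_ne hkne with hlt | hlt
  · -- k₀ < k₁ : take v = k₀ + 1/2
    have hk01 : (k₀ : ℝ) + 1 ≤ (k₁ : ℝ) := by exact_mod_cast Int.cast_lt.mp hlt
    have hv : (k₀ : ℝ) + 1/2 ∈ Set.uIcc (f 0) (f 1) := by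
      rw [hk₀, hk₁]
      apply Set.mem_uIcc.mpr
      left; constructor <;> linarith
    obtain ⟨t, htm, htv⟩ := hIVT hv
    rw [Set.uIcc_of_le zero_le_one] at htm
    exact stmt16_int_val (hfint t htm) (Or.inl htv)
  · have hk01 : (k₁ : ℝ) + 1 ≤ (k₀ : ℝ) := by
      have : k₁ < k₀ := Int.cast_lt.mp hlt
      exact_mod_cast this
    have hv : (k₀ : ℝ) - 1/2 ∈ Set.uIcc (f 0) (f 1) := by
      rw [hk₀, hk₁]
      apply Set.mem_uIcc.mpr
      right; constructor <;> linarith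
    obtain ⟨t, htm, htv⟩ := hIVT hv
    rw [Set.uIcc_of_le zero_le_one] at htm
    exact stmt16_int_val (hfint t htm) (Or.inr htv)

/-- Let `φ` be continuous and injective on the closed unit disc, `h`
continuous on its image, and `a ∉ h(φ(unit circle))`. If the loop
`t ↦ h(φ(e^{2πit}))` admits a continuous polar decomposition
`h(φ(e^{2πit})) − a = ρ(t)·e^{iθ(t)}` with `ρ > 0` and `θ(1) ≠ θ(0)` (nonzero winding
number about `a`), then `a` is attained by `h` at a point of `φ(open unit disc)`. -/
theorem stmt16 (φ : ℂ → ℂ)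
    (hφc : ContinuousOn φ {z : ℂ | ‖z‖ ≤ 1})
    (hφi : Set.InjOn φ {z : ℂ | ‖z‖ ≤ 1})
    (h : ℂ → ℂ) (hhc : ContinuousOn h (φ '' {z : ℂ | ‖z‖ ≤ 1}))
    (a : ℂ) (ha : a ∉ h '' (φ '' {z : ℂ | ‖z‖ = 1}))
    (ρ θ : ℝ → ℝ)
    (hρ : ContinuousOn ρ (Set.Icc 0 1)) (hθ : ContinuousOn θ (Set.Icc 0 1))
    (hρpos : ∀ t ∈ Set.Icc (0 : ℝ) 1, 0 < ρ t)
    (heq : ∀ t ∈ Set.Icc (0 : ℝ) 1,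
      h (φ (Complex.exp ((2 * Real.pi * t : ℝ) * Complex.I))) - a
        = (ρ t : ℂ) * Complex.exp ((θ t : ℝ) * Complex.I))
    (hwind : θ 1 ≠ θ 0) :
    ∃ p ∈ φ '' {z : ℂ | ‖z‖ < 1}, h p = a := by
  by_contra hcon
  push_neg at hcon
  set g : ℂ → ℂ := fun z => h (φ z) - a with hg
  have hgc : ContinuousOn g {z : ℂ | ‖z‖ ≤ 1} :=
    (hhc.comp hφc (Set.mapsTo_image _ _)).sub continuousOn_const
  have hgne : ∀ z : ℂ, ‖z‖ ≤ 1 → g z ≠ 0 := by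
    intro w hw h0
    have hhw : h (φ w) = a := by rwa [hg, sub_eq_zero] at h0
    rcases lt_or_eq_of_le hw with h1 | h1
    · exact hcon (φ w) ⟨w, h1, rfl⟩ hhw
    · exact ha ⟨φ w, ⟨w, h1, rfl⟩, hhw⟩
  exact hwind (stmt16_core g hgc hgne ρ θ hθ hρpos heq)
end

section
/- Let φ_n : 𝔻 → ℂ be injective holomorphic functions with φ_n(0) = 0 for all n. Suppose there exist points w_n ∈ ℂ with w_n ∉ φ_n(𝔻) for each n and w_n → 0 as n → ∞. Then φ_n converges to the constant function 0 uniformly on every compact subset of 𝔻. -/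
open Filter Metric Set Complex Real

/-- Quadratic remainder bound via two dslopes. -/
lemma quad_bound17 {u : ℂ → ℂ} {δ M : ℝ} (hδ : 0 < δ)
    (hu : DifferentiableOn ℂ u (ball 0 δ)) (h0 : u 0 = 0)
    (hM : ∀ z ∈ ball (0:ℂ) δ, ‖u z‖ ≤ M) :
    ‖deriv u 0‖ ≤ (2*M+1)/δ ∧
      ∀ z ∈ ball (0:ℂ) δ, ‖u z - deriv u 0 * z‖ ≤ 3*(2*M+1)*‖z‖^2/δ^2 := by
  have hball : (0:ℂ) ∈ ball (0:ℂ) δ := mem_ball_self hδ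
  have hM0 : 0 ≤ M := le_trans (norm_nonneg _) (hM 0 hball)
  set Q : ℝ := 2*M+1 with hQ
  have hQpos : 0 < Q := by positivity
  -- first dslope
  have hmaps : MapsTo u (ball 0 δ) (ball (u 0) Q) := by
    intro z hz
    rw [mem_ball, h0, dist_zero_right]
    exact lt_of_le_of_lt (hM z hz) (by linarith)
  have hv : ∀ z ∈ ball (0:ℂ) δ, ‖dslope u 0 z‖ ≤ Q/δ := fun z hz =>
    Complex.norm_dslope_le_div_of_mapsTo_ball hu (hmaps.mono_right ball_subset_closedBall) hz
  set v := dslope u 0 with hv_def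
  have hvdiff : DifferentiableOn ℂ v (ball 0 δ) :=
    (differentiableOn_dslope (ball_mem_nhds _ hδ)).mpr hu
  have hb : v 0 = deriv u 0 := dslope_same u 0
  have hbnorm : ‖deriv u 0‖ ≤ Q/δ := hb ▸ hv 0 hball
  refine ⟨hbnorm, ?_⟩
  -- second dslope
  have hmaps2 : MapsTo v (ball 0 δ) (ball (v 0) (3*Q/δ)) := by
    intro z hz
    rw [mem_ball, dist_eq_norm]
    have h1 : ‖v z - v 0‖ ≤ ‖v z‖ + ‖v 0‖ := norm_sub_le _ _
    have h2 : ‖v z‖ ≤ Q/δ := hv z hz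
    have h3 : ‖v 0‖ ≤ Q/δ := hv 0 hball
    have : Q/δ + Q/δ < 3*Q/δ := by
      rw [← add_div, div_lt_div_iff_of_pos_right hδ]
      linarith
    linarith
  have hw2 : ∀ z ∈ ball (0:ℂ) δ, ‖dslope v 0 z‖ ≤ (3*Q/δ)/δ := fun z hz =>
    Complex.norm_dslope_le_div_of_mapsTo_ball hvdiff (hmaps2.mono_right ball_subset_closedBall) hz
  intro z hz
  rcases eq_or_ne z 0 with rfl | hzne
  · simp [h0]
  · have huz : u z = z * v z := by
      rw [hv_def, dslope_of_ne _ hzne]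
      rw [slope_def_field, h0]
      field_simp
      ring
    have hvz : v z = v 0 + z * dslope v 0 z := by
      rw [dslope_of_ne _ hzne, slope_def_field]
      field_simp
      ring
    have : u z - deriv u 0 * z = z^2 * dslope v 0 z := by
      rw [huz, hvz, hb]
      ring
    rw [this, norm_mul, norm_pow]
    have h4 := hw2 z hz
    calc ‖z‖^2 * ‖dslope v 0 z‖ ≤ ‖z‖^2 * ((3*Q/δ)/δ) := by
          gcongr
      _ = 3*Q*‖z‖^2/δ^2 := by ring

/-- If `u` is bounded by `M`, vanishes at 0, and omits `2πi`, then `‖u'(0)‖² ≤ 48π(2M+1)/δ²`. -/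
lemma deriv_bound17 {u : ℂ → ℂ} {δ M : ℝ} (hδ : 0 < δ) (hδ1 : δ ≤ 1)
    (hu : DifferentiableOn ℂ u (ball 0 δ)) (h0 : u 0 = 0)
    (hM : ∀ z ∈ ball (0:ℂ) δ, ‖u z‖ ≤ M)
    (hom : ∀ z ∈ ball (0:ℂ) δ, u z ≠ 2*Real.pi*Complex.I) :
    ‖deriv u 0‖^2 ≤ 48*Real.pi*(2*M+1)/δ^2 := by
  have hπ := Real.pi_pos
  have hball : (0:ℂ) ∈ ball (0:ℂ) δ := mem_ball_self hδ
  have hM0 : 0 ≤ M := le_trans (norm_nonneg _) (hM 0 hball)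
  obtain ⟨hb1, hb2⟩ := quad_bound17 hδ hu h0 hM
  set Q : ℝ := 2*M+1 with hQ
  have hQ1 : (1:ℝ) ≤ Q := by linarith
  have hQpos : 0 < Q := by linarith
  set b : ℝ := ‖deriv u 0‖ with hbdef
  have h2π : ‖(2*(Real.pi:ℝ)*Complex.I : ℂ)‖ = 2*Real.pi := by
    simp only [norm_mul, Complex.norm_ofNat, Complex.norm_I,
      Complex.norm_real, Real.norm_eq_abs, mul_one]
    rw [_root_.abs_of_nonneg hπ.le]
  rcases eq_or_lt_of_le (norm_nonneg (deriv u 0)) with hb0 | hbpos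
  · have hb0' : b = 0 := hb0.symm
    rw [hb0']
    norm_num
    positivity
  -- choose the radius t
  set t : ℝ := b*δ^2/(6*Q) with ht_def
  have htpos : 0 < t := by positivity
  have hbQ : b * δ ≤ Q := by
    calc b * δ ≤ (Q/δ) * δ := by gcongr
      _ = Q := by field_simp
  have htle : t ≤ δ/6 := by
    rw [ht_def, div_le_div_iff₀ (by positivity) (by norm_num : (0:ℝ) < 6)]
    nlinarith
  have htδ : t < δ := by linarith
  -- lower bound for ‖u ζ‖ on the sphere of radius t
  set m : ℝ := b^2*δ^2/(12*Q) with hm_def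
  have hsphere : ∀ ζ : ℂ, ‖ζ‖ = t → m ≤ ‖u ζ‖ := by
    intro ζ hζ
    have hζball : ζ ∈ ball (0:ℂ) δ := by
      rw [mem_ball_zero_iff, hζ]; exact htδ
    have h1 : ‖u ζ - deriv u 0 * ζ‖ ≤ 3*Q*‖ζ‖^2/δ^2 := hb2 ζ hζball
    have h2 : ‖deriv u 0 * ζ‖ = b * t := by rw [norm_mul, hζ]
    have h3 : ‖u ζ‖ ≥ ‖deriv u 0 * ζ‖ - ‖u ζ - deriv u 0 * ζ‖ := by
      have := norm_sub_norm_le (deriv u 0 * ζ) (deriv u 0 * ζ - u ζ)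
      simp only [sub_sub_cancel] at this
      calc ‖deriv u 0 * ζ‖ - ‖u ζ - deriv u 0 * ζ‖
          = ‖deriv u 0 * ζ‖ - ‖deriv u 0 * ζ - u ζ‖ := by rw [norm_sub_rev]
        _ ≤ ‖u ζ‖ := this
    have h4 : 3*Q*‖ζ‖^2/δ^2 = (3*Q*t/δ^2) * t := by rw [hζ]; ring
    have h5 : 3*Q*t/δ^2 = b/2 := by
      rw [ht_def]; field_simp; ring
    have : ‖u ζ‖ ≥ b*t - (b/2)*t := by
      rw [h2] at h3
      rw [h4, h5] at h1
      linarith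
    have hmt : b*t - (b/2)*t = m := by
      rw [ht_def, hm_def]; field_simp; ring
    linarith [hmt ▸ this]
  -- m ≤ 4π by the minimum modulus principle
  have hm4π : m ≤ 4*Real.pi := by
    by_contra hcon
    push_neg at hcon
    set F : ℂ → ℂ := fun ζ => (u ζ - 2*Real.pi*Complex.I)⁻¹ with hF_def
    have hFdiff : DifferentiableOn ℂ F (ball 0 δ) := by
      apply DifferentiableOn.inv
      · exact hu.sub (differentiableOn_const _)
      · intro z hz
        exact sub_ne_zero.mpr (hom z hz)
    have hFc : DiffContOnCl ℂ F (ball 0 t) := by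
      apply DifferentiableOn.diffContOnCl
      apply hFdiff.mono
      rw [closure_ball (0:ℂ) htpos.ne']
      exact closedBall_subset_ball htδ
    have hfront : ∀ ζ ∈ frontier (ball (0:ℂ) t), ‖F ζ‖ ≤ (m - 2*Real.pi)⁻¹ := by
      intro ζ hζ
      rw [frontier_ball (0:ℂ) htpos.ne', mem_sphere_zero_iff_norm] at hζ
      have h1 : m ≤ ‖u ζ‖ := hsphere ζ hζ
      have h3 : m - 2*Real.pi ≤ ‖u ζ - 2*Real.pi*Complex.I‖ := by
        have := norm_sub_norm_le (u ζ) ((2*(Real.pi:ℝ)*Complex.I : ℂ))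
        rw [h2π] at this
        linarith
      rw [hF_def]
      simp only [norm_inv]
      apply inv_anti₀
      · linarith
      · exact h3
    have hmax := Complex.norm_le_of_forall_mem_frontier_norm_le isBounded_ball hFc hfront
      (by rw [closure_ball (0:ℂ) htpos.ne']; exact mem_closedBall_self htpos.le : (0:ℂ) ∈ closure (ball (0:ℂ) t))
    have hF0 : ‖F 0‖ = (2*Real.pi)⁻¹ := by
      rw [hF_def]
      simp only [h0, zero_sub, norm_inv, norm_neg]
      rw [h2π]
    rw [hF0] at hmax
    have h1 : 0 < m - 2*Real.pi := by linarith
    have := (inv_le_inv₀ (by positivity) h1).mp hmax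
    linarith
  -- conclude
  have hmm : b^2*δ^2/(12*Q) ≤ 4*Real.pi := hm_def ▸ hm4π
  rw [div_le_iff₀ (by positivity)] at hmm
  rw [le_div_iff₀ (by positivity)]
  nlinarith [hmm]

set_option maxHeartbeats 1000000 in
/-- Growth bound for an injectivity-log function avoiding its own `2πi`-translates. -/
lemma growth17 {H : ℂ → ℂ} {R : ℝ} (hR0 : 0 < R) (hR1 : R ≤ 1)
    (hH : DifferentiableOn ℂ H (ball 0 R)) (h0 : H 0 = 0)
    (havoid : ∀ z ∈ ball (0:ℂ) R, ∀ z' ∈ ball (0:ℂ) R, H z ≠ H z' + 2*Real.pi*Complex.I)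
    {r : ℝ} (hr0 : 0 ≤ r) (hrR : r < R) {z : ℂ} (hz : ‖z‖ ≤ r) :
    ‖H z‖ ≤ 230400/(R-r)^2 := by
  have hπ := Real.pi_pos
  set M : ℝ → ℝ := fun ρ => sSup ((fun x => ‖H x‖) '' closedBall (0:ℂ) ρ) with hM_def
  have hcont : ∀ ρ, 0 ≤ ρ → ρ < R → ContinuousOn (fun x => ‖H x‖) (closedBall (0:ℂ) ρ) :=
    fun ρ h0ρ hρ => (hH.continuousOn.mono (closedBall_subset_ball hρ)).norm
  have hbdd : ∀ ρ, 0 ≤ ρ → ρ < R → BddAbove ((fun x => ‖H x‖) '' closedBall (0:ℂ) ρ) := by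
    intro ρ h0ρ hρ
    exact ((isCompact_closedBall _ _).image_of_continuousOn (hcont ρ h0ρ hρ)).bddAbove
  have hMle : ∀ ρ, 0 ≤ ρ → ρ < R → ∀ x ∈ closedBall (0:ℂ) ρ, ‖H x‖ ≤ M ρ := by
    intro ρ h0ρ hρ x hx
    exact le_csSup (hbdd ρ h0ρ hρ) (mem_image_of_mem _ hx)
  have hM0 : ∀ ρ, 0 ≤ ρ → ρ < R → 0 ≤ M ρ := by
    intro ρ h0ρ hρ
    have := hMle ρ h0ρ hρ 0 (mem_closedBall_self h0ρ)
    exact le_trans (norm_nonneg _) this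
  have hMmono : ∀ ρ ρ', 0 ≤ ρ → ρ ≤ ρ' → ρ' < R → M ρ ≤ M ρ' := by
    intro ρ ρ' h0ρ hρρ' hρ'
    apply csSup_le (by exact ⟨‖H 0‖, 0, mem_closedBall_self h0ρ, rfl⟩)
    rintro y ⟨x, hx, rfl⟩
    exact hMle ρ' (le_trans h0ρ hρρ') hρ' x (closedBall_subset_closedBall hρρ' hx)
  -- main differential inequality
  have hstar : ∀ ρ ρ', 0 ≤ ρ → ρ < ρ' → ρ' < R → M ρ ≤ M ρ'/2 + 400/(ρ'-ρ)^2 := by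
    intro ρ ρ' h0ρ hρρ' hρ'R
    set δ : ℝ := ρ' - ρ with hδ_def
    have hδpos : 0 < δ := by simp [hδ_def]; linarith
    have hδ1 : δ ≤ 1 := by
      have : δ ≤ ρ' := by simp [hδ_def]; linarith
      linarith
    have h0ρ' : 0 ≤ ρ' := by linarith
    set N : ℝ := M ρ' with hN_def
    have hN0 : 0 ≤ N := hM0 ρ' h0ρ' hρ'R
    -- derivative bound
    have hder : ∀ z0 ∈ closedBall (0:ℂ) ρ,
        ‖deriv H z0‖ ≤ Real.sqrt (48*Real.pi*(2*(2*N)+1)/δ^2) := by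
      intro z0 hz0
      rw [mem_closedBall, dist_zero_right] at hz0
      set u : ℂ → ℂ := fun ζ => H (z0 + ζ) - H z0 with hu_def
      have hmem : ∀ ζ : ℂ, ζ ∈ ball (0:ℂ) δ → z0 + ζ ∈ ball (0:ℂ) R := by
        intro ζ hζ
        rw [mem_ball_zero_iff] at hζ ⊢
        calc ‖z0 + ζ‖ ≤ ‖z0‖ + ‖ζ‖ := norm_add_le _ _
          _ < ρ + δ := by linarith [hζ]
          _ = ρ' := by simp [hδ_def]
          _ < R := hρ'R
      have hmem' : ∀ ζ : ℂ, ζ ∈ ball (0:ℂ) δ → z0 + ζ ∈ closedBall (0:ℂ) ρ' := by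
        intro ζ hζ
        rw [mem_ball_zero_iff] at hζ
        rw [mem_closedBall, dist_zero_right]
        calc ‖z0 + ζ‖ ≤ ‖z0‖ + ‖ζ‖ := norm_add_le _ _
          _ ≤ ρ + δ := by linarith [hζ]
          _ = ρ' := by simp [hδ_def]
      have hz0R : z0 ∈ ball (0:ℂ) R := by
        rw [mem_ball_zero_iff]; linarith
      have huD : ∀ ζ ∈ ball (0:ℂ) δ, HasDerivAt u (deriv H (z0 + ζ)) ζ := by
        intro ζ hζ
        have h1 : HasDerivAt H (deriv H (z0+ζ)) (z0+ζ) :=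
          (hH.differentiableAt (isOpen_ball.mem_nhds (hmem ζ hζ))).hasDerivAt
        have h2 : HasDerivAt (fun ζ : ℂ => z0 + ζ) 1 ζ := (hasDerivAt_id ζ).const_add z0
        have := (h1.comp ζ h2)
        simp only [mul_one] at this
        exact this.sub_const (H z0)
      have hudiff : DifferentiableOn ℂ u (ball 0 δ) :=
        fun ζ hζ => (huD ζ hζ).differentiableAt.differentiableWithinAt
      have hu0 : u 0 = 0 := by simp [hu_def]
      have huM : ∀ ζ ∈ ball (0:ℂ) δ, ‖u ζ‖ ≤ 2*N := by
        intro ζ hζ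
        have h1 : ‖H (z0+ζ)‖ ≤ N := hMle ρ' h0ρ' hρ'R _ (hmem' ζ hζ)
        have h2 : ‖H z0‖ ≤ N := hMle ρ' h0ρ' hρ'R z0
          (closedBall_subset_closedBall hρρ'.le (by rwa [mem_closedBall, dist_zero_right]))
        calc ‖u ζ‖ ≤ ‖H (z0+ζ)‖ + ‖H z0‖ := norm_sub_le _ _
          _ ≤ 2*N := by linarith
      have huom : ∀ ζ ∈ ball (0:ℂ) δ, u ζ ≠ 2*Real.pi*Complex.I := by
        intro ζ hζ hbad
        have : H (z0+ζ) = H z0 + 2*Real.pi*Complex.I := by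
          rw [hu_def] at hbad
          linear_combination hbad
        exact havoid (z0+ζ) (hmem ζ hζ) z0 hz0R this
      have hkey := deriv_bound17 hδpos hδ1 hudiff hu0 huM huom
      have hderu : deriv u 0 = deriv H z0 := by
        have := (huD 0 (mem_ball_self hδpos)).deriv
        simpa using this
      rw [hderu] at hkey
      rw [Real.le_sqrt (norm_nonneg _)]
      · exact hkey
      · apply div_nonneg
        · nlinarith [hN0, hπ.le]
        · positivity
      
    -- mean value theorem
    have hMρ : M ρ ≤ Real.sqrt (48*Real.pi*(2*(2*N)+1)/δ^2) := by
      apply csSup_le (by exact ⟨‖H 0‖, 0, mem_closedBall_self h0ρ, rfl⟩)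
      rintro y ⟨x, hx, rfl⟩
      have hmvt := (convex_closedBall (0:ℂ) ρ).norm_image_sub_le_of_norm_hasDerivWithin_le
        (f := H) (f' := deriv H)
        (fun x hx => by
          have hxH : x ∈ ball (0:ℂ) R := by
            rw [mem_closedBall, dist_zero_right] at hx
            rw [mem_ball_zero_iff]; linarith
          exact ((hH.differentiableAt (isOpen_ball.mem_nhds hxH)).hasDerivAt).hasDerivWithinAt)
        (fun x hx => hder x hx) (mem_closedBall_self h0ρ) hx
      rw [h0, sub_zero, sub_zero] at hmvt
      have hx' : ‖x‖ ≤ ρ := by rwa [mem_closedBall, dist_zero_right] at hx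
      have hρ1 : ρ ≤ 1 := by linarith
      calc ‖H x‖ ≤ Real.sqrt (48*Real.pi*(2*(2*N)+1)/δ^2) * ‖x‖ := hmvt
        _ ≤ Real.sqrt (48*Real.pi*(2*(2*N)+1)/δ^2) * 1 :=
            mul_le_mul_of_nonneg_left (by linarith) (Real.sqrt_nonneg _)
        _ = Real.sqrt (48*Real.pi*(2*(2*N)+1)/δ^2) := mul_one _
    -- AM-GM
    have hfact : 48*Real.pi*(2*(2*N)+1)/δ^2 = ((4*N+1)/4) * (192*Real.pi/δ^2) := by
      field_simp
      ring
    have hX : (0:ℝ) ≤ (4*N+1)/4 := by linarith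
    have hY : (0:ℝ) ≤ 192*Real.pi/δ^2 := by positivity
    have hsqrt : Real.sqrt (48*Real.pi*(2*(2*N)+1)/δ^2) ≤ (4*N+1)/8 + 96*Real.pi/δ^2 := by
      rw [hfact, Real.sqrt_mul hX]
      have hamgm : Real.sqrt ((4*N+1)/4) * Real.sqrt (192*Real.pi/δ^2) ≤
          ((4*N+1)/4 + 192*Real.pi/δ^2)/2 := by
        nlinarith [sq_nonneg (Real.sqrt ((4*N+1)/4) - Real.sqrt (192*Real.pi/δ^2)),
          Real.mul_self_sqrt hX, Real.mul_self_sqrt hY]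
      have heq2 : ((4*N+1)/4 + 192*Real.pi/δ^2)/2 = (4*N+1)/8 + 96*Real.pi/δ^2 := by ring
      linarith
    have hpi4 : Real.pi ≤ 4 := Real.pi_le_four
    have hfin : (4*N+1)/8 + 96*Real.pi/δ^2 ≤ N/2 + 400/δ^2 := by
      have h1 : (4*N+1)/8 = N/2 + 1/8 := by ring
      have h2 : 1/8 + 96*Real.pi/δ^2 ≤ 400/δ^2 := by
        have hδ2 : δ^2 ≤ 1 := by nlinarith
        have : 1/8 ≤ (1/8)/δ^2 := by
          rw [le_div_iff₀ (by positivity)]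
          nlinarith
        have h96 : 96*Real.pi/δ^2 + (1/8)/δ^2 ≤ 400/δ^2 := by
          rw [← add_div, div_le_div_iff₀ (by positivity) (by positivity)]
          nlinarith
        linarith
      linarith
    linarith [hMρ.trans hsqrt]
  -- iteration via sup
  set ρs : ℝ := (r+R)/2 with hρs_def
  have hρsR : ρs < R := by simp [hρs_def]; linarith
  have hrρs : r < ρs := by simp [hρs_def]; linarith
  have hρs1 : ρs ≤ 1 := by linarith
  set v : ℝ → ℝ := fun ρ => (ρs-ρ)^2 * M ρ with hv_def
  set T : ℝ := sSup (v '' Icc r ρs) with hT_def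
  have hvbdd : BddAbove (v '' Icc r ρs) := by
    refine ⟨M ρs, ?_⟩
    rintro y ⟨ρ, hρ, rfl⟩
    obtain ⟨h1, h2⟩ := hρ
    have hM1 : M ρ ≤ M ρs := hMmono ρ ρs (by linarith) h2 hρsR
    have hsq : (ρs-ρ)^2 ≤ 1 := by nlinarith
    have hMρ0 : 0 ≤ M ρ := hM0 ρ (by linarith) (by linarith)
    calc (ρs-ρ)^2 * M ρ ≤ 1 * M ρ := by gcongr
      _ = M ρ := one_mul _
      _ ≤ M ρs := hM1
  have hvne : (v '' Icc r ρs).Nonempty := ⟨v r, r, ⟨le_refl r, hrρs.le⟩, rfl⟩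
  have hvleT : ∀ ρ ∈ Icc r ρs, v ρ ≤ T := fun ρ hρ => le_csSup hvbdd (mem_image_of_mem _ hρ)
  have hT0 : 0 ≤ T := by
    have := hvleT ρs ⟨hrρs.le, le_refl _⟩
    have hvρs : v ρs = 0 := by simp [hv_def]
    linarith [hvρs ▸ this]
  have hkey : ∀ ρ ∈ Icc r ρs, v ρ ≤ (8/9)*T + 6400 := by
    rintro ρ ⟨h1, h2⟩
    rcases eq_or_lt_of_le h2 with heq | hρlt
    · have : v ρ = 0 := by
        simp only [hv_def, heq]
        simp
      rw [this]; linarith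
    · set ρ'' : ℝ := ρ + (ρs-ρ)/4 with hρ''_def
      have hρ''1 : ρ < ρ'' := by simp [hρ''_def]; linarith
      have hρ''2 : ρ'' < ρs := by simp [hρ''_def]; linarith
      have hρ''R : ρ'' < R := by linarith
      have hρ0 : 0 ≤ ρ := by linarith
      have hst := hstar ρ ρ'' hρ0 hρ''1 hρ''R
      have hgap : ρ'' - ρ = (ρs-ρ)/4 := by simp [hρ''_def]
      have hgap2 : ρs - ρ'' = (3/4)*(ρs-ρ) := by simp [hρ''_def]; ring
      have hMρ''0 : 0 ≤ M ρ'' := hM0 ρ'' (by linarith) hρ''R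
      have hvρ'' : v ρ'' ≤ T := hvleT ρ'' ⟨by linarith, hρ''2.le⟩
      have hcalc : v ρ ≤ (8/9) * v ρ'' + 6400 := by
        have e1 : v ρ = (ρs-ρ)^2 * M ρ := rfl
        have e2 : v ρ'' = (ρs-ρ'')^2 * M ρ'' := rfl
        rw [e1, e2, hgap2]
        have hne : (ρs - ρ) ≠ 0 := by linarith
        have hsq : (ρs-ρ)^2 * (400/((ρ''-ρ)^2)) = 6400 := by
          rw [hgap]
          field_simp
          ring
        have h3 : (ρs-ρ)^2 * M ρ ≤ (ρs-ρ)^2 * (M ρ''/2 + 400/(ρ''-ρ)^2) := by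
          have hsq0 : (0:ℝ) ≤ (ρs-ρ)^2 := sq_nonneg _
          exact mul_le_mul_of_nonneg_left hst hsq0
        calc (ρs-ρ)^2 * M ρ ≤ (ρs-ρ)^2 * (M ρ''/2) + (ρs-ρ)^2 * (400/(ρ''-ρ)^2) := by
              rw [← mul_add]; exact h3
          _ = (8/9) * (((3/4)*(ρs-ρ))^2 * M ρ'') + 6400 := by rw [hsq]; ring
      calc v ρ ≤ (8/9) * v ρ'' + 6400 := hcalc
        _ ≤ (8/9)*T + 6400 := by linarith
  have hTle : T ≤ (8/9)*T + 6400 := by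
    apply csSup_le hvne
    rintro y ⟨ρ, hρ, rfl⟩
    exact hkey ρ hρ
  have hT : T ≤ 57600 := by linarith
  -- conclude
  have hvr : v r ≤ 57600 := le_trans (hvleT r ⟨le_refl _, hrρs.le⟩) hT
  have hMr : M r ≤ 230400/(R-r)^2 := by
    have hgap : ρs - r = (R-r)/2 := by simp [hρs_def]; ring
    have hvr' : ((R-r)/2)^2 * M r ≤ 57600 := by
      rw [← hgap]
      exact hvr
    rw [le_div_iff₀ (pow_pos (by linarith : (0:ℝ) < R - r) 2)]
    nlinarith [hvr']
  calc ‖H z‖ ≤ M r := hMle r hr0 hrR z (by rwa [mem_closedBall, dist_zero_right])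
    _ ≤ 230400/(R-r)^2 := hMr

/-- Existence of a holomorphic logarithm on a smaller ball. -/
lemma exists_log17 {g : ℂ → ℂ} (hg : DifferentiableOn ℂ g (ball (0:ℂ) 1))
    (hne : ∀ z ∈ ball (0:ℂ) 1, g z ≠ 0) (hg0 : g 0 = 1) {R : ℝ} (hR : 0 < R) (hR1 : R < 1) :
    ∃ H : ℂ → ℂ, DifferentiableOn ℂ H (ball 0 R) ∧ H 0 = 0 ∧
      ∀ z ∈ ball (0:ℂ) R, Complex.exp (H z) = g z := by
  -- the logarithmic derivative
  set q : ℂ → ℂ := fun z => deriv g z / g z with hq_def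
  have hganal : AnalyticOnNhd ℂ g (ball (0:ℂ) 1) := hg.analyticOnNhd isOpen_ball
  have hg' : DifferentiableOn ℂ (deriv g) (ball (0:ℂ) 1) :=
    hganal.deriv.differentiableOn
  have hqdiff : DifferentiableOn ℂ q (ball (0:ℂ) 1) := hg'.div hg hne
  -- power series of q on radius R₂
  have hRR : (R+1)/2 < 1 := by linarith
  have hRpos : (0:ℝ) < (R+1)/2 := by linarith
  set R₂ : NNReal := ⟨(R+1)/2, by positivity⟩ with hR₂_def
  have hsub : closedBall (0:ℂ) ((R₂:ℝ)) ⊆ ball (0:ℂ) 1 := by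
    apply closedBall_subset_ball
    exact hRR
  have hR₂pos : 0 < R₂ := by
    simp only [hR₂_def]
    exact_mod_cast hRpos
  have hq2 : DifferentiableOn ℂ q (closedBall (0:ℂ) (R₂:ℝ)) := hqdiff.mono hsub
  have hq3 : HasFPowerSeriesOnBall q (cauchyPowerSeries q 0 R₂) 0 R₂ :=
    hq2.hasFPowerSeriesOnBall hR₂pos
  set p := cauchyPowerSeries q 0 (R₂:ℝ) with hp_def
  set H : ℂ → ℂ := fun z => ∑' n : ℕ, (p.coeff n / (n+1)) * z^(n+1) with hH_def
  -- summability of coefficients at radius R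
  have hRlt : (⟨R, hR.le⟩ : NNReal) < R₂ := by
    change R < (R+1)/2; linarith
  have hsumm : Summable (fun n : ℕ => ‖p n‖ * R^n) := by
    have := p.summable_norm_mul_pow (r := ⟨R, hR.le⟩)
      (lt_of_lt_of_le (ENNReal.coe_lt_coe.mpr hRlt) hq3.r_le)
    exact this
  have hsumm' : Summable (fun n : ℕ => ‖p.coeff n‖ * R^n) := by
    simpa [FormalMultilinearSeries.norm_apply_eq_norm_coef] using hsumm
  -- derivative of H
  have Hderiv : ∀ y ∈ ball (0:ℂ) R, HasDerivAt H (q y) y := by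
    intro y hy
    have key : HasDerivAt H (∑' n : ℕ, p.coeff n * y^n) y := by
      refine hasDerivAt_tsum_of_isPreconnected hsumm' isOpen_ball
        (convex_ball (0:ℂ) R).isPreconnected
        (g := fun n z => (p.coeff n / (n+1)) * z^(n+1))
        (g' := fun n z => p.coeff n * z^n) ?_ ?_ (mem_ball_self hR) ?_ hy
      · intro n z _
        have h1 : HasDerivAt (fun z : ℂ => z^(n+1)) ((n+1 : ℕ) * z^n) z := by
          simpa using hasDerivAt_pow (n+1) z
        have := h1.const_mul (p.coeff n / (n+1))
        convert this using 1
        have hn1 : ((n:ℂ)+1) ≠ 0 := Nat.cast_add_one_ne_zero n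
        · exact rfl
        · push_cast
          field_simp
      · intro n z hz
        rw [mem_ball_zero_iff] at hz
        have hzR : ‖z‖ ≤ R := hz.le
        rw [norm_mul, norm_pow]
        gcongr
      · apply Summable.congr summable_zero
        intro n; simp
    have : (∑' n : ℕ, p.coeff n * y^n) = q y := by
      have hylt : ‖y‖ < ((R₂:ℝ)) := by
        have h1 : ‖y‖ < R := by simpa [mem_ball_zero_iff] using hy
        have h2 : R < ((R₂:ℝ)) := by change R < (R+1)/2; linarith
        linarith
      have hy2 : y ∈ EMetric.ball (0:ℂ) R₂ := by
        change edist y 0 < (R₂ : ENNReal)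
        rw [edist_zero_right]
        exact_mod_cast hylt
      have := (hq3.hasSum (y := y) (by exact hy2)).tsum_eq
      rw [zero_add] at this
      rw [← this]
      congr 1
      ext n
      rw [FormalMultilinearSeries.apply_eq_pow_smul_coeff]
      simp [mul_comm]
    rwa [this] at key
  have HdiffOn : DifferentiableOn ℂ H (ball (0:ℂ) R) := fun z hz =>
    ((Hderiv z hz).differentiableAt).differentiableWithinAt
  have H0 : H 0 = 0 := by
    simp [hH_def]
  refine ⟨H, HdiffOn, H0, ?_⟩
  -- g * exp(-H) is constant
  have key : ∀ z ∈ ball (0:ℂ) R, g z * Complex.exp (-H z) = 1 := by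
    have hconst : ∀ z ∈ closedBall (0:ℂ) 0 ∪ ball (0:ℂ) R, True := fun _ _ => trivial
    have hder : ∀ z ∈ ball (0:ℂ) R,
        HasDerivWithinAt (fun z => g z * Complex.exp (-H z)) 0 (ball (0:ℂ) R) z := by
      intro z hz
      have hz1 : z ∈ ball (0:ℂ) 1 := ball_subset_ball hR1.le hz
      have hgz : HasDerivAt g (deriv g z) z :=
        (hg.differentiableAt (isOpen_ball.mem_nhds hz1)).hasDerivAt
      have hHz : HasDerivAt H (q z) z := Hderiv z hz
      have hexp : HasDerivAt (fun z => Complex.exp (-H z)) (Complex.exp (-H z) * (-q z)) z :=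
        (hHz.neg).cexp
      have := hgz.mul hexp
      have heq : deriv g z * Complex.exp (-H z) + g z * (Complex.exp (-H z) * (-q z)) = 0 := by
        have hgz0 : g z ≠ 0 := hne z hz1
        simp only [hq_def]
        field_simp
        ring
      rw [heq] at this
      exact this.hasDerivWithinAt
    intro z hz
    have := (convex_ball (0:ℂ) R).norm_image_sub_le_of_norm_hasDerivWithin_le
      (C := 0) hder (fun x _ => by simp) (mem_ball_self hR) hz
    simp only [zero_mul, norm_le_zero_iff, sub_eq_zero] at this
    rw [this, H0, hg0]
    simp
  intro z hz
  have h1 := key z hz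
  rw [Complex.exp_neg] at h1
  field_simp [Complex.exp_ne_zero] at h1
  exact h1.symm

/-- Main quantitative bound: an injective map fixing `0` and omitting `w` satisfies
`‖f z‖ ≤ C(r) ‖w‖` on `‖z‖ ≤ r`. -/
lemma main_bound17 {r : ℝ} (hr0 : 0 ≤ r) (hr1 : r < 1) :
    ∃ C : ℝ, 0 < C ∧ ∀ f : ℂ → ℂ, ∀ w : ℂ, DifferentiableOn ℂ f (ball 0 1) →
      Set.InjOn f (ball (0:ℂ) 1) → f 0 = 0 → (∀ z ∈ ball (0:ℂ) 1, f z ≠ w) →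
      ∀ z ∈ closedBall (0:ℂ) r, ‖f z‖ ≤ C * ‖w‖ := by
  set R : ℝ := (1+r)/2 with hR_def
  have hR0 : 0 < R := by simp [hR_def]; linarith
  have hR1 : R < 1 := by simp [hR_def]; linarith
  have hrR : r < R := by simp [hR_def]; linarith
  set A : ℝ := 230400/(R-r)^2 with hA_def
  refine ⟨1 + Real.exp A, by positivity, ?_⟩
  intro f w hf hinj hf0 hfw z hzr
  have hw0 : w ≠ 0 := by
    intro h
    exact hfw 0 (mem_ball_self one_pos) (by rw [hf0, h])
  set g : ℂ → ℂ := fun z => 1 - f z / w with hg_def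
  have hgdiff : DifferentiableOn ℂ g (ball 0 1) :=
    (differentiableOn_const 1).sub (hf.div_const w)
  have hgne : ∀ z ∈ ball (0:ℂ) 1, g z ≠ 0 := by
    intro z hz hbad
    apply hfw z hz
    have : f z / w = 1 := by
      rw [hg_def] at hbad
      simp only [sub_eq_zero] at hbad
      exact hbad.symm
    field_simp at this
    exact this
  have hg0 : g 0 = 1 := by simp [hg_def, hf0]
  obtain ⟨H, hHdiff, hH0, hHexp⟩ := exists_log17 hgdiff hgne hg0 hR0 hR1
  have havoid : ∀ z ∈ ball (0:ℂ) R, ∀ z' ∈ ball (0:ℂ) R,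
      H z ≠ H z' + 2*Real.pi*Complex.I := by
    intro z hz z' hz' hbad
    have hz1 : z ∈ ball (0:ℂ) 1 := ball_subset_ball hR1.le hz
    have hz'1 : z' ∈ ball (0:ℂ) 1 := ball_subset_ball hR1.le hz'
    have he : Complex.exp (H z) = Complex.exp (H z') := by
      rw [hbad, Complex.exp_add]
      have : Complex.exp (2*Real.pi*Complex.I) = 1 := by
        exact_mod_cast Complex.exp_two_pi_mul_I
      rw [this, mul_one]
    rw [hHexp z hz, hHexp z' hz'] at he
    have hfz : f z = f z' := by
      rw [hg_def] at he
      simp only [sub_right_inj] at he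
      field_simp at he
      exact he
    have : z = z' := hinj hz1 hz'1 hfz
    rw [this] at hbad
    have h2π : (2*Real.pi*Complex.I : ℂ) = 0 := by linear_combination -hbad
    have : (2*Real.pi : ℝ) = 0 := by
      have := congrArg Complex.im h2π
      simpa using this
    linarith [Real.pi_pos]
  have hz' : ‖z‖ ≤ r := by rwa [mem_closedBall, dist_zero_right] at hzr
  have hHbound : ‖H z‖ ≤ A := growth17 hR0 hR1.le hHdiff hH0 havoid hr0 hrR hz'
  have hzR : z ∈ ball (0:ℂ) R := by rw [mem_ball_zero_iff]; linarith
  have hfz : f z = w * (1 - Complex.exp (H z)) := by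
    have := hHexp z hzR
    rw [hg_def] at this
    field_simp at this ⊢
    linear_combination this
  rw [hfz, norm_mul]
  rw [mul_comm]
  apply mul_le_mul_of_nonneg_right _ (norm_nonneg w)
  calc ‖1 - Complex.exp (H z)‖ ≤ ‖(1:ℂ)‖ + ‖Complex.exp (H z)‖ := norm_sub_le _ _
    _ = 1 + Real.exp ((H z).re) := by rw [norm_one, Complex.norm_exp]
    _ ≤ 1 + Real.exp A := by
        gcongr
        calc (H z).re ≤ |(H z).re| := le_abs_self _
          _ ≤ ‖H z‖ := Complex.abs_re_le_norm _
          _ ≤ A := hHbound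

/-- Let `φ n : 𝔻 → ℂ` be injective holomorphic functions with `φ n 0 = 0`.
If there exist points `w n ∉ φ n (𝔻)` with `w n → 0`, then `φ n` converges to the constant
function `0` uniformly on every compact subset of `𝔻`. -/
theorem stmt17 (φ : ℕ → ℂ → ℂ)
    (hhol : ∀ n, DifferentiableOn ℂ (φ n) {z : ℂ | ‖z‖ < 1})
    (hinj : ∀ n, Set.InjOn (φ n) {z : ℂ | ‖z‖ < 1})
    (h0 : ∀ n, φ n 0 = 0)
    (w : ℕ → ℂ) (hw : ∀ n, w n ∉ (φ n) '' {z : ℂ | ‖z‖ < 1})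
    (hwto : Tendsto w atTop (nhds 0)) :
    ∀ K : Set ℂ, IsCompact K → K ⊆ {z : ℂ | ‖z‖ < 1} →
      TendstoUniformlyOn φ (fun _ => 0) atTop K := by
  have hset : {z : ℂ | ‖z‖ < 1} = Metric.ball (0:ℂ) 1 := by
    ext z; simp [Metric.mem_ball, dist_zero_right]
  intro K hK hK1
  rw [hset] at hK1
  obtain ⟨r, hr0, hr1, hKr⟩ : ∃ r : ℝ, 0 ≤ r ∧ r < 1 ∧ K ⊆ closedBall (0:ℂ) r := by
    rcases K.eq_empty_or_nonempty with rfl | hne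
    · exact ⟨0, le_refl _, one_pos, by simp⟩
    · obtain ⟨x0, hx0K, hx0max⟩ := hK.exists_isMaxOn hne continuous_norm.continuousOn
      refine ⟨‖x0‖, norm_nonneg _, by simpa [mem_ball_zero_iff] using hK1 hx0K, ?_⟩
      intro x hx
      rw [mem_closedBall, dist_zero_right]
      exact hx0max hx
  obtain ⟨C, hC, hbound⟩ := main_bound17 hr0 hr1
  rw [Metric.tendstoUniformlyOn_iff]
  intro ε hε
  have hεC : 0 < ε/C := by positivity
  have hwsmall : ∀ᶠ n in atTop, ‖w n‖ < ε/C := by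
    have h1 : Tendsto (fun n => ‖w n‖) atTop (nhds 0) := by
      simpa using hwto.norm
    exact h1.eventually_lt_const hεC
  filter_upwards [hwsmall] with n hn
  intro x hxK
  have hφd : DifferentiableOn ℂ (φ n) (ball (0:ℂ) 1) := hset ▸ hhol n
  have hφi : Set.InjOn (φ n) (ball (0:ℂ) 1) := hset ▸ hinj n
  have hφw : ∀ z ∈ ball (0:ℂ) 1, φ n z ≠ w n := by
    intro z hz hbad
    exact hw n ⟨z, by rw [hset]; exact hz, hbad⟩
  have hb := hbound (φ n) (w n) hφd hφi (h0 n) hφw x (hKr hxK)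
  have : C * ‖w n‖ < ε := by
    have := mul_lt_mul_of_pos_left hn hC
    rwa [mul_div_cancel₀ ε hC.ne'] at this
  calc dist ((fun _ => (0:ℂ)) x) (φ n x) = ‖φ n x‖ := by simp
    _ ≤ C * ‖w n‖ := hb
    _ < ε := this
end

section
/- Let φ_n : 𝔻 → ℂ be holomorphic functions converging locally uniformly on 𝔻 to the constant function 0, and assume sup_n ∫_𝔻 |φ_n'(z)|² dλ(z) < ∞, where λ is 2-dimensional Lebesgue measure. Then there exist a strictly increasing sequence of indices (n_k) and a subset E ⊆ [0, 2π] of full Lebesgue measure such that for every θ ∈ E the radial length ∫_0^1 |φ_{n_k}'(t·e^{iθ})| dt converges to 0 as k → ∞. -/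
open Filter MeasureTheory
open scoped ENNReal NNReal
open Set Real

lemma stmt18_polar (g : ℂ → ℝ≥0∞) (hg : Measurable g) :
    ∫⁻ p in (Set.Ioi (0:ℝ)) ×ˢ Set.Ioo (-Real.pi) Real.pi,
      ENNReal.ofReal p.1 * g (Complex.polarCoord.symm p) = ∫⁻ z, g z := by
  have h1 : ∫⁻ z, g z = ∫⁻ p : ℝ × ℝ, g (Complex.measurableEquivRealProd.symm p) := by
    rw [← MeasureTheory.lintegral_map hg Complex.measurableEquivRealProd.symm.measurable,
      (MeasurePreserving.symm _ Complex.volume_preserving_equiv_real_prod).map_eq]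
  set G : ℝ × ℝ → ℝ≥0∞ := fun p => g (Complex.measurableEquivRealProd.symm p) with hG
  set B : ℝ × ℝ → ℝ × ℝ →L[ℝ] ℝ × ℝ := fun p =>
    LinearMap.toContinuousLinearMap (Matrix.toLin (Module.Basis.finTwoProd ℝ) (Module.Basis.finTwoProd ℝ)
      !![Real.cos p.2, -p.1 * Real.sin p.2; Real.sin p.2, p.1 * Real.cos p.2]) with hB
  have B_det : ∀ p, (B p).det = p.1 := by
    intro p
    conv_rhs => rw [← one_mul p.1, ← Real.cos_sq_add_sin_sq p.2]
    simp only [hB, neg_mul, LinearMap.det_toContinuousLinearMap, LinearMap.det_toLin,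
      Matrix.det_fin_two_of, sub_neg_eq_add]
    ring
  have h2 : ∫⁻ p : ℝ × ℝ, G p = ∫⁻ p in polarCoord.source, G p := by
    rw [← setLIntegral_univ]
    exact (setLIntegral_congr polarCoord_source_ae_eq_univ).symm
  have himg : polarCoord.symm '' polarCoord.target = polarCoord.source := by
    rw [OpenPartialHomeomorph.symm_image_target_eq_source]
  have h3 : ∫⁻ p in polarCoord.source, G p
      = ∫⁻ p in polarCoord.target, ENNReal.ofReal |(B p).det| * G (polarCoord.symm p) := by
    rw [← himg]
    exact lintegral_image_eq_lintegral_abs_det_fderiv_mul volume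
      polarCoord.open_target.measurableSet
      (fun p _ => (hasFDerivAt_polarCoord_symm p).hasFDerivWithinAt)
      polarCoord.symm.injOn G
  have h4 : ∫⁻ p in polarCoord.target, ENNReal.ofReal |(B p).det| * G (polarCoord.symm p)
      = ∫⁻ p in polarCoord.target, ENNReal.ofReal p.1 * G (polarCoord.symm p) := by
    refine setLIntegral_congr_fun polarCoord.open_target.measurableSet
      (fun p hp => ?_)
    rw [B_det, abs_of_pos hp.1]
  have h5 : ∀ p : ℝ × ℝ, G (polarCoord.symm p) = g (Complex.polarCoord.symm p) := fun p => rfl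
  rw [h1, h2, h3, h4]
  simp only [h5]
  rfl

lemma stmt18_keyA (f : ℂ → ℝ≥0∞) (hf : Measurable f) :
    ∫⁻ θ in Ioo (-Real.pi) Real.pi, ∫⁻ t in Ioo (0:ℝ) 1,
        ENNReal.ofReal t * f ((t:ℂ) * Complex.exp ((θ:ℂ) * Complex.I))
      ≤ ∫⁻ z in {z : ℂ | ‖z‖ < 1}, f z := by
  have hU : IsOpen {z : ℂ | ‖z‖ < 1} := isOpen_lt continuous_norm continuous_const
  set G : ℂ → ℝ≥0∞ := ({z : ℂ | ‖z‖ < 1}).indicator f with hGdef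
  have hGm : Measurable G := hf.indicator hU.measurableSet
  have hsymm : ∀ p : ℝ × ℝ,
      Complex.polarCoord.symm p = (p.1 : ℂ) * Complex.exp ((p.2:ℂ) * Complex.I) := by
    intro p
    rw [Complex.polarCoord_symm_apply, Complex.exp_mul_I]
    simp [Complex.ofReal_cos, Complex.ofReal_sin]
  have hnorm : ∀ p : ℝ × ℝ, ‖Complex.polarCoord.symm p‖ = |p.1| := fun p => by
    rw [Complex.norm_polarCoord_symm]
  have hRHS : ∫⁻ z in {z : ℂ | ‖z‖ < 1}, f z = ∫⁻ z, G z := by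
    rw [hGdef, lintegral_indicator hU.measurableSet]
  have hmeas : Measurable fun p : ℝ × ℝ =>
      ENNReal.ofReal p.1 * f ((p.1 : ℂ) * Complex.exp ((p.2:ℂ) * Complex.I)) := by
    refine (ENNReal.measurable_ofReal.comp measurable_fst).mul (hf.comp ?_)
    exact (Complex.measurable_ofReal.comp measurable_fst).mul
      ((Complex.measurable_exp.comp ((Complex.measurable_ofReal.comp measurable_snd).mul
        measurable_const)))
  have hprod : ∫⁻ θ in Ioo (-Real.pi) Real.pi, ∫⁻ t in Ioo (0:ℝ) 1,
        ENNReal.ofReal t * f ((t:ℂ) * Complex.exp ((θ:ℂ) * Complex.I))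
      = ∫⁻ p in (Set.Ioo (0:ℝ) 1) ×ˢ Set.Ioo (-Real.pi) Real.pi,
          ENNReal.ofReal p.1 * f ((p.1 : ℂ) * Complex.exp ((p.2:ℂ) * Complex.I)) := by
    rw [Measure.volume_eq_prod, ← Measure.prod_restrict,
      MeasureTheory.lintegral_prod_symm _ hmeas.aemeasurable]
  rw [hprod, hRHS, ← stmt18_polar G hGm]
  have hsub : (Set.Ioo (0:ℝ) 1) ×ˢ Set.Ioo (-Real.pi) Real.pi
      ⊆ (Set.Ioi (0:ℝ)) ×ˢ Set.Ioo (-Real.pi) Real.pi :=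
    Set.prod_mono_left Set.Ioo_subset_Ioi_self
  refine le_trans (le_of_eq ?_) (lintegral_mono_set hsub)
  refine setLIntegral_congr_fun ((measurableSet_Ioo.prod measurableSet_Ioo))
    (fun p hp => ?_)
  have hmem : (p.1:ℂ) * Complex.exp ((p.2:ℂ) * Complex.I) ∈ {z : ℂ | ‖z‖ < 1} := by
    rw [Set.mem_setOf_eq, ← hsymm, hnorm, abs_of_pos hp.1.1]
    exact hp.1.2
  rw [hsymm, hGdef, Set.indicator_of_mem hmem]

lemma stmt18_unif (φ : ℕ → ℂ → ℂ)
    (hhol : ∀ n, DifferentiableOn ℂ (φ n) {z : ℂ | ‖z‖ < 1})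
    (hconv : TendstoLocallyUniformlyOn φ (fun _ => 0) atTop {z : ℂ | ‖z‖ < 1})
    {r : ℝ} (hr : r < 1) {ε : ℝ} (hε : 0 < ε) :
    ∃ N, ∀ n ≥ N, ∀ z : ℂ, ‖z‖ ≤ r → ‖deriv (φ n) z‖ ≤ ε := by
  have hU : IsOpen {z : ℂ | ‖z‖ < 1} := isOpen_lt continuous_norm continuous_const
  have hd := hconv.deriv (Eventually.of_forall hhol) hU
  have h0 : (deriv (fun _ : ℂ => (0:ℂ))) = fun _ => 0 := by
    funext z; simp
  rw [h0, tendstoLocallyUniformlyOn_iff_forall_isCompact hU] at hd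
  rcases lt_or_ge r 0 with hr0 | hr0
  · exact ⟨0, fun n _ z hz => absurd (norm_nonneg z) (not_le.mpr (lt_of_le_of_lt hz hr0))⟩
  have hK : Metric.closedBall (0:ℂ) r ⊆ {z : ℂ | ‖z‖ < 1} := by
    intro z hz
    rw [Metric.mem_closedBall, dist_zero_right] at hz
    exact lt_of_le_of_lt hz hr
  have hT := hd _ hK (isCompact_closedBall 0 r)
  rw [Metric.tendstoUniformlyOn_iff] at hT
  obtain ⟨N, hN⟩ := eventually_atTop.mp (hT ε hε)
  refine ⟨N, fun n hn z hz => ?_⟩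
  have := hN n hn z (by rw [Metric.mem_closedBall, dist_zero_right]; exact hz)
  rw [dist_zero_left] at this
  exact this.le

lemma stmt18_sq {f : ℕ → ℝ≥0∞} (h : Tendsto (fun k => f k ^ 2) atTop (nhds 0)) :
    Tendsto f atTop (nhds 0) := by
  rw [ENNReal.tendsto_nhds_zero] at h ⊢
  intro ε hε
  have hm : (0:ℝ≥0∞) < min ε 1 := lt_min hε zero_lt_one
  filter_upwards [h (min ε 1 ^ 2) (ENNReal.pow_pos hm 2)] with k hk
  by_contra hcon
  push_neg at hcon
  have hlt : min ε 1 < f k := lt_of_le_of_lt (min_le_left _ _) hcon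
  exact absurd hk (not_le.mpr (ENNReal.pow_lt_pow_left two_ne_zero hlt))

/-- Let `φ n : 𝔻 → ℂ` be holomorphic functions converging locally uniformly
on `𝔻` to the constant `0`, with uniformly bounded `L²`-derivatives. Then there exist a
strictly increasing sequence of indices `(n k)` and a full measure set `E ⊆ [0,2π]` such
that for every `θ ∈ E` the radial length `∫₀^1 |φ_{n k}'(t e^{iθ})| dt` converges to `0`. -/
theorem stmt18 (φ : ℕ → ℂ → ℂ)
    (hhol : ∀ n, DifferentiableOn ℂ (φ n) {z : ℂ | ‖z‖ < 1})
    (hconv : TendstoLocallyUniformlyOn φ (fun _ => 0) atTop {z : ℂ | ‖z‖ < 1})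
    (hbound : (⨆ n, ∫⁻ z in {z : ℂ | ‖z‖ < 1}, (‖deriv (φ n) z‖₊ : ℝ≥0∞) ^ 2) < ⊤) :
    ∃ nk : ℕ → ℕ, StrictMono nk ∧
      ∃ E ⊆ Set.Icc (0 : ℝ) (2 * Real.pi),
        volume (Set.Icc (0 : ℝ) (2 * Real.pi) \ E) = 0 ∧
        ∀ θ ∈ E, Tendsto (fun k => ∫⁻ t in Set.Ioo (0 : ℝ) 1,
            (‖deriv (φ (nk k)) ((t : ℂ) * Complex.exp ((θ : ℂ) * Complex.I))‖₊ : ℝ≥0∞))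
          atTop (nhds 0) := by
  classical
  set M : ℝ≥0∞ := ⨆ n, ∫⁻ z in {z : ℂ | ‖z‖ < 1}, (‖deriv (φ n) z‖₊ : ℝ≥0∞) ^ 2 with hMdef
  have hMlt : M < ⊤ := hbound
  have hMle : ∀ n, ∫⁻ z in {z : ℂ | ‖z‖ < 1}, (‖deriv (φ n) z‖₊ : ℝ≥0∞) ^ 2 ≤ M :=
    fun n => le_iSup (fun n => ∫⁻ z in {z : ℂ | ‖z‖ < 1}, (‖deriv (φ n) z‖₊ : ℝ≥0∞) ^ 2) n
  -- measurability of the polar integrand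
  have hptc : Continuous fun p : ℝ × ℝ => ((p.2 : ℂ) * Complex.exp ((p.1:ℂ) * Complex.I)) :=
    (Complex.continuous_ofReal.comp continuous_snd).mul
      (Complex.continuous_exp.comp ((Complex.continuous_ofReal.comp continuous_fst).mul
        continuous_const))
  have hDm : ∀ n, Measurable fun p : ℝ × ℝ =>
      (‖deriv (φ n) ((p.2:ℂ) * Complex.exp ((p.1:ℂ) * Complex.I))‖₊ : ℝ≥0∞) :=
    fun n => ((measurable_deriv (φ n)).comp hptc.measurable).enorm
  have hDm1 : ∀ (n : ℕ) (θ : ℝ), Measurable fun t : ℝ =>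
      (‖deriv (φ n) ((t:ℂ) * Complex.exp ((θ:ℂ) * Complex.I))‖₊ : ℝ≥0∞) := by
    intro n θ
    have hc : Continuous fun t : ℝ => ((t:ℂ) * Complex.exp ((θ:ℂ) * Complex.I)) :=
      Complex.continuous_ofReal.mul continuous_const
    exact ((measurable_deriv (φ n)).comp hc.measurable).enorm
  -- Step A
  have stepA : ∀ n, ∫⁻ θ in Set.Ioo (-Real.pi) Real.pi, ∫⁻ t in Set.Ioo (0:ℝ) 1,
      ENNReal.ofReal t * (‖deriv (φ n) ((t:ℂ) * Complex.exp ((θ:ℂ) * Complex.I))‖₊ : ℝ≥0∞) ^ 2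
      ≤ M := fun n =>
    le_trans (stmt18_keyA (fun z => (‖deriv (φ n) z‖₊ : ℝ≥0∞) ^ 2)
      ((measurable_deriv (φ n)).enorm.pow_const 2)) (hMle n)
  -- the radii
  set c : ℝ := (2 * M).toReal + 1 with hcdef
  have hc0 : (0:ℝ) < c := by
    rw [hcdef]; positivity
  set r : ℕ → ℝ := fun k => max (1/2) (1 - (1/2)^k / c) with hrdef
  have hr_half : ∀ k, (1/2:ℝ) ≤ r k := fun k => le_max_left _ _
  have hr_pos : ∀ k, 0 < r k := fun k => lt_of_lt_of_le (by norm_num) (hr_half k)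
  have hr_lt1 : ∀ k, r k < 1 := by
    intro k
    apply max_lt (by norm_num)
    have h1 : 0 < (1/2:ℝ)^k / c := by positivity
    linarith
  have hr_sub : ∀ k, 1 - r k ≤ (1/2)^k / c := fun k => by
    have := le_max_right (1/2:ℝ) (1 - (1/2)^k / c)
    have h2 : 1 - (1/2:ℝ)^k / c ≤ r k := le_max_right _ _
    linarith
  have h2M : (2:ℝ≥0∞) * M ≠ ⊤ := ENNReal.mul_ne_top (by norm_num) hMlt.ne
  have hcM : 2 * M ≤ ENNReal.ofReal c := by
    calc 2*M = ENNReal.ofReal ((2*M).toReal) := (ENNReal.ofReal_toReal h2M).symm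
    _ ≤ ENNReal.ofReal c := ENNReal.ofReal_le_ofReal (by rw [hcdef]; linarith)
  -- Step 2
  have step2 : ∀ n k, ∫⁻ θ in Set.Ioo (-Real.pi) Real.pi, ∫⁻ t in Set.Ioo (r k) 1,
      ((‖deriv (φ n) ((t:ℂ) * Complex.exp ((θ:ℂ) * Complex.I))‖₊ : ℝ≥0∞)) ^ 2
      ≤ 2 * M := by
    intro n k
    have hpt : ∀ θ : ℝ, ∫⁻ t in Set.Ioo (r k) 1,
        ((‖deriv (φ n) ((t:ℂ) * Complex.exp ((θ:ℂ) * Complex.I))‖₊ : ℝ≥0∞)) ^ 2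
        ≤ 2 * ∫⁻ t in Set.Ioo (0:ℝ) 1,
          ENNReal.ofReal t * (‖deriv (φ n) ((t:ℂ) * Complex.exp ((θ:ℂ) * Complex.I))‖₊ : ℝ≥0∞) ^ 2 := by
      intro θ
      have h1 : ∫⁻ t in Set.Ioo (r k) 1,
          ((‖deriv (φ n) ((t:ℂ) * Complex.exp ((θ:ℂ) * Complex.I))‖₊ : ℝ≥0∞)) ^ 2
          ≤ ∫⁻ t in Set.Ioo (r k) 1,
            2 * (ENNReal.ofReal t *
              (‖deriv (φ n) ((t:ℂ) * Complex.exp ((θ:ℂ) * Complex.I))‖₊ : ℝ≥0∞) ^ 2) := by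
        refine setLIntegral_mono' measurableSet_Ioo fun t ht => ?_
        have h12 : (1/2:ℝ) ≤ t := le_of_lt (lt_of_le_of_lt (hr_half k) ht.1)
        have ht2 : (1:ℝ≥0∞) ≤ 2 * ENNReal.ofReal t := by
          calc (1:ℝ≥0∞) = ENNReal.ofReal ((2:ℝ) * (1/2)) := by norm_num
          _ ≤ ENNReal.ofReal (2 * t) := ENNReal.ofReal_le_ofReal (by linarith)
          _ = ENNReal.ofReal 2 * ENNReal.ofReal t := ENNReal.ofReal_mul (by norm_num)
          _ = 2 * ENNReal.ofReal t := by norm_num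
        calc (‖deriv (φ n) ((t:ℂ) * Complex.exp ((θ:ℂ) * Complex.I))‖₊ : ℝ≥0∞) ^ 2
            = 1 * (‖deriv (φ n) ((t:ℂ) * Complex.exp ((θ:ℂ) * Complex.I))‖₊ : ℝ≥0∞) ^ 2 :=
          (one_mul _).symm
        _ ≤ (2 * ENNReal.ofReal t) *
            (‖deriv (φ n) ((t:ℂ) * Complex.exp ((θ:ℂ) * Complex.I))‖₊ : ℝ≥0∞) ^ 2 :=
          mul_le_mul_left ht2 _
        _ = 2 * (ENNReal.ofReal t *
            (‖deriv (φ n) ((t:ℂ) * Complex.exp ((θ:ℂ) * Complex.I))‖₊ : ℝ≥0∞) ^ 2) := by ring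
      refine h1.trans ?_
      rw [lintegral_const_mul' 2 _ (by norm_num)]
      exact mul_le_mul_right
        (lintegral_mono_set (Set.Ioo_subset_Ioo_left (le_of_lt (hr_pos k)))) 2
    calc ∫⁻ θ in Set.Ioo (-Real.pi) Real.pi, ∫⁻ t in Set.Ioo (r k) 1,
        ((‖deriv (φ n) ((t:ℂ) * Complex.exp ((θ:ℂ) * Complex.I))‖₊ : ℝ≥0∞)) ^ 2
        ≤ ∫⁻ θ in Set.Ioo (-Real.pi) Real.pi, 2 * ∫⁻ t in Set.Ioo (0:ℝ) 1,
          ENNReal.ofReal t * (‖deriv (φ n) ((t:ℂ) * Complex.exp ((θ:ℂ) * Complex.I))‖₊ : ℝ≥0∞) ^ 2 :=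
      lintegral_mono hpt
    _ = 2 * ∫⁻ θ in Set.Ioo (-Real.pi) Real.pi, ∫⁻ t in Set.Ioo (0:ℝ) 1,
          ENNReal.ofReal t * (‖deriv (φ n) ((t:ℂ) * Complex.exp ((θ:ℂ) * Complex.I))‖₊ : ℝ≥0∞) ^ 2 :=
      lintegral_const_mul' 2 _ (by norm_num)
    _ ≤ 2 * M := mul_le_mul_right (stepA n) 2
  -- Step 3 : Cauchy-Schwarz
  have step3 : ∀ (n k : ℕ) (θ : ℝ), (∫⁻ t in Set.Ioo (r k) 1,
        (‖deriv (φ n) ((t:ℂ) * Complex.exp ((θ:ℂ) * Complex.I))‖₊ : ℝ≥0∞)) ^ 2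
      ≤ ENNReal.ofReal (1 - r k) * ∫⁻ t in Set.Ioo (r k) 1,
        (‖deriv (φ n) ((t:ℂ) * Complex.exp ((θ:ℂ) * Complex.I))‖₊ : ℝ≥0∞) ^ 2 := by
    intro n k θ
    set μ := volume.restrict (Set.Ioo (r k) 1)
    set D : ℝ → ℝ≥0∞ :=
      fun t => (‖deriv (φ n) ((t:ℂ) * Complex.exp ((θ:ℂ) * Complex.I))‖₊ : ℝ≥0∞) with hDdef
    have hconj : Real.HolderConjugate 2 2 := Real.HolderConjugate.two_two
    have hCS := ENNReal.lintegral_mul_le_Lp_mul_Lq μ hconj (hDm1 n θ).aemeasurable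
      (aemeasurable_const (b := (1:ℝ≥0∞)))
    have hCS' : ∫⁻ t, D t ∂μ
        ≤ (∫⁻ t, D t ^ 2 ∂μ) ^ (1/2:ℝ) * (ENNReal.ofReal (1 - r k)) ^ (1/2:ℝ) := by
      have e2 : ∀ t : ℝ, D t ^ (2:ℝ) = D t ^ (2:ℕ) := fun t => by
        rw [show (2:ℝ) = ((2:ℕ):ℝ) by norm_num, ENNReal.rpow_natCast]
      have e3 : ∫⁻ _ : ℝ, (1:ℝ≥0∞) ^ (2:ℝ) ∂μ = ENNReal.ofReal (1 - r k) := by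
        simp [μ, Real.volume_Ioo]
      simp only [Pi.mul_apply, mul_one] at hCS
      calc ∫⁻ t, D t ∂μ
          ≤ (∫⁻ t, D t ^ (2:ℝ) ∂μ) ^ (1/2:ℝ) * (∫⁻ _ : ℝ, (1:ℝ≥0∞) ^ (2:ℝ) ∂μ) ^ (1/2:ℝ) := hCS
      _ = (∫⁻ t, D t ^ 2 ∂μ) ^ (1/2:ℝ) * (ENNReal.ofReal (1 - r k)) ^ (1/2:ℝ) := by
        simp_rw [e2, e3]
    have hsq : ∀ x : ℝ≥0∞, x ^ (1/2:ℝ) * x ^ (1/2:ℝ) = x := fun x => by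
      rw [← ENNReal.rpow_add_of_nonneg (x := x) (1/2) (1/2) (by norm_num) (by norm_num)]
      norm_num
    calc (∫⁻ t, D t ∂μ) ^ 2 = (∫⁻ t, D t ∂μ) * (∫⁻ t, D t ∂μ) := sq _
    _ ≤ ((∫⁻ t, D t ^ 2 ∂μ) ^ (1/2:ℝ) * (ENNReal.ofReal (1 - r k)) ^ (1/2:ℝ)) *
        ((∫⁻ t, D t ^ 2 ∂μ) ^ (1/2:ℝ) * (ENNReal.ofReal (1 - r k)) ^ (1/2:ℝ)) :=
      mul_le_mul' hCS' hCS'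
    _ = ((∫⁻ t, D t ^ 2 ∂μ) ^ (1/2:ℝ) * (∫⁻ t, D t ^ 2 ∂μ) ^ (1/2:ℝ)) *
        ((ENNReal.ofReal (1 - r k)) ^ (1/2:ℝ) * (ENNReal.ofReal (1 - r k)) ^ (1/2:ℝ)) := by ring
    _ = (∫⁻ t, D t ^ 2 ∂μ) * ENNReal.ofReal (1 - r k) := by rw [hsq, hsq]
    _ = ENNReal.ofReal (1 - r k) * ∫⁻ t, D t ^ 2 ∂μ := mul_comm _ _
  -- choose the indices
  have hNf : ∀ k : ℕ, ∃ N, ∀ n ≥ N, ∀ z : ℂ, ‖z‖ ≤ r k → ‖deriv (φ n) z‖ ≤ (1/2)^k :=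
    fun k => stmt18_unif φ hhol hconv (hr_lt1 k) (by positivity)
  choose Nf hNf using hNf
  set nk : ℕ → ℕ := fun k => Nat.rec (Nf 0) (fun k ih => max (Nf (k+1)) (ih + 1)) k with hnkdef
  have hnk_mono : StrictMono nk := strictMono_nat_of_lt_succ fun k =>
    lt_of_lt_of_le (Nat.lt_succ_self _) (le_max_right _ _)
  have hnk_ge : ∀ k, Nf k ≤ nk k := by
    intro k
    cases k with
    | zero => exact le_refl _
    | succ k => exact le_max_left _ _
  -- the outer integrals
  set O : ℕ → ℝ → ℝ≥0∞ := fun k θ => ∫⁻ t in Set.Ioo (r k) 1,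
    (‖deriv (φ (nk k)) ((t:ℂ) * Complex.exp ((θ:ℂ) * Complex.I))‖₊ : ℝ≥0∞) with hOdef
  have hOmeas : ∀ k, Measurable (O k) := fun k =>
    Measurable.lintegral_prod_right' (hDm (nk k))
  have hOint : ∀ k, ∫⁻ θ in Set.Ioo (-Real.pi) Real.pi, (O k θ) ^ 2
      ≤ ENNReal.ofReal ((1/2)^k) := by
    intro k
    calc ∫⁻ θ in Set.Ioo (-Real.pi) Real.pi, (O k θ) ^ 2
        ≤ ∫⁻ θ in Set.Ioo (-Real.pi) Real.pi, ENNReal.ofReal (1 - r k) *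
          ∫⁻ t in Set.Ioo (r k) 1,
            (‖deriv (φ (nk k)) ((t:ℂ) * Complex.exp ((θ:ℂ) * Complex.I))‖₊ : ℝ≥0∞) ^ 2 :=
      lintegral_mono fun θ => step3 (nk k) k θ
    _ = ENNReal.ofReal (1 - r k) * ∫⁻ θ in Set.Ioo (-Real.pi) Real.pi,
          ∫⁻ t in Set.Ioo (r k) 1,
            (‖deriv (φ (nk k)) ((t:ℂ) * Complex.exp ((θ:ℂ) * Complex.I))‖₊ : ℝ≥0∞) ^ 2 :=
      lintegral_const_mul' _ _ ENNReal.ofReal_ne_top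
    _ ≤ ENNReal.ofReal (1 - r k) * (2 * M) := mul_le_mul_right (step2 (nk k) k) _
    _ ≤ ENNReal.ofReal ((1/2)^k / c) * ENNReal.ofReal c :=
      mul_le_mul' (ENNReal.ofReal_le_ofReal (hr_sub k)) hcM
    _ = ENNReal.ofReal ((1/2)^k / c * c) := (ENNReal.ofReal_mul (by positivity)).symm
    _ = ENNReal.ofReal ((1/2)^k) := by rw [div_mul_cancel₀ _ (ne_of_gt hc0)]
  -- Borel-Cantelli
  have hsum : ∫⁻ θ in Set.Ioo (-Real.pi) Real.pi, ∑' k, (O k θ) ^ 2 ≠ ⊤ := by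
    rw [lintegral_tsum (fun k => ((hOmeas k).pow_const 2).aemeasurable)]
    have h1 : ∑' k, ∫⁻ θ in Set.Ioo (-Real.pi) Real.pi, (O k θ) ^ 2
        ≤ ∑' k : ℕ, ENNReal.ofReal ((1/2)^k) := ENNReal.tsum_le_tsum hOint
    have heq : ∀ k : ℕ, ENNReal.ofReal ((1/2:ℝ)^k) = (1/2 : ℝ≥0∞)^k := by
      intro k
      rw [ENNReal.ofReal_pow (by norm_num), one_div, ENNReal.ofReal_inv_of_pos two_pos,
        ENNReal.ofReal_ofNat]
      norm_num
    refine ne_of_lt (lt_of_le_of_lt h1 ?_)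
    rw [tsum_congr heq, ENNReal.tsum_geometric]
    exact ENNReal.inv_lt_top.mpr (by norm_num)
  have hae : ∀ᵐ θ ∂(volume.restrict (Set.Ioo (-Real.pi) Real.pi)),
      Tendsto (fun k => O k θ) atTop (nhds 0) := by
    filter_upwards [ae_lt_top (Measurable.ennreal_tsum fun k => (hOmeas k).pow_const 2) hsum]
      with θ hθ
    exact stmt18_sq (ENNReal.tendsto_atTop_zero_of_tsum_ne_top hθ.ne)
  -- the full radial integrals tend to zero a.e. on Ioo (-π) π
  have hP : ∀ᵐ (θ : ℝ) ∂(volume.restrict (Set.Ioo (-Real.pi) Real.pi)),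
      Tendsto (fun k => ∫⁻ t in Set.Ioo (0:ℝ) 1,
        (‖deriv (φ (nk k)) ((t:ℂ) * Complex.exp ((θ:ℂ) * Complex.I))‖₊ : ℝ≥0∞))
        atTop (nhds 0) := by
    filter_upwards [hae] with θ hθ
    have hsplit : ∀ k, ∫⁻ t in Set.Ioo (0:ℝ) 1,
        (‖deriv (φ (nk k)) ((t:ℂ) * Complex.exp ((θ:ℂ) * Complex.I))‖₊ : ℝ≥0∞)
        ≤ ENNReal.ofReal ((1/2)^k) + O k θ := by
      intro k
      have hunion : Set.Ioo (0:ℝ) 1 = Set.Ioo 0 (r k) ∪ Set.Ico (r k) 1 :=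
        (Set.Ioo_union_Ico_eq_Ioo (hr_pos k) (le_of_lt (hr_lt1 k))).symm
      rw [hunion]
      refine le_trans (lintegral_union_le _ _ _) (add_le_add ?_ ?_)
      · have hb : ∀ t ∈ Set.Ioo (0:ℝ) (r k),
            (‖deriv (φ (nk k)) ((t:ℂ) * Complex.exp ((θ:ℂ) * Complex.I))‖₊ : ℝ≥0∞)
            ≤ ENNReal.ofReal ((1/2)^k) := by
          intro t ht
          have hz : ‖(t:ℂ) * Complex.exp ((θ:ℂ) * Complex.I)‖ ≤ r k := by
            rw [norm_mul, Complex.norm_real, Real.norm_eq_abs,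
              Complex.norm_exp_ofReal_mul_I, mul_one, abs_of_pos ht.1]
            exact le_of_lt ht.2
          have hd := hNf k (nk k) (hnk_ge k) _ hz
          calc (‖deriv (φ (nk k)) ((t:ℂ) * Complex.exp ((θ:ℂ) * Complex.I))‖₊ : ℝ≥0∞)
              = ENNReal.ofReal ‖deriv (φ (nk k)) ((t:ℂ) * Complex.exp ((θ:ℂ) * Complex.I))‖ :=
            (ofReal_norm _).symm
          _ ≤ ENNReal.ofReal ((1/2)^k) := ENNReal.ofReal_le_ofReal hd
        calc ∫⁻ t in Set.Ioo (0:ℝ) (r k),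
            (‖deriv (φ (nk k)) ((t:ℂ) * Complex.exp ((θ:ℂ) * Complex.I))‖₊ : ℝ≥0∞)
            ≤ ∫⁻ _ in Set.Ioo (0:ℝ) (r k), ENNReal.ofReal ((1/2)^k) :=
          setLIntegral_mono' measurableSet_Ioo hb
        _ = ENNReal.ofReal ((1/2)^k) * volume (Set.Ioo (0:ℝ) (r k)) := setLIntegral_const _ _
        _ ≤ ENNReal.ofReal ((1/2)^k) * 1 := by
          refine mul_le_mul_right ?_ _
          rw [Real.volume_Ioo]
          exact ENNReal.ofReal_le_one.mpr (by linarith [hr_lt1 k])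
        _ = ENNReal.ofReal ((1/2)^k) := mul_one _
      · exact le_of_eq (setLIntegral_congr (Filter.EventuallyEq.symm Ioo_ae_eq_Ico))
    have h1 : Tendsto (fun k : ℕ => ENNReal.ofReal ((1/2:ℝ)^k)) atTop (nhds 0) := by
      have h2 := ENNReal.tendsto_ofReal
        (tendsto_pow_atTop_nhds_zero_of_lt_one (by norm_num : (0:ℝ) ≤ 1/2) (by norm_num))
      simpa using h2
    have hlim : Tendsto (fun k => ENNReal.ofReal ((1/2:ℝ)^k) + O k θ) atTop (nhds 0) := by
      simpa using h1.add hθ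
    exact tendsto_of_tendsto_of_tendsto_of_le_of_le tendsto_const_nhds hlim
      (fun k => zero_le) hsplit
  -- convert to a null set
  set S : Set ℝ := {θ : ℝ | ¬ Tendsto (fun k => ∫⁻ t in Set.Ioo (0:ℝ) 1,
    (‖deriv (φ (nk k)) ((t:ℂ) * Complex.exp ((θ:ℂ) * Complex.I))‖₊ : ℝ≥0∞))
    atTop (nhds 0)} with hSdef
  have hnull : volume (S ∩ Set.Ioo (-Real.pi) Real.pi) = 0 := by
    have h1 := hP
    rw [MeasureTheory.ae_iff] at h1
    rwa [Measure.restrict_apply' measurableSet_Ioo] at h1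
  -- periodicity
  have hper : ∀ θ : ℝ, (θ + -(2 * Real.pi)) ∈ S ↔ θ ∈ S := by
    intro θ
    have hexp : ((θ + -(2 * Real.pi) : ℝ) : ℂ) * Complex.I = (θ:ℂ) * Complex.I - 2 * Real.pi * Complex.I := by
      push_cast; ring
    have : ∀ t : ℝ, ((t:ℂ) * Complex.exp (((θ + -(2 * Real.pi) : ℝ):ℂ) * Complex.I))
        = (t:ℂ) * Complex.exp ((θ:ℂ) * Complex.I) := by
      intro t
      rw [hexp, Complex.exp_sub, Complex.exp_two_pi_mul_I, div_one]
    simp only [hSdef, Set.mem_setOf_eq, this]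
  -- conclusion
  refine ⟨nk, hnk_mono, Set.Icc 0 (2 * Real.pi) \ S, Set.diff_subset, ?_, ?_⟩
  · have hsub : Set.Icc (0:ℝ) (2 * Real.pi) \ (Set.Icc 0 (2 * Real.pi) \ S)
        ⊆ (S ∩ Set.Ioo (-Real.pi) Real.pi)
          ∪ ((fun θ : ℝ => θ + -(2 * Real.pi)) ⁻¹' (S ∩ Set.Ioo (-Real.pi) Real.pi))
          ∪ {Real.pi} := by
      rintro θ ⟨hθI, hθn⟩
      have hS : θ ∈ S := by
        by_contra hc
        exact hθn ⟨hθI, hc⟩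
      rcases lt_trichotomy θ Real.pi with h | h | h
      · exact Or.inl (Or.inl ⟨hS, lt_of_lt_of_le (neg_neg_of_pos Real.pi_pos) hθI.1, h⟩)
      · exact Or.inr h
      · refine Or.inl (Or.inr ⟨(hper θ).mpr hS, ?_, ?_⟩)
        · show (-Real.pi) < θ + -(2 * Real.pi)
          linarith
        · show θ + -(2 * Real.pi) < Real.pi
          linarith [hθI.2, Real.pi_pos]
    refine le_antisymm (le_trans (measure_mono hsub) ?_) zero_le
    refine le_trans (measure_union_le _ _) ?_
    rw [Real.volume_singleton, add_zero]
    refine le_trans (measure_union_le _ _) ?_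
    rw [hnull, measure_preimage_add_right, hnull, add_zero]
  · intro θ hθ
    have := hθ.2
    rw [hSdef, Set.mem_setOf_eq] at this
    exact not_not.mp this
end
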